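/- arXiv:1207.3026 — 5 statements merged into one kernel-verified Lean document; each statement's English description precedes it below -/
import Mathlib

section
/- (Theorem 3, L¹ lower bound) Let p ≥ 0 be an integer. There exist constants C₁ > 0 and C₁₂ > 0, depending only on p (independent of h, u and u^R), with the following property. Let a < b, N a positive integer, h = (b−a)/N, x_i = a + i h. Let u : [a,b] → ℝ be (p+1)-times continuously differentiable, and let u^R : (a,b) → ℝ coincide on each cell (x_i, x_{i+1}) with a polynomial of degree at most p. For 1 ≤ i ≤ N−1 and 0 ≤ k ≤ p set J^k_i = (d^k/dx^k)u^R(x_i⁺) − (d^k/dx^k)u^R(x_i⁻) and D^k_i = J^k_i / h^{p+1−k}. Then ∫_a^b |u − u^R| ≥ h^{p+1} [ C₁₂ Σ_{i=1}^{N−1} h · √(Q(D^0_i, …, D^p_i)) − C₁ ∫_a^b |u^{(p+1)}(x)| dx ]. -/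
open MeasureTheory Polynomial

/-- `fd p d ξ = (1/2) Σ_{k=0}^p (d_k/k!) ξ^k`. -/
noncomputable def fd (p : ℕ) (d : Fin (p+1) → ℝ) (ξ : ℝ) : ℝ :=
  (1/2) * ∑ k : Fin (p+1), d k / (Nat.factorial k) * ξ ^ (k : ℕ)

/-- The error functional whose infimum over polynomials of degree ≤ p defines `Qform`. -/
noncomputable def Qerr (p : ℕ) (d : Fin (p+1) → ℝ) (v : Polynomial ℝ) : ℝ :=
  (∫ ξ in (-(1:ℝ)/2)..0, (v.eval ξ + fd p d ξ)^2) +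
  (∫ ξ in (0:ℝ)..(1/2), (v.eval ξ - fd p d ξ)^2)

/-- `Q(d) = inf_{v ∈ P} Qerr p d v`. -/
noncomputable def Qform (p : ℕ) (d : Fin (p+1) → ℝ) : ℝ :=
  sInf {q : ℝ | ∃ v : Polynomial ℝ, v.natDegree ≤ p ∧ q = Qerr p d v}

/-- The scaled jump vector `(D⁰,…,Dᵖ)` at a node `xi`, where `ql`/`qr` are the
polynomial pieces to the left/right of `xi`:
`Dᵏ = ((d^k/dx^k) qr(xi) - (d^k/dx^k) ql(xi)) / h^{p+1-k}`. -/
noncomputable def Dvec (p : ℕ) (h xi : ℝ) (ql qr : Polynomial ℝ) : Fin (p+1) → ℝ :=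
  fun k => ((Polynomial.derivative^[(k:ℕ)] qr).eval xi -
            (Polynomial.derivative^[(k:ℕ)] ql).eval xi) / h^(p+1-(k:ℕ))


open Set

set_option maxHeartbeats 1600000

section AuxiliaryLemmas

noncomputable def Gf (p : ℕ) (s t : ℝ) (c : Fin (p+1) → ℝ) : ℝ :=
  ∫ ξ in s..t, |∑ k : Fin (p+1), c k * ξ^(k : ℕ)|

lemma contSum (p : ℕ) (c : Fin (p+1) → ℝ) :
    Continuous fun ξ : ℝ => ∑ k : Fin (p+1), c k * ξ^(k:ℕ) := by
  exact continuous_finset_sum _ fun k _ => (continuous_const.mul (continuous_pow _))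

lemma intG (p : ℕ) (s t : ℝ) (c : Fin (p+1) → ℝ) :
    IntervalIntegrable (fun ξ : ℝ => |∑ k : Fin (p+1), c k * ξ^(k:ℕ)|) volume s t :=
  ((contSum p c).abs).intervalIntegrable s t

lemma pointwiseG (p : ℕ) {s t : ℝ} (c : Fin (p+1) → ℝ) {ξ : ℝ} (hξ : ξ ∈ Set.Icc s t) :
    |∑ k : Fin (p+1), c k * ξ^(k:ℕ)| ≤ (p+1) * (1 + |s| + |t|)^p * ‖c‖ := by
  set R : ℝ := 1 + |s| + |t| with hR
  have hs0 : (0:ℝ) ≤ |s| := abs_nonneg s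
  have ht0 : (0:ℝ) ≤ |t| := abs_nonneg t
  have hR1 : (1:ℝ) ≤ R := by simp [hR]; linarith
  have hξabs : |ξ| ≤ R := by
    rcases hξ with ⟨h1, h2⟩
    have hs := neg_abs_le s; have ht := le_abs_self t
    rw [abs_le]; constructor <;> simp [hR] <;> linarith
  calc |∑ k : Fin (p+1), c k * ξ^(k:ℕ)|
      ≤ ∑ k : Fin (p+1), |c k * ξ^(k:ℕ)| := Finset.abs_sum_le_sum_abs _ _
    _ ≤ ∑ _k : Fin (p+1), R^p * ‖c‖ := by
        apply Finset.sum_le_sum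
        intro k _
        rw [abs_mul, abs_pow]
        have h1 : |c k| ≤ ‖c‖ := by
          simpa [Real.norm_eq_abs] using norm_le_pi_norm c k
        have h2 : |ξ|^(k:ℕ) ≤ R^p := by
          calc |ξ|^(k:ℕ) ≤ R^(k:ℕ) := pow_le_pow_left₀ (abs_nonneg ξ) hξabs _
            _ ≤ R^p := pow_le_pow_right₀ hR1 (Nat.lt_succ_iff.mp k.isLt)
        calc |c k| * |ξ|^(k:ℕ) ≤ ‖c‖ * R^p := by
              apply mul_le_mul h1 h2 (by positivity) (norm_nonneg c)
          _ = R^p * ‖c‖ := mul_comm _ _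
    _ = (p+1) * R^p * ‖c‖ := by
        rw [Finset.sum_const, Finset.card_univ, Fintype.card_fin, nsmul_eq_mul]
        push_cast; ring

lemma G_sub_le (p : ℕ) {s t : ℝ} (hst : s < t) (c c' : Fin (p+1) → ℝ) :
    Gf p s t c ≤ Gf p s t c' + (t - s) * ((p+1) * (1 + |s| + |t|)^p * ‖c - c'‖) := by
  have hsplit : ∀ ξ : ℝ, (∑ k : Fin (p+1), c k * ξ^(k:ℕ)) =
      (∑ k : Fin (p+1), c' k * ξ^(k:ℕ)) + ∑ k : Fin (p+1), (c - c') k * ξ^(k:ℕ) := by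
    intro ξ
    rw [← Finset.sum_add_distrib]
    apply Finset.sum_congr rfl
    intro k _
    simp [Pi.sub_apply]; ring
  have step1 : Gf p s t c ≤ Gf p s t c' + Gf p s t (c - c') := by
    rw [Gf, Gf, Gf, ← intervalIntegral.integral_add (intG p s t c') (intG p s t (c - c'))]
    apply intervalIntegral.integral_mono_on hst.le (intG p s t c)
      ((intG p s t c').add (intG p s t (c - c')))
    intro ξ _
    rw [hsplit ξ]
    exact abs_add_le _ _
  have step2 : Gf p s t (c - c') ≤ (t - s) * ((p+1) * (1 + |s| + |t|)^p * ‖c - c'‖) := by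
    have : Gf p s t (c - c') ≤ ∫ _ξ in s..t, ((p+1) * (1 + |s| + |t|)^p * ‖c - c'‖) := by
      apply intervalIntegral.integral_mono_on hst.le (intG p s t (c - c'))
        (intervalIntegrable_const)
      intro ξ hξ
      exact pointwiseG p (c - c') hξ
    rw [intervalIntegral.integral_const, smul_eq_mul] at this
    exact this
  linarith

lemma G_cont (p : ℕ) {s t : ℝ} (hst : s < t) : Continuous (Gf p s t) := by
  set L : ℝ := (t - s) * ((p+1) * (1 + |s| + |t|)^p) with hL
  have hL0 : 0 ≤ L := by
    have : (0:ℝ) ≤ (1 + |s| + |t|)^p := by positivity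
    have := abs_nonneg s; have := abs_nonneg t
    apply mul_nonneg (by linarith) (by positivity)
  apply LipschitzWith.continuous (K := Real.toNNReal L)
  apply LipschitzWith.of_dist_le_mul
  intro c c'
  rw [Real.dist_eq, dist_eq_norm, Real.coe_toNNReal _ hL0]
  rw [abs_sub_le_iff]
  have hassoc : L * ‖c - c'‖ = (t - s) * ((p+1) * (1 + |s| + |t|)^p * ‖c - c'‖) := by
    rw [hL]; ring
  constructor
  · have := G_sub_le p hst c c'; rw [hassoc]; linarith [this]
  · have h2 := G_sub_le p hst c' c
    have hn : ‖c' - c‖ = ‖c - c'‖ := norm_sub_rev _ _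
    rw [hn] at h2
    rw [hassoc]; linarith [h2]

lemma G_pos (p : ℕ) {s t : ℝ} (hst : s < t) (c : Fin (p+1) → ℝ) (hc : c ≠ 0) :
    0 < Gf p s t c := by
  have hnn : 0 ≤ Gf p s t c :=
    intervalIntegral.integral_nonneg hst.le (fun ξ _ => abs_nonneg _)
  rcases hnn.lt_or_eq with h | h
  · exact h
  exfalso
  -- build the polynomial
  set P : Polynomial ℝ := ∑ k : Fin (p+1), Polynomial.C (c k) * Polynomial.X^(k:ℕ) with hPdef
  have hPeval : ∀ ξ : ℝ, P.eval ξ = ∑ k : Fin (p+1), c k * ξ^(k:ℕ) := by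
    intro ξ; simp [hPdef, Polynomial.eval_finset_sum]
  have hcoeff : ∀ j : Fin (p+1), P.coeff (j:ℕ) = c j := by
    intro j
    rw [hPdef, Polynomial.finset_sum_coeff]
    rw [Finset.sum_eq_single j]
    · simp [Polynomial.coeff_C_mul, Polynomial.coeff_X_pow]
    · intro k _ hkj
      have hne : (j:ℕ) ≠ (k:ℕ) := fun hh => hkj (Fin.ext hh.symm)
      simp [Polynomial.coeff_C_mul, Polynomial.coeff_X_pow, hne]
    · intro hj; exact absurd (Finset.mem_univ j) hj
  have hP0 : P ≠ 0 := by
    intro hP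
    apply hc
    funext j
    have := hcoeff j
    rw [hP] at this
    simpa using this.symm
  -- roots are finite
  have hfin : {x : ℝ | P.IsRoot x}.Finite := Polynomial.finite_setOf_isRoot hP0
  -- from integral zero, ae root
  have hae := (intervalIntegral.integral_eq_zero_iff_of_nonneg_ae
      (f := fun ξ : ℝ => |∑ k : Fin (p+1), c k * ξ^(k:ℕ)|)
      (by filter_upwards with ξ using abs_nonneg _) (intG p s t c)).mp h.symm
  have hIoc : Set.Ioc t s = ∅ := Set.Ioc_eq_empty (not_lt.mpr hst.le)
  rw [hIoc, Set.union_empty] at hae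
  have hroot : ∀ᵐ ξ ∂(volume.restrict (Set.Ioc s t)), ξ ∈ {x : ℝ | P.IsRoot x} := by
    filter_upwards [hae] with ξ hξ
    have : (∑ k : Fin (p+1), c k * ξ^(k:ℕ)) = 0 := by
      have := hξ; simpa [abs_eq_zero] using this
    simp [Polynomial.IsRoot, hPeval ξ, this]
  have h1 : volume.restrict (Set.Ioc s t) {x : ℝ | P.IsRoot x}ᶜ = 0 := by
    have := MeasureTheory.ae_iff.mp hroot
    simpa [Set.compl_setOf] using this
  have h2 : volume.restrict (Set.Ioc s t) {x : ℝ | P.IsRoot x} = 0 := by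
    rw [MeasureTheory.Measure.restrict_apply' measurableSet_Ioc]
    exact le_antisymm (le_trans (measure_mono (Set.inter_subset_left))
      (le_of_eq (hfin.measure_zero volume))) zero_le
  have huniv : volume.restrict (Set.Ioc s t) Set.univ = 0 := by
    have hle := measure_union_le (μ := volume.restrict (Set.Ioc s t))
      {x : ℝ | P.IsRoot x} {x : ℝ | P.IsRoot x}ᶜ
    rw [Set.union_compl_self, h1, h2] at hle
    simpa using hle
  rw [MeasureTheory.Measure.restrict_apply_univ, Real.volume_Ioc] at huniv
  have : t - s ≤ 0 := by
    by_contra hcon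
    push_neg at hcon
    rw [ENNReal.ofReal_eq_zero] at huniv
    linarith
  linarith

lemma coeff_L1_bound (p : ℕ) (s t : ℝ) (hst : s < t) :
    ∃ C : ℝ, 0 < C ∧ ∀ c : Fin (p+1) → ℝ, ‖c‖ ≤ C * Gf p s t c := by
  have hcomp : IsCompact (Metric.sphere (0 : Fin (p+1) → ℝ) 1) := isCompact_sphere _ _
  have hne : (Metric.sphere (0 : Fin (p+1) → ℝ) 1).Nonempty :=
    NormedSpace.sphere_nonempty.mpr zero_le_one
  obtain ⟨c0, hc0S, hmin⟩ := hcomp.exists_isMinOn hne (G_cont p hst).continuousOn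
  have hc0norm : ‖c0‖ = 1 := by simpa using hc0S
  have hc0 : c0 ≠ 0 := by
    intro hh; rw [hh] at hc0norm; simp at hc0norm
  have hm : 0 < Gf p s t c0 := G_pos p hst c0 hc0
  refine ⟨(Gf p s t c0)⁻¹, inv_pos.mpr hm, ?_⟩
  intro c
  rcases eq_or_ne c 0 with rfl | hc
  · have : Gf p s t (0 : Fin (p+1) → ℝ) = 0 := by
      simp [Gf]
    rw [this]; simp
  · have hnc : 0 < ‖c‖ := norm_pos_iff.mpr hc
    have hS : ‖c‖⁻¹ • c ∈ Metric.sphere (0 : Fin (p+1) → ℝ) 1 := by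
      simp [norm_smul, abs_of_nonneg (inv_nonneg.mpr hnc.le), inv_mul_cancel₀ hnc.ne']
    have hmin' := hmin hS
    have hhom : Gf p s t (‖c‖⁻¹ • c) = ‖c‖⁻¹ * Gf p s t c := by
      rw [Gf, Gf, ← intervalIntegral.integral_const_mul]
      apply intervalIntegral.integral_congr
      intro ξ _
      dsimp only
      have : (∑ k : Fin (p+1), (‖c‖⁻¹ • c) k * ξ^(k:ℕ)) =
          ‖c‖⁻¹ * ∑ k : Fin (p+1), c k * ξ^(k:ℕ) := by
        rw [Finset.mul_sum]
        apply Finset.sum_congr rfl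
        intro k _; simp [Pi.smul_apply, smul_eq_mul]; ring
      rw [this, abs_mul, abs_of_nonneg (inv_nonneg.mpr hnc.le)]
    have hmin2 : Gf p s t c0 ≤ ‖c‖⁻¹ * Gf p s t c := by
      rw [← hhom]; exact hmin'
    have hkey : ‖c‖ * Gf p s t c0 ≤ Gf p s t c := by
      have := mul_le_mul_of_nonneg_left hmin2 hnc.le
      rw [← mul_assoc, mul_inv_cancel₀ hnc.ne', one_mul] at this
      linarith
    rw [inv_mul_eq_div, le_div_iff₀ hm]
    linarith [hkey]

lemma poly_sqL2_le_L1 (p : ℕ) (s t : ℝ) (hst : s < t) (hs1 : -1 ≤ s) (ht1 : t ≤ 1) (hlen : t - s ≤ 1) :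
    ∃ C : ℝ, 0 < C ∧ ∀ w : Polynomial ℝ, w.natDegree ≤ p →
      Real.sqrt (∫ ξ in s..t, (w.eval ξ)^2) ≤ C * ∫ ξ in s..t, |w.eval ξ| := by
  obtain ⟨C0, hC0, hC⟩ := coeff_L1_bound p s t hst
  refine ⟨(p+1) * C0, by positivity, ?_⟩
  intro w hw
  set c : Fin (p+1) → ℝ := fun k => w.coeff (k:ℕ) with hcdef
  have heval : ∀ ξ : ℝ, w.eval ξ = ∑ k : Fin (p+1), c k * ξ^(k:ℕ) := by
    intro ξ
    rw [Polynomial.eval_eq_sum_range' (Nat.lt_succ_of_le hw)]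
    rw [Finset.sum_range fun k => w.coeff k * ξ^k]
  have habs : ∀ ξ ∈ Set.Icc s t, |w.eval ξ| ≤ (p+1) * ‖c‖ := by
    intro ξ hξ
    have h1 := pointwiseG p c hξ
    rw [← heval] at h1
    have hR : (1 + |s| + |t|)^p ≥ 0 := by positivity
    -- we need a cruder bound: use |ξ| ≤ 1 directly
    have hξ1 : |ξ| ≤ 1 := by
      rcases hξ with ⟨ha, hb⟩; rw [abs_le]; constructor <;> linarith
    rw [heval ξ]
    calc |∑ k : Fin (p+1), c k * ξ^(k:ℕ)| ≤ ∑ k : Fin (p+1), |c k * ξ^(k:ℕ)| :=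
          Finset.abs_sum_le_sum_abs _ _
      _ ≤ ∑ _k : Fin (p+1), ‖c‖ := by
          apply Finset.sum_le_sum
          intro k _
          rw [abs_mul, abs_pow]
          have h1' : |c k| ≤ ‖c‖ := by
            simpa [Real.norm_eq_abs] using norm_le_pi_norm c k
          have h2 : |ξ|^(k:ℕ) ≤ 1 := pow_le_one₀ (abs_nonneg ξ) hξ1
          calc |c k| * |ξ|^(k:ℕ) ≤ ‖c‖ * 1 :=
                mul_le_mul h1' h2 (by positivity) (norm_nonneg c)
            _ = ‖c‖ := mul_one _
      _ = (p+1) * ‖c‖ := by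
          rw [Finset.sum_const, Finset.card_univ, Fintype.card_fin, nsmul_eq_mul]
          push_cast; ring
  have hsq : (∫ ξ in s..t, (w.eval ξ)^2) ≤ ((p+1) * ‖c‖)^2 := by
    have hmono : (∫ ξ in s..t, (w.eval ξ)^2) ≤ ∫ _ξ in s..t, ((p+1) * ‖c‖)^2 := by
      apply intervalIntegral.integral_mono_on hst.le
      · exact ((Polynomial.continuous w).pow 2).intervalIntegrable s t
      · exact intervalIntegrable_const
      · intro ξ hξ
        have := habs ξ hξ
        calc (w.eval ξ)^2 = |w.eval ξ|^2 := (sq_abs _).symm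
          _ ≤ ((p+1) * ‖c‖)^2 := by
              apply pow_le_pow_left₀ (abs_nonneg _) this
    rw [intervalIntegral.integral_const, smul_eq_mul] at hmono
    nlinarith [sq_nonneg ((p+1:ℝ) * ‖c‖)]
  have h1 : Real.sqrt (∫ ξ in s..t, (w.eval ξ)^2) ≤ (p+1) * ‖c‖ := by
    rw [show ((p:ℝ)+1) * ‖c‖ = Real.sqrt (((p+1) * ‖c‖)^2) by
      rw [Real.sqrt_sq (by positivity)]]
    exact Real.sqrt_le_sqrt hsq
  have h2 : ‖c‖ ≤ C0 * ∫ ξ in s..t, |w.eval ξ| := by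
    have := hC c
    rw [Gf] at this
    have heq : (∫ ξ in s..t, |∑ k : Fin (p+1), c k * ξ^(k:ℕ)|) = ∫ ξ in s..t, |w.eval ξ| := by
      apply intervalIntegral.integral_congr
      intro ξ _
      dsimp only
      rw [heval ξ]
    rw [heq] at this
    exact this
  calc Real.sqrt (∫ ξ in s..t, (w.eval ξ)^2) ≤ (p+1) * ‖c‖ := h1
    _ ≤ (p+1) * (C0 * ∫ ξ in s..t, |w.eval ξ|) := by
        apply mul_le_mul_of_nonneg_left h2 (by positivity)
    _ = (p+1) * C0 * ∫ ξ in s..t, |w.eval ξ| := by ring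
lemma hasse_eval (k : ℕ) (g : Polynomial ℝ) (x : ℝ) :
    (Polynomial.hasseDeriv k g).eval x = (Polynomial.derivative^[k] g).eval x / (Nat.factorial k) := by
  have h := congrFun (Polynomial.factorial_smul_hasseDeriv (R := ℝ) k) g
  simp only [LinearMap.smul_apply] at h
  rw [eq_div_iff (by positivity : ((Nat.factorial k : ℝ)) ≠ 0)]
  rw [← h, nsmul_eq_mul, Polynomial.eval_mul, Polynomial.eval_natCast]
  ring

lemma poly_eval_add (g : Polynomial ℝ) (n : ℕ) (hg : g.natDegree ≤ n) (x y : ℝ) :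
    g.eval (x + y) = ∑ k ∈ Finset.range (n+1),
      (Polynomial.derivative^[k] g).eval x / (Nat.factorial k) * y^k := by
  have h1 : g.eval (x + y) = (Polynomial.taylor x g).eval y := by
    rw [Polynomial.taylor_eval, add_comm]
  have hdeg : (Polynomial.taylor x g).natDegree < n + 1 := by
    rw [Polynomial.natDegree_taylor]; omega
  rw [h1, Polynomial.eval_eq_sum_range' hdeg]
  apply Finset.sum_congr rfl
  intro k _
  rw [Polynomial.taylor_coeff, hasse_eval]

lemma sqrt_add_le_sqrt_add_sqrt {a b : ℝ} (ha : 0 ≤ a) (hb : 0 ≤ b) :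
    Real.sqrt (a + b) ≤ Real.sqrt a + Real.sqrt b := by
  have h : a + b ≤ (Real.sqrt a + Real.sqrt b)^2 := by
    rw [add_sq, Real.sq_sqrt ha, Real.sq_sqrt hb]
    nlinarith [Real.sqrt_nonneg a, Real.sqrt_nonneg b]
  calc Real.sqrt (a+b) ≤ Real.sqrt ((Real.sqrt a + Real.sqrt b)^2) := Real.sqrt_le_sqrt h
    _ = Real.sqrt a + Real.sqrt b := Real.sqrt_sq (by positivity)

lemma Qerr_nonneg (p : ℕ) (d : Fin (p+1) → ℝ) (v : Polynomial ℝ) : 0 ≤ Qerr p d v := by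
  apply add_nonneg
  · exact intervalIntegral.integral_nonneg (by norm_num) (fun ξ _ => sq_nonneg _)
  · exact intervalIntegral.integral_nonneg (by norm_num) (fun ξ _ => sq_nonneg _)

lemma sqrtQform_le (p : ℕ) {h xi : ℝ} (hh : 0 < h) (ql qr Pq : Polynomial ℝ)
    (hql : ql.natDegree ≤ p) (hqr : qr.natDegree ≤ p) (hPq : Pq.natDegree ≤ p)
    {Cl Cr : ℝ}
    (HCl : ∀ w : Polynomial ℝ, w.natDegree ≤ p →
      Real.sqrt (∫ ξ in (-(1:ℝ)/2)..0, (w.eval ξ)^2) ≤ Cl * ∫ ξ in (-(1:ℝ)/2)..0, |w.eval ξ|)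
    (HCr : ∀ w : Polynomial ℝ, w.natDegree ≤ p →
      Real.sqrt (∫ ξ in (0:ℝ)..(1/2), (w.eval ξ)^2) ≤ Cr * ∫ ξ in (0:ℝ)..(1/2), |w.eval ξ|) :
    Real.sqrt (Qform p (Dvec p h xi ql qr)) ≤
      (h^(p+2))⁻¹ * (Cl * (∫ x in (xi - h/2)..xi, |ql.eval x - Pq.eval x|)
        + Cr * (∫ x in xi..(xi + h/2), |qr.eval x - Pq.eval x|)) := by
  have hne : h ≠ 0 := hh.ne'
  set A : Polynomial ℝ := Polynomial.C xi + Polynomial.C h * Polynomial.X with hAdef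
  have hA : ∀ ξ : ℝ, A.eval ξ = xi + h * ξ := by intro ξ; simp [hAdef]
  have hAdeg : A.natDegree ≤ 1 := by
    apply le_trans (Polynomial.natDegree_add_le _ _)
    simp only [Polynomial.natDegree_C, max_le_iff]
    constructor
    · omega
    · exact le_trans (Polynomial.natDegree_C_mul_le _ _) Polynomial.natDegree_X_le
  set wl : Polynomial ℝ := Polynomial.C ((h^(p+1))⁻¹) * ((ql - Pq).comp A) with hwldef
  set wr : Polynomial ℝ := Polynomial.C ((h^(p+1))⁻¹) * ((qr - Pq).comp A) with hwrdef
  have hwleval : ∀ ξ : ℝ, wl.eval ξ = (h^(p+1))⁻¹ * ((ql.eval (xi + h*ξ)) - Pq.eval (xi + h*ξ)) := by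
    intro ξ; simp [hwldef, Polynomial.eval_comp, hA ξ]
  have hwreval : ∀ ξ : ℝ, wr.eval ξ = (h^(p+1))⁻¹ * ((qr.eval (xi + h*ξ)) - Pq.eval (xi + h*ξ)) := by
    intro ξ; simp [hwrdef, Polynomial.eval_comp, hA ξ]
  have hdegcomp : ∀ f : Polynomial ℝ, f.natDegree ≤ p → (Polynomial.C ((h^(p+1))⁻¹) * (f.comp A)).natDegree ≤ p := by
    intro f hf
    apply le_trans (Polynomial.natDegree_C_mul_le _ _)
    apply le_trans (Polynomial.natDegree_comp_le)
    calc f.natDegree * A.natDegree ≤ p * 1 := Nat.mul_le_mul hf hAdeg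
      _ = p := by omega
  have hwldeg : wl.natDegree ≤ p :=
    hdegcomp _ (le_trans (Polynomial.natDegree_sub_le _ _) (max_le hql hPq))
  have hwrdeg : wr.natDegree ≤ p :=
    hdegcomp _ (le_trans (Polynomial.natDegree_sub_le _ _) (max_le hqr hPq))
  set v : Polynomial ℝ := Polynomial.C (-(1/2) : ℝ) * (wl + wr) with hvdef
  have hvdeg : v.natDegree ≤ p := by
    apply le_trans (Polynomial.natDegree_C_mul_le _ _)
    exact le_trans (Polynomial.natDegree_add_le _ _) (max_le hwldeg hwrdeg)
  set d : Fin (p+1) → ℝ := Dvec p h xi ql qr with hddef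
  have hfd : ∀ ξ : ℝ, fd p d ξ = (wr.eval ξ - wl.eval ξ) / 2 := by
    intro ξ
    have hdiff : wr.eval ξ - wl.eval ξ = (h^(p+1))⁻¹ * (qr - ql).eval (xi + h*ξ) := by
      rw [hwreval ξ, hwleval ξ, Polynomial.eval_sub]
      ring
    rw [hdiff, poly_eval_add (qr - ql) p
      (le_trans (Polynomial.natDegree_sub_le _ _) (max_le hqr hql)) xi (h*ξ)]
    rw [fd]
    simp only [hddef, Dvec]
    rw [Fin.sum_univ_eq_sum_range (fun k : ℕ =>
      (((Polynomial.derivative^[k] qr).eval xi - (Polynomial.derivative^[k] ql).eval xi)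
        / h^(p+1-k)) / (Nat.factorial k) * ξ^k) (p+1)]
    have hsums : (∑ k ∈ Finset.range (p+1),
        (((Polynomial.derivative^[k] qr).eval xi - (Polynomial.derivative^[k] ql).eval xi)
          / h^(p+1-k)) / (Nat.factorial k) * ξ^k) =
        (h^(p+1))⁻¹ * ∑ k ∈ Finset.range (p+1),
          (Polynomial.derivative^[k] (qr - ql)).eval xi / (Nat.factorial k) * (h*ξ)^k := by
      rw [Finset.mul_sum]
      apply Finset.sum_congr rfl
      intro k hk
      have hkp : k ≤ p := Nat.lt_succ_iff.mp (Finset.mem_range.mp hk)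
      rw [Polynomial.iterate_derivative_sub, Polynomial.eval_sub]
      have hpow : h^(p+1) = h^(p+1-k) * h^k := by
        rw [← pow_add]; congr 1; omega
      have hfk : ((Nat.factorial k : ℝ)) ≠ 0 := by positivity
      have h1 : h^(p+1-k) ≠ 0 := pow_ne_zero _ hne
      have h2 : h^k ≠ 0 := pow_ne_zero _ hne
      rw [mul_pow, hpow]
      field_simp
    rw [hsums]
    ring
  have hQle : Qform p d ≤ Qerr p d v := by
    apply csInf_le
    · refine ⟨0, fun q hq => ?_⟩
      obtain ⟨v', _, rfl⟩ := hq
      exact Qerr_nonneg p d v'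
    · exact ⟨v, hvdeg, rfl⟩
  have hveval : ∀ ξ : ℝ, v.eval ξ = -(1/2) * (wl.eval ξ + wr.eval ξ) := by
    intro ξ; simp [hvdef]
  have hQerr : Qerr p d v = (∫ ξ in (-(1:ℝ)/2)..0, (wl.eval ξ)^2)
      + (∫ ξ in (0:ℝ)..(1/2), (wr.eval ξ)^2) := by
    rw [Qerr]
    congr 1
    · apply intervalIntegral.integral_congr; intro ξ _; dsimp only
      rw [hveval ξ, hfd ξ]; ring
    · apply intervalIntegral.integral_congr; intro ξ _; dsimp only
      rw [hveval ξ, hfd ξ]; ring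
  have hIl : 0 ≤ ∫ ξ in (-(1:ℝ)/2)..0, (wl.eval ξ)^2 :=
    intervalIntegral.integral_nonneg (by norm_num) (fun _ _ => sq_nonneg _)
  have hIr : 0 ≤ ∫ ξ in (0:ℝ)..(1/2), (wr.eval ξ)^2 :=
    intervalIntegral.integral_nonneg (by norm_num) (fun _ _ => sq_nonneg _)
  have hs1 : Real.sqrt (Qform p d) ≤ Real.sqrt (Qerr p d v) := Real.sqrt_le_sqrt hQle
  rw [hQerr] at hs1
  have hs2 := le_trans hs1 (sqrt_add_le_sqrt_add_sqrt hIl hIr)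
  have hl := HCl wl hwldeg
  have hr := HCr wr hwrdeg
  have hp2 : (h^(p+2))⁻¹ = (h^(p+1))⁻¹ * h⁻¹ := by
    rw [pow_succ, mul_inv]
  have hcovl : (∫ ξ in (-(1:ℝ)/2)..0, |wl.eval ξ|) =
      (h^(p+1))⁻¹ * (h⁻¹ * ∫ x in (xi - h/2)..xi, |ql.eval x - Pq.eval x|) := by
    have h1 : (∫ ξ in (-(1:ℝ)/2)..0, |wl.eval ξ|) =
        ∫ ξ in (-(1:ℝ)/2)..0, (h^(p+1))⁻¹ * |ql.eval (h*ξ + xi) - Pq.eval (h*ξ + xi)| := by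
      apply intervalIntegral.integral_congr; intro ξ _; dsimp only
      rw [hwleval ξ, abs_mul, abs_of_nonneg (by positivity : (0:ℝ) ≤ (h^(p+1))⁻¹)]
      rw [show xi + h*ξ = h*ξ + xi by ring]
    rw [h1, intervalIntegral.integral_const_mul]
    congr 1
    have h2 := intervalIntegral.integral_comp_mul_add (a := (-(1:ℝ)/2)) (b := 0)
      (f := fun x => |ql.eval x - Pq.eval x|) (c := h) hne xi
    have e1 : h * (-(1:ℝ)/2) + xi = xi - h/2 := by ring
    have e2 : h * (0:ℝ) + xi = xi := by ring
    rw [e1, e2] at h2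
    rw [h2, smul_eq_mul]
  have hcovr : (∫ ξ in (0:ℝ)..(1/2), |wr.eval ξ|) =
      (h^(p+1))⁻¹ * (h⁻¹ * ∫ x in xi..(xi + h/2), |qr.eval x - Pq.eval x|) := by
    have h1 : (∫ ξ in (0:ℝ)..(1/2), |wr.eval ξ|) =
        ∫ ξ in (0:ℝ)..(1/2), (h^(p+1))⁻¹ * |qr.eval (h*ξ + xi) - Pq.eval (h*ξ + xi)| := by
      apply intervalIntegral.integral_congr; intro ξ _; dsimp only
      rw [hwreval ξ, abs_mul, abs_of_nonneg (by positivity : (0:ℝ) ≤ (h^(p+1))⁻¹)]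
      rw [show xi + h*ξ = h*ξ + xi by ring]
    rw [h1, intervalIntegral.integral_const_mul]
    congr 1
    have h2 := intervalIntegral.integral_comp_mul_add (a := (0:ℝ)) (b := (1:ℝ)/2)
      (f := fun x => |qr.eval x - Pq.eval x|) (c := h) hne xi
    have e1 : h * ((1:ℝ)/2) + xi = xi + h/2 := by ring
    have e2 : h * (0:ℝ) + xi = xi := by ring
    rw [e1, e2] at h2
    rw [h2, smul_eq_mul]
  calc Real.sqrt (Qform p d)
      ≤ Real.sqrt (∫ ξ in (-(1:ℝ)/2)..0, (wl.eval ξ)^2)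
        + Real.sqrt (∫ ξ in (0:ℝ)..(1/2), (wr.eval ξ)^2) := hs2
    _ ≤ Cl * (∫ ξ in (-(1:ℝ)/2)..0, |wl.eval ξ|)
        + Cr * (∫ ξ in (0:ℝ)..(1/2), |wr.eval ξ|) := add_le_add hl hr
    _ = (h^(p+2))⁻¹ * (Cl * (∫ x in (xi - h/2)..xi, |ql.eval x - Pq.eval x|)
        + Cr * (∫ x in xi..(xi + h/2), |qr.eval x - Pq.eval x|)) := by
        rw [hcovl, hcovr, hp2]; ring

lemma taylor_L1_bound (p : ℕ) {u : ℝ → ℝ} {a b : ℝ} (hab : a < b)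
    (hu : ContDiffOn ℝ (p+1) u (Set.Icc a b))
    {x0 x : ℝ} (hx0 : x0 ∈ Set.Ioo a b) (hx : x ∈ Set.Ioo a b) :
    |u x - taylorWithinEval u p (Set.Icc a b) x0 x| ≤
      (|x - x0|^p / (Nat.factorial p)) *
        ∫ s in (min x0 x)..(max x0 x), |iteratedDerivWithin (p+1) u (Set.Icc a b) s| := by
  set D : ℝ → ℝ := iteratedDerivWithin (p+1) u (Set.Icc a b) with hDdef
  set g : ℝ → ℝ := fun t => taylorWithinEval u p (Set.Icc a b) t x with hgdef
  set g' : ℝ → ℝ := fun t => ((p.factorial : ℝ)⁻¹ * (x - t)^p) * D t with hg'def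
  have hup : ContDiffOn ℝ p u (Set.Icc a b) := hu.of_le (by exact_mod_cast Nat.le_succ p)
  have hD : ContinuousOn D (Set.Icc a b) :=
    hu.continuousOn_iteratedDerivWithin le_rfl (uniqueDiffOn_Icc hab)
  have hdiffp : DifferentiableOn ℝ (iteratedDerivWithin p u (Set.Icc a b)) (Set.Ioo a b) :=
    (hu.differentiableOn_iteratedDerivWithin (by exact_mod_cast Nat.lt_succ_self p)
      (uniqueDiffOn_Icc hab)).mono Set.Ioo_subset_Icc_self
  have hg'cont : ContinuousOn g' (Set.Icc a b) := by
    apply ContinuousOn.mul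
    · exact (continuousOn_const.mul ((continuousOn_const.sub continuousOn_id).pow p))
    · exact hD
  have key : ∀ c d : ℝ, c ∈ Set.Ioo a b → d ∈ Set.Ioo a b → c ≤ d →
      (∫ t in c..d, g' t) = g d - g c := by
    intro c d hc hd hcd
    have hsub : Set.Icc c d ⊆ Set.Icc a b := Set.Icc_subset_Icc hc.1.le hd.2.le
    apply intervalIntegral.integral_eq_sub_of_hasDeriv_right_of_le hcd
    · exact (continuousOn_taylorWithinEval (uniqueDiffOn_Icc hab) hup).mono hsub
    · intro t ht
      have htab : t ∈ Set.Ioo a b := ⟨lt_of_lt_of_le hc.1 ht.1.le, lt_of_le_of_lt ht.2.le hd.2⟩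
      have := taylorWithinEval_hasDerivAt_Ioo x hab htab hup hdiffp
      exact (this.congr_deriv (by simp [hg'def, hDdef, smul_eq_mul])).hasDerivWithinAt
    · apply ContinuousOn.intervalIntegrable
      rw [Set.uIcc_of_le hcd]
      exact hg'cont.mono hsub
  have hptw : ∀ t ∈ Set.Icc (min x0 x) (max x0 x), |x - t| ≤ |x - x0| := by
    intro t ht
    rcases le_total x0 x with hc | hc
    · rw [min_eq_left hc, max_eq_right hc] at ht
      rw [abs_of_nonneg (by linarith [ht.2] : (0:ℝ) ≤ x - t),
        abs_of_nonneg (by linarith : (0:ℝ) ≤ x - x0)]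
      linarith [ht.1]
    · rw [min_eq_right hc, max_eq_left hc] at ht
      rw [abs_of_nonpos (by linarith [ht.1] : x - t ≤ 0),
        abs_of_nonpos (by linarith : x - x0 ≤ 0)]
      linarith [ht.2]
  have hminmem : min x0 x ∈ Set.Ioo a b := by
    rcases le_total x0 x with hc | hc
    · rwa [min_eq_left hc]
    · rwa [min_eq_right hc]
  have hmaxmem : max x0 x ∈ Set.Ioo a b := by
    rcases le_total x0 x with hc | hc
    · rwa [max_eq_right hc]
    · rwa [max_eq_left hc]
  have hminmax : min x0 x ≤ max x0 x := min_le_max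
  have hsub2 : Set.Icc (min x0 x) (max x0 x) ⊆ Set.Icc a b :=
    Set.Icc_subset_Icc hminmem.1.le hmaxmem.2.le
  have habs : |u x - taylorWithinEval u p (Set.Icc a b) x0 x|
      = |∫ t in (min x0 x)..(max x0 x), g' t| := by
    have hgx : g x = u x := taylorWithinEval_self u p (Set.Icc a b) x
    rcases le_total x0 x with hc | hc
    · rw [min_eq_left hc, max_eq_right hc, key x0 x hx0 hx hc, hgx]
    · rw [min_eq_right hc, max_eq_left hc, key x x0 hx hx0 hc, hgx]
      rw [show u x - g x0 = -(g x0 - u x) by ring, abs_neg]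
  rw [habs]
  have hstep1 : |∫ t in (min x0 x)..(max x0 x), g' t|
      ≤ ∫ t in (min x0 x)..(max x0 x), |g' t| :=
    intervalIntegral.abs_integral_le_integral_abs hminmax
  have hstep2 : (∫ t in (min x0 x)..(max x0 x), |g' t|)
      ≤ ∫ t in (min x0 x)..(max x0 x), (|x - x0|^p / (Nat.factorial p)) * |D t| := by
    apply intervalIntegral.integral_mono_on hminmax
    · apply ContinuousOn.intervalIntegrable
      rw [Set.uIcc_of_le hminmax]
      exact (hg'cont.mono hsub2).abs
    · apply ContinuousOn.intervalIntegrable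
      rw [Set.uIcc_of_le hminmax]
      exact continuousOn_const.mul (hD.mono hsub2).abs
    · intro t ht
      have h1 : |g' t| = (p.factorial : ℝ)⁻¹ * |x - t|^p * |D t| := by
        rw [hg'def]
        rw [abs_mul, abs_mul, abs_pow, abs_of_nonneg (by positivity : (0:ℝ) ≤ ((p.factorial : ℝ))⁻¹)]
      rw [h1]
      have h2 : |x - t|^p ≤ |x - x0|^p := pow_le_pow_left₀ (abs_nonneg _) (hptw t ht) p
      have h3 : (0:ℝ) ≤ |D t| := abs_nonneg _
      rw [div_eq_inv_mul]
      have := mul_le_mul_of_nonneg_right (mul_le_mul_of_nonneg_left h2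
        (by positivity : (0:ℝ) ≤ ((p.factorial : ℝ))⁻¹)) h3
      linarith [this]
  have hstep3 : (∫ t in (min x0 x)..(max x0 x), (|x - x0|^p / (Nat.factorial p)) * |D t|)
      = (|x - x0|^p / (Nat.factorial p)) * ∫ t in (min x0 x)..(max x0 x), |D t| :=
    intervalIntegral.integral_const_mul _ _
  rw [← hstep3]
  exact le_trans hstep1 hstep2

lemma sum_window_le (N : ℕ) {a b h : ℝ} (hh : 0 < h) (hb : b = a + N * h) {f : ℝ → ℝ}
    (hf : IntegrableOn f (Set.Ioc a b)) (hf0 : ∀ x, 0 ≤ f x) :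
    (∑ i ∈ Finset.Ico 1 N, ∫ x in (a + i*h - h/2)..(a + i*h + h/2), f x) ≤ ∫ x in a..b, f x := by
  have hab : a ≤ b := by
    rw [hb]
    have : (0:ℝ) ≤ N * h := by positivity
    linarith
  set W : ℕ → Set ℝ := fun i => Set.Ioc (a + i*h - h/2) (a + i*h + h/2) with hWdef
  have hWsub : ∀ i ∈ Finset.Ico 1 N, W i ⊆ Set.Ioc a b := by
    intro i hi
    rw [Finset.mem_Ico] at hi
    have h1 : (1:ℝ) ≤ i := by exact_mod_cast hi.1
    have h2 : (i:ℝ) + 1 ≤ N := by exact_mod_cast hi.2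
    intro x hx
    rcases hx with ⟨hx1, hx2⟩
    constructor
    · nlinarith
    · rw [hb]; nlinarith
  have hterm : ∀ i ∈ Finset.Ico 1 N,
      (∫ x in (a + i*h - h/2)..(a + i*h + h/2), f x) = ∫ x in W i, f x := by
    intro i _
    rw [intervalIntegral.integral_of_le (by linarith)]
  rw [Finset.sum_congr rfl hterm]
  have hdisj : Set.Pairwise ↑(Finset.Ico 1 N) (Function.onFun Disjoint W) := by
    intro i _ j _ hij
    have : ∀ i' j' : ℕ, i' < j' → Disjoint (W i') (W j') := by
      intro i' j' hij'
      rw [hWdef]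
      rw [Set.Ioc_disjoint_Ioc]
      have : (i':ℝ) + 1 ≤ j' := by exact_mod_cast hij'
      apply le_trans (min_le_left _ _)
      apply le_trans _ (le_max_right _ _)
      nlinarith
    rcases Nat.lt_or_ge i j with hlt | hge
    · exact this i j hlt
    · exact (this j i (by omega)).symm
  have hunion := MeasureTheory.integral_biUnion_finset (Finset.Ico 1 N) (s := W)
    (fun i _ => measurableSet_Ioc) hdisj
    (fun i hi => hf.mono_set (hWsub i hi))
  rw [← hunion]
  rw [intervalIntegral.integral_of_le hab]
  apply MeasureTheory.setIntegral_mono_set hf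
    (Filter.Eventually.of_forall (fun x => hf0 x))
  apply HasSubset.Subset.eventuallyLE
  exact Set.iUnion₂_subset hWsub

lemma gfun_cell {N : ℕ} {a h : ℝ} (hh : 0 < h) (q : ℕ → Polynomial ℝ)
    (j : ℕ) (hj : j < N) {x : ℝ} (hx : x ∈ Set.Ioo (a + j*h) (a + (j+1)*h)) :
    (∑ i ∈ Finset.range N, Set.indicator (Set.Ioo (a + i*h) (a + (i+1)*h))
        (fun y => (q i).eval y) x) = (q j).eval x := by
  rw [Finset.sum_eq_single_of_mem j (Finset.mem_range.mpr hj)]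
  · rw [Set.indicator_of_mem hx]
  · intro i _ hij
    apply Set.indicator_of_notMem
    intro hxi
    apply hij
    rcases hx with ⟨hx1, hx2⟩
    rcases hxi with ⟨hy1, hy2⟩
    have h1 : (i:ℝ) < (j:ℝ) + 1 := by
      have : a + i*h < a + ((j:ℝ)+1)*h := lt_trans hy1 hx2
      have := (mul_lt_mul_iff_left₀ hh).mp (by linarith : (i:ℝ)*h < ((j:ℝ)+1)*h)
      linarith
    have h2 : (j:ℝ) < (i:ℝ) + 1 := by
      have : a + j*h < a + ((i:ℝ)+1)*h := lt_trans hx1 hy2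
      have := (mul_lt_mul_iff_left₀ hh).mp (by linarith : (j:ℝ)*h < ((i:ℝ)+1)*h)
      linarith
    have h1' : i < j + 1 := by exact_mod_cast h1
    have h2' : j < i + 1 := by exact_mod_cast h2
    omega

lemma intervalIntegral_congr_Ioo {f g : ℝ → ℝ} {l r : ℝ} (hlr : l ≤ r)
    (hfg : ∀ x ∈ Set.Ioo l r, f x = g x) :
    ∫ x in l..r, f x = ∫ x in l..r, g x := by
  apply intervalIntegral.integral_congr_ae
  have h0 : ∀ᵐ x : ℝ, x ≠ r := by
    rw [ae_iff]
    have : {x : ℝ | ¬ x ≠ r} = {r} := by ext y; simp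
    rw [this]
    exact Real.volume_singleton
  filter_upwards [h0] with x hx hmem
  rw [Set.uIoc_of_le hlr] at hmem
  exact hfg x ⟨hmem.1, lt_of_le_of_ne hmem.2 hx⟩

end AuxiliaryLemmas

/-- Theorem 3 of the paper, L¹ lower bound:
`‖u - u^R‖_{L¹} ≥ h^{p+1} [ C₁₂ Σᵢ h √(Q(Dᵢ)) - C₁ |u|_{W^{p+1}_1} ]`. -/
theorem L1_lower_bound (p : ℕ) :
    ∃ C₁ C₁₂ : ℝ, 0 < C₁ ∧ 0 < C₁₂ ∧
      ∀ (a b : ℝ), a < b → ∀ N : ℕ, 0 < N → ∀ h : ℝ, h = (b - a) / N →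
      ∀ u : ℝ → ℝ, ContDiffOn ℝ (p+1) u (Set.Icc a b) →
      ∀ (uR : ℝ → ℝ) (q : ℕ → Polynomial ℝ),
        (∀ i < N, (q i).natDegree ≤ p) →
        (∀ i < N, ∀ x ∈ Set.Ioo (a + i*h) (a + (i+1)*h), uR x = (q i).eval x) →
        (∫ x in a..b, |u x - uR x|) ≥
          h^(p+1) *
            (C₁₂ * ∑ i ∈ Finset.Ico 1 N,
                h * Real.sqrt (Qform p (Dvec p h (a + i*h) (q (i-1)) (q i)))
              - C₁ * ∫ x in a..b, |iteratedDerivWithin (p+1) u (Set.Icc a b) x|) := by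
  obtain ⟨Cl, hCl0, HCl⟩ := poly_sqL2_le_L1 p (-(1:ℝ)/2) 0
    (by norm_num) (by norm_num) (by norm_num) (by norm_num)
  obtain ⟨Cr, hCr0, HCr⟩ := poly_sqL2_le_L1 p 0 (1/2)
    (by norm_num) (by norm_num) (by norm_num) (by norm_num)
  refine ⟨(p.factorial : ℝ)⁻¹, (Cl + Cr)⁻¹, by positivity, by positivity, ?_⟩
  intro a b hab N hN h hhdef u hu uR q hqdeg huR
  set CC : ℝ := Cl + Cr with hCCdef
  have hCC0 : 0 < CC := by positivity
  have hNR : (0:ℝ) < N := by exact_mod_cast hN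
  have hh : 0 < h := by rw [hhdef]; exact div_pos (by linarith) hNR
  have hne : h ≠ 0 := hh.ne'
  have hb : b = a + N * h := by rw [hhdef]; field_simp; ring
  set D : ℝ → ℝ := iteratedDerivWithin (p+1) u (Set.Icc a b) with hDdef
  set gfun : ℝ → ℝ := fun x => ∑ i ∈ Finset.range N,
      Set.indicator (Set.Ioo (a + i*h) (a + (i+1)*h)) (fun y => (q i).eval y) x with hgdef
  set gabs : ℝ → ℝ := fun x => |u x - gfun x| with hgabsdef
  have hucont : ContinuousOn u (Set.Icc a b) := hu.continuousOn
  have hDcont : ContinuousOn D (Set.Icc a b) :=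
    hu.continuousOn_iteratedDerivWithin le_rfl (uniqueDiffOn_Icc hab)
  have hgint : IntegrableOn gabs (Set.Ioc a b) := by
    apply Integrable.abs
    apply Integrable.sub
    · exact (hucont.integrableOn_Icc).mono_set Set.Ioc_subset_Icc_self
    · apply integrable_finset_sum
      intro i _
      have h1 : IntegrableOn (fun y => (q i).eval y) (Set.Ioo (a + i*h) (a + (i+1)*h)) volume :=
        ((Polynomial.continuous (q i)).continuousOn.integrableOn_Icc).mono_set
          Set.Ioo_subset_Icc_self
      exact (h1.integrable_indicator measurableSet_Ioo).integrableOn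
  have hDint : IntegrableOn (fun x => |D x|) (Set.Ioc a b) :=
    ((hDcont.integrableOn_Icc).mono_set Set.Ioc_subset_Icc_self).abs
  have hgabs0 : ∀ x, 0 ≤ gabs x := fun x => abs_nonneg _
  -- rewrite LHS
  have hLHS : (∫ x in a..b, |u x - uR x|) = ∫ x in a..b, gabs x := by
    rw [intervalIntegral.integral_of_le hab.le, intervalIntegral.integral_of_le hab.le]
    apply MeasureTheory.integral_congr_ae
    have hnodes : ∀ᵐ x : ℝ, x ∉ (⋃ i ∈ Finset.range (N+1), ({a + (i:ℝ)*h} : Set ℝ)) := by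
      rw [ae_iff]
      have hSfin : (⋃ i ∈ Finset.range (N+1), ({a + (i:ℝ)*h} : Set ℝ)).Finite :=
        Set.Finite.biUnion (Finset.range (N+1)).finite_toSet (fun i _ => Set.finite_singleton _)
      have heq : {x : ℝ | ¬ x ∉ ⋃ i ∈ Finset.range (N+1), ({a + (i:ℝ)*h} : Set ℝ)}
          = ⋃ i ∈ Finset.range (N+1), ({a + (i:ℝ)*h} : Set ℝ) := by
        ext y; simp
      rw [heq]
      exact hSfin.measure_zero _
    show ∀ᵐ x ∂(volume.restrict (Set.Ioc a b)), |u x - uR x| = gabs x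
    rw [MeasureTheory.ae_restrict_iff' measurableSet_Ioc]
    filter_upwards [hnodes] with x hxS hxIoc
    obtain ⟨j, hjN, hcell⟩ : ∃ j, j < N ∧ x ∈ Set.Ioo (a + j*h) (a + (j+1)*h) := by
      set r : ℝ := (x - a)/h with hrdef
      have hr0 : 0 < r := div_pos (by linarith [hxIoc.1]) hh
      have hrh : r * h = x - a := div_mul_cancel₀ _ hne
      have hrN : r ≤ N := by
        rw [hrdef, div_le_iff₀ hh]
        have := hxIoc.2
        rw [hb] at this
        linarith
      have hjle : (⌊r⌋₊ : ℝ) ≤ r := Nat.floor_le hr0.le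
      have hjlt : r < ⌊r⌋₊ + 1 := Nat.lt_floor_add_one r
      have hner : (⌊r⌋₊ : ℝ) ≠ r := by
        intro heq
        apply hxS
        have hfl : ⌊r⌋₊ ≤ N := by
          have : (⌊r⌋₊:ℝ) ≤ (N:ℝ) := by rw [heq]; exact hrN
          exact_mod_cast this
        have hxeq : x = a + (⌊r⌋₊:ℝ)*h := by
          rw [heq]; linarith [hrh]
        rw [Set.mem_iUnion₂]
        exact ⟨⌊r⌋₊, Finset.mem_range.mpr (by omega), by simp [hxeq]⟩
      have hjr : (⌊r⌋₊:ℝ) < r := lt_of_le_of_ne hjle hner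
      refine ⟨⌊r⌋₊, ?_, ?_, ?_⟩
      · have : (⌊r⌋₊:ℝ) < (N:ℝ) := lt_of_lt_of_le hjr hrN
        exact_mod_cast this
      · have := mul_lt_mul_of_pos_right hjr hh
        rw [hrh] at this
        linarith
      · have := mul_lt_mul_of_pos_right hjlt hh
        rw [hrh] at this
        push_cast
        linarith
    show |u x - uR x| = gabs x
    rw [hgabsdef]
    dsimp only
    rw [huR j hjN x hcell, hgdef]
    dsimp only
    rw [gfun_cell hh q j hjN hcell]
  rw [hLHS, ge_iff_le]
  set L : ℝ := ∫ x in a..b, gabs x with hLdef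
  set K : ℝ := ∫ x in a..b, |D x| with hKdef
  have hfp : ((p.factorial:ℝ)) ≠ 0 := by positivity
  have hnode : ∀ i ∈ Finset.Ico 1 N,
      h * Real.sqrt (Qform p (Dvec p h (a + i*h) (q (i-1)) (q i)))
      ≤ (CC * (h^(p+1))⁻¹) * (∫ x in (a + i*h - h/2)..(a + i*h + h/2), gabs x)
        + (CC * (p.factorial:ℝ)⁻¹) * (∫ x in (a + i*h - h/2)..(a + i*h + h/2), |D x|) := by
    intro i hi
    rw [Finset.mem_Ico] at hi
    have hi1R : (1:ℝ) ≤ i := by exact_mod_cast hi.1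
    have hiNR : (i:ℝ) + 1 ≤ N := by exact_mod_cast hi.2
    set xi : ℝ := a + i*h with hxidef
    have hwl : a < xi - h/2 := by rw [hxidef]; nlinarith
    have hwr : xi + h/2 < b := by rw [hxidef, hb]; nlinarith
    have hwinIoo : Set.Icc (xi - h/2) (xi + h/2) ⊆ Set.Ioo a b := fun x hx =>
      ⟨lt_of_lt_of_le hwl hx.1, lt_of_le_of_lt hx.2 hwr⟩
    have hwinIcc : Set.Icc (xi - h/2) (xi + h/2) ⊆ Set.Icc a b :=
      fun x hx => Set.Ioo_subset_Icc_self (hwinIoo hx)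
    have hxiIoo : xi ∈ Set.Ioo a b := hwinIoo ⟨by linarith, by linarith⟩
    set Pq : Polynomial ℝ := ∑ k ∈ Finset.range (p+1),
      Polynomial.C ((k.factorial:ℝ)⁻¹ * iteratedDerivWithin k u (Set.Icc a b) xi)
        * (Polynomial.X - Polynomial.C xi)^k with hPqdef
    have hPqdeg : Pq.natDegree ≤ p := by
      apply Polynomial.natDegree_sum_le_of_forall_le
      intro k hk
      apply le_trans (Polynomial.natDegree_C_mul_le _ _)
      rw [Polynomial.natDegree_pow, Polynomial.natDegree_X_sub_C, mul_one]
      exact Nat.lt_succ_iff.mp (Finset.mem_range.mp hk)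
    have hPqeval : ∀ x : ℝ, Pq.eval x = taylorWithinEval u p (Set.Icc a b) xi x := by
      intro x
      rw [taylor_within_apply, hPqdef, Polynomial.eval_finset_sum]
      apply Finset.sum_congr rfl
      intro k _
      simp only [Polynomial.eval_mul, Polynomial.eval_C, Polynomial.eval_pow,
        Polynomial.eval_sub, Polynomial.eval_X, smul_eq_mul]
      ring
    have hqldeg : (q (i-1)).natDegree ≤ p := hqdeg (i-1) (by omega)
    have hqrdeg : (q i).natDegree ≤ p := hqdeg i hi.2
    have hQi := sqrtQform_le p (xi := xi) hh (q (i-1)) (q i) Pq hqldeg hqrdeg hPqdeg HCl HCr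
    set Ki : ℝ := ∫ x in (xi - h/2)..(xi + h/2), |D x| with hKidef
    have hDii : IntervalIntegrable (fun x => |D x|) volume (xi - h/2) (xi + h/2) := by
      apply ContinuousOn.intervalIntegrable
      rw [Set.uIcc_of_le (by linarith)]
      exact (hDcont.mono hwinIcc).abs
    have hKi0 : 0 ≤ Ki :=
      intervalIntegral.integral_nonneg (by linarith) (fun _ _ => abs_nonneg _)
    have htay : ∀ x ∈ Set.Icc (xi - h/2) (xi + h/2),
        |u x - Pq.eval x| ≤ (h^p/(p.factorial:ℝ)) * Ki := by
      intro x hx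
      have hxIoo : x ∈ Set.Ioo a b := hwinIoo hx
      have hT := taylor_L1_bound p hab hu hxiIoo hxIoo
      rw [← hPqeval x] at hT
      refine le_trans hT ?_
      have h1 : |x - xi| ≤ h := by
        rw [abs_le]
        constructor
        · linarith [hx.1]
        · linarith [hx.2]
      have h1p : |x - xi|^p ≤ h^p := pow_le_pow_left₀ (abs_nonneg _) h1 p
      have h2 : (∫ s in (min xi x)..(max xi x), |D s|) ≤ Ki := by
        apply intervalIntegral.integral_mono_interval (c := xi - h/2) (d := xi + h/2)
        · rcases le_total xi x with hc | hc
          · rw [min_eq_left hc]; linarith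
          · rw [min_eq_right hc]; exact hx.1
        · exact min_le_max
        · rcases le_total xi x with hc | hc
          · rw [max_eq_right hc]; exact hx.2
          · rw [max_eq_left hc]; linarith
        · exact Filter.Eventually.of_forall (fun y => abs_nonneg _)
        · exact hDii
      have h3 : 0 ≤ ∫ s in (min xi x)..(max xi x), |D s| :=
        intervalIntegral.integral_nonneg min_le_max (fun _ _ => abs_nonneg _)
      calc (|x - xi|^p/(p.factorial:ℝ)) * (∫ s in (min xi x)..(max xi x), |D s|)
          ≤ (h^p/(p.factorial:ℝ)) * (∫ s in (min xi x)..(max xi x), |D s|) := by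
            apply mul_le_mul_of_nonneg_right _ h3
            apply (div_le_div_iff_of_pos_right (by positivity)).mpr h1p
        _ ≤ (h^p/(p.factorial:ℝ)) * Ki := mul_le_mul_of_nonneg_left h2 (by positivity)
    set El : ℝ := ∫ x in (xi - h/2)..xi, gabs x with hEldef
    set Er : ℝ := ∫ x in xi..(xi + h/2), gabs x with hErdef
    have hcellL : ∀ x ∈ Set.Ioo (xi - h/2) xi, gabs x = |u x - (q (i-1)).eval x| := by
      intro x hx
      have hc1 : ((i-1 : ℕ):ℝ) = (i:ℝ) - 1 := by
        have h1 : (1:ℕ) ≤ i := hi.1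
        push_cast [Nat.cast_sub h1]
        ring
      have hcell : x ∈ Set.Ioo (a + ((i-1:ℕ):ℝ)*h) (a + (((i-1:ℕ):ℝ)+1)*h) := by
        rw [hc1]
        constructor
        · have := hx.1; rw [hxidef] at this; nlinarith
        · have := hx.2; rw [hxidef] at this; nlinarith
      rw [hgabsdef]
      dsimp only
      rw [hgdef]
      dsimp only
      rw [gfun_cell hh q (i-1) (by omega) hcell]
    have hcellR : ∀ x ∈ Set.Ioo xi (xi + h/2), gabs x = |u x - (q i).eval x| := by
      intro x hx
      have hcell : x ∈ Set.Ioo (a + (i:ℝ)*h) (a + ((i:ℝ)+1)*h) := by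
        constructor
        · have := hx.1; rw [hxidef] at this; linarith
        · have := hx.2; rw [hxidef] at this; nlinarith
      rw [hgabsdef]
      dsimp only
      rw [hgdef]
      dsimp only
      rw [gfun_cell hh q i hi.2 hcell]
    have hsubL : Set.Icc (xi - h/2) xi ⊆ Set.Icc a b := fun x hx =>
      hwinIcc ⟨hx.1, by linarith [hx.2]⟩
    have hsubR : Set.Icc xi (xi + h/2) ⊆ Set.Icc a b := fun x hx =>
      hwinIcc ⟨by linarith [hx.1], hx.2⟩
    have hJl : (∫ x in (xi - h/2)..xi, |(q (i-1)).eval x - Pq.eval x|)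
        ≤ El + (h/2) * ((h^p/(p.factorial:ℝ)) * Ki) := by
      have hint1 : IntervalIntegrable (fun x => |u x - (q (i-1)).eval x|) volume (xi - h/2) xi := by
        apply ContinuousOn.intervalIntegrable
        rw [Set.uIcc_of_le (by linarith)]
        exact ((hucont.mono hsubL).sub (Polynomial.continuous _).continuousOn).abs
      have hint2 : IntervalIntegrable (fun x => |u x - Pq.eval x|) volume (xi - h/2) xi := by
        apply ContinuousOn.intervalIntegrable
        rw [Set.uIcc_of_le (by linarith)]
        exact ((hucont.mono hsubL).sub (Polynomial.continuous _).continuousOn).abs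
      have step1 : (∫ x in (xi - h/2)..xi, |(q (i-1)).eval x - Pq.eval x|)
          ≤ ∫ x in (xi - h/2)..xi, (|u x - (q (i-1)).eval x| + |u x - Pq.eval x|) := by
        apply intervalIntegral.integral_mono_on (by linarith)
        · apply ContinuousOn.intervalIntegrable
          rw [Set.uIcc_of_le (by linarith)]
          exact (((Polynomial.continuous _).continuousOn).sub
            ((Polynomial.continuous _).continuousOn)).abs
        · exact hint1.add hint2
        · intro x _
          have h0 : (q (i-1)).eval x - Pq.eval x
              = (u x - Pq.eval x) + -(u x - (q (i-1)).eval x) := by ring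
          rw [h0]
          refine le_trans (abs_add_le _ _) ?_
          rw [abs_neg]
          linarith
      have step2 : (∫ x in (xi - h/2)..xi, (|u x - (q (i-1)).eval x| + |u x - Pq.eval x|))
          = (∫ x in (xi - h/2)..xi, |u x - (q (i-1)).eval x|)
            + ∫ x in (xi - h/2)..xi, |u x - Pq.eval x| :=
        intervalIntegral.integral_add hint1 hint2
      have step3 : (∫ x in (xi - h/2)..xi, |u x - (q (i-1)).eval x|) = El := by
        rw [hEldef]
        exact intervalIntegral_congr_Ioo (by linarith) (fun x hx => (hcellL x hx).symm)
      have step4 : (∫ x in (xi - h/2)..xi, |u x - Pq.eval x|)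
          ≤ (h/2) * ((h^p/(p.factorial:ℝ)) * Ki) := by
        have hconst : (∫ x in (xi - h/2)..xi, |u x - Pq.eval x|)
            ≤ ∫ _x in (xi - h/2)..xi, ((h^p/(p.factorial:ℝ)) * Ki) := by
          apply intervalIntegral.integral_mono_on (by linarith) hint2 intervalIntegrable_const
          intro x hx
          exact htay x ⟨hx.1, by linarith [hx.2]⟩
        rw [intervalIntegral.integral_const, smul_eq_mul] at hconst
        have he : xi - (xi - h/2) = h/2 := by ring
        rw [he] at hconst
        exact hconst
      linarith [step1, step2, step3, step4]
    have hJr : (∫ x in xi..(xi + h/2), |(q i).eval x - Pq.eval x|)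
        ≤ Er + (h/2) * ((h^p/(p.factorial:ℝ)) * Ki) := by
      have hint1 : IntervalIntegrable (fun x => |u x - (q i).eval x|) volume xi (xi + h/2) := by
        apply ContinuousOn.intervalIntegrable
        rw [Set.uIcc_of_le (by linarith)]
        exact ((hucont.mono hsubR).sub (Polynomial.continuous _).continuousOn).abs
      have hint2 : IntervalIntegrable (fun x => |u x - Pq.eval x|) volume xi (xi + h/2) := by
        apply ContinuousOn.intervalIntegrable
        rw [Set.uIcc_of_le (by linarith)]
        exact ((hucont.mono hsubR).sub (Polynomial.continuous _).continuousOn).abs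
      have step1 : (∫ x in xi..(xi + h/2), |(q i).eval x - Pq.eval x|)
          ≤ ∫ x in xi..(xi + h/2), (|u x - (q i).eval x| + |u x - Pq.eval x|) := by
        apply intervalIntegral.integral_mono_on (by linarith)
        · apply ContinuousOn.intervalIntegrable
          rw [Set.uIcc_of_le (by linarith)]
          exact (((Polynomial.continuous _).continuousOn).sub
            ((Polynomial.continuous _).continuousOn)).abs
        · exact hint1.add hint2
        · intro x _
          have h0 : (q i).eval x - Pq.eval x
              = (u x - Pq.eval x) + -(u x - (q i).eval x) := by ring
          rw [h0]
          refine le_trans (abs_add_le _ _) ?_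
          rw [abs_neg]
          linarith
      have step2 : (∫ x in xi..(xi + h/2), (|u x - (q i).eval x| + |u x - Pq.eval x|))
          = (∫ x in xi..(xi + h/2), |u x - (q i).eval x|)
            + ∫ x in xi..(xi + h/2), |u x - Pq.eval x| :=
        intervalIntegral.integral_add hint1 hint2
      have step3 : (∫ x in xi..(xi + h/2), |u x - (q i).eval x|) = Er := by
        rw [hErdef]
        exact intervalIntegral_congr_Ioo (by linarith) (fun x hx => (hcellR x hx).symm)
      have step4 : (∫ x in xi..(xi + h/2), |u x - Pq.eval x|)
          ≤ (h/2) * ((h^p/(p.factorial:ℝ)) * Ki) := by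
        have hconst : (∫ x in xi..(xi + h/2), |u x - Pq.eval x|)
            ≤ ∫ _x in xi..(xi + h/2), ((h^p/(p.factorial:ℝ)) * Ki) := by
          apply intervalIntegral.integral_mono_on (by linarith) hint2 intervalIntegrable_const
          intro x hx
          exact htay x ⟨by linarith [hx.1], hx.2⟩
        rw [intervalIntegral.integral_const, smul_eq_mul] at hconst
        have he : xi + h/2 - xi = h/2 := by ring
        rw [he] at hconst
        exact hconst
      linarith [step1, step2, step3, step4]
    have hEl0 : 0 ≤ El := intervalIntegral.integral_nonneg (by linarith) (fun x _ => hgabs0 x)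
    have hEr0 : 0 ≤ Er := intervalIntegral.integral_nonneg (by linarith) (fun x _ => hgabs0 x)
    set T : ℝ := (h/2) * ((h^p/(p.factorial:ℝ)) * Ki) with hTdef
    have hT0 : 0 ≤ T := by
      apply mul_nonneg (by positivity)
      exact mul_nonneg (by positivity) hKi0
    have hJl0 : 0 ≤ ∫ x in (xi - h/2)..xi, |(q (i-1)).eval x - Pq.eval x| :=
      intervalIntegral.integral_nonneg (by linarith) (fun _ _ => abs_nonneg _)
    have hJr0 : 0 ≤ ∫ x in xi..(xi + h/2), |(q i).eval x - Pq.eval x| :=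
      intervalIntegral.integral_nonneg (by linarith) (fun _ _ => abs_nonneg _)
    have hcomb : Cl * (∫ x in (xi - h/2)..xi, |(q (i-1)).eval x - Pq.eval x|)
        + Cr * (∫ x in xi..(xi + h/2), |(q i).eval x - Pq.eval x|)
        ≤ CC*(El + Er) + CC*T := by
      have hA := mul_le_mul_of_nonneg_left hJl hCl0.le
      have hB := mul_le_mul_of_nonneg_left hJr hCr0.le
      have hC := mul_nonneg hCr0.le hEl0
      have hD' := mul_nonneg hCl0.le hEr0
      have hE := mul_nonneg hCl0.le hT0
      have hF := mul_nonneg hCr0.le hT0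
      rw [hCCdef]
      nlinarith [hA, hB, hC, hD', hE, hF]
    have hQi2 : Real.sqrt (Qform p (Dvec p h xi (q (i-1)) (q i)))
        ≤ (h^(p+2))⁻¹ * (CC*(El + Er) + CC*T) := by
      refine le_trans hQi ?_
      exact mul_le_mul_of_nonneg_left hcomb (by positivity)
    have hmul := mul_le_mul_of_nonneg_left hQi2 hh.le
    have hrhs : h * ((h^(p+2))⁻¹ * (CC*(El + Er) + CC*T))
        ≤ (CC * (h^(p+1))⁻¹) * (El + Er) + (CC * (p.factorial:ℝ)⁻¹) * Ki := by
      have heq : h * ((h^(p+2))⁻¹ * (CC*(El + Er) + CC*T))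
          = (CC * (h^(p+1))⁻¹) * (El + Er) + (CC * (2*(p.factorial:ℝ))⁻¹) * Ki := by
        rw [hTdef]
        have h1 : (h:ℝ)^(p+2) = h^(p+1) * h := pow_succ h (p+1)
        have h2 : (h:ℝ)^(p+1) = h^p * h := pow_succ h p
        have hp1ne : (h:ℝ)^(p+1) ≠ 0 := by positivity
        have hpne : (h:ℝ)^p ≠ 0 := by positivity
        field_simp
        ring
      rw [heq]
      have hlast : (CC * (2*(p.factorial:ℝ))⁻¹) * Ki ≤ (CC * (p.factorial:ℝ)⁻¹) * Ki := by
        apply mul_le_mul_of_nonneg_right _ hKi0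
        apply mul_le_mul_of_nonneg_left _ hCC0.le
        apply inv_anti₀ (by positivity)
        have : (0:ℝ) < (p.factorial:ℝ) := by positivity
        linarith
      linarith
    have hwin : El + Er = ∫ x in (xi - h/2)..(xi + h/2), gabs x := by
      rw [hEldef, hErdef]
      apply intervalIntegral.integral_add_adjacent_intervals
      · apply (hgint.mono_set ?_).intervalIntegrable
        rw [Set.uIcc_of_le (by linarith)]
        intro x hx
        exact ⟨lt_of_lt_of_le hwl hx.1, le_trans hx.2 (by linarith)⟩
      · apply (hgint.mono_set ?_).intervalIntegrable
        rw [Set.uIcc_of_le (by linarith)]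
        intro x hx
        exact ⟨lt_of_lt_of_le hwl (by linarith [hx.1]), le_trans hx.2 hwr.le⟩
    calc h * Real.sqrt (Qform p (Dvec p h xi (q (i-1)) (q i)))
        ≤ h * ((h^(p+2))⁻¹ * (CC*(El + Er) + CC*T)) := hmul
      _ ≤ (CC * (h^(p+1))⁻¹) * (El + Er) + (CC * (p.factorial:ℝ)⁻¹) * Ki := hrhs
      _ = (CC * (h^(p+1))⁻¹) * (∫ x in (xi - h/2)..(xi + h/2), gabs x)
          + (CC * (p.factorial:ℝ)⁻¹) * (∫ x in (xi - h/2)..(xi + h/2), |D x|) := by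
          rw [← hwin, hKidef]
  have hsum1 : (∑ i ∈ Finset.Ico 1 N,
        h * Real.sqrt (Qform p (Dvec p h (a + i*h) (q (i-1)) (q i))))
      ≤ ∑ i ∈ Finset.Ico 1 N,
        ((CC * (h^(p+1))⁻¹) * (∫ x in (a + i*h - h/2)..(a + i*h + h/2), gabs x)
          + (CC * (p.factorial:ℝ)⁻¹) * (∫ x in (a + i*h - h/2)..(a + i*h + h/2), |D x|)) :=
    Finset.sum_le_sum hnode
  have hsplit : (∑ i ∈ Finset.Ico 1 N,
        ((CC * (h^(p+1))⁻¹) * (∫ x in (a + i*h - h/2)..(a + i*h + h/2), gabs x)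
          + (CC * (p.factorial:ℝ)⁻¹) * (∫ x in (a + i*h - h/2)..(a + i*h + h/2), |D x|)))
      = (CC * (h^(p+1))⁻¹) * (∑ i ∈ Finset.Ico 1 N,
            ∫ x in (a + i*h - h/2)..(a + i*h + h/2), gabs x)
        + (CC * (p.factorial:ℝ)⁻¹) * (∑ i ∈ Finset.Ico 1 N,
            ∫ x in (a + i*h - h/2)..(a + i*h + h/2), |D x|) := by
    rw [Finset.sum_add_distrib, Finset.mul_sum, Finset.mul_sum]
  rw [hsplit] at hsum1
  have hsg := sum_window_le N hh hb hgint hgabs0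
  have hsD := sum_window_le N hh hb hDint (fun x => abs_nonneg _)
  have hK0 : 0 ≤ K := intervalIntegral.integral_nonneg hab.le (fun _ _ => abs_nonneg _)
  have hL0 : 0 ≤ L := intervalIntegral.integral_nonneg hab.le (fun x _ => hgabs0 x)
  have hS2 : (∑ i ∈ Finset.Ico 1 N,
        h * Real.sqrt (Qform p (Dvec p h (a + i*h) (q (i-1)) (q i))))
      ≤ (CC * (h^(p+1))⁻¹) * L + (CC * (p.factorial:ℝ)⁻¹) * K := by
    refine le_trans hsum1 ?_
    apply add_le_add
    · exact mul_le_mul_of_nonneg_left hsg (by positivity)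
    · exact mul_le_mul_of_nonneg_left hsD (by positivity)
  have hp1 : (0:ℝ) < h^(p+1) := by positivity
  have h9 : CC⁻¹ * (∑ i ∈ Finset.Ico 1 N,
        h * Real.sqrt (Qform p (Dvec p h (a + i*h) (q (i-1)) (q i))))
      - (p.factorial:ℝ)⁻¹ * K ≤ (h^(p+1))⁻¹ * L := by
    have h8 := mul_le_mul_of_nonneg_left hS2 (inv_nonneg.mpr hCC0.le)
    have heq2 : CC⁻¹ * ((CC * (h^(p+1))⁻¹) * L + (CC * (p.factorial:ℝ)⁻¹) * K)
        = (h^(p+1))⁻¹ * L + (p.factorial:ℝ)⁻¹ * K := by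
      field_simp
    rw [heq2] at h8
    linarith
  calc h^(p+1) * (CC⁻¹ * (∑ i ∈ Finset.Ico 1 N,
        h * Real.sqrt (Qform p (Dvec p h (a + i*h) (q (i-1)) (q i))))
      - (p.factorial:ℝ)⁻¹ * K)
      ≤ h^(p+1) * ((h^(p+1))⁻¹ * L) := mul_le_mul_of_nonneg_left h9 hp1.le
    _ = L := by field_simp
end

section
/- (Theorem 4, L∞ lower bound) Let p ≥ 0 be an integer. There exists a constant C_∞ > 0, depending only on p (independent of h, u and u^R), with the following property. Let a < b, N a positive integer, h = (b−a)/N, x_i = a + i h. Let u : [a,b] → ℝ be (p+1)-times continuously differentiable, and let u^R : (a,b) → ℝ coincide on each cell (x_i, x_{i+1}) with a polynomial of degree at most p. For 1 ≤ i ≤ N−1 and 0 ≤ k ≤ p set J^k_i = (d^k/dx^k)u^R(x_i⁺) − (d^k/dx^k)u^R(x_i⁻) and D^k_i = J^k_i / h^{p+1−k}. Then sup_{x ∈ (a,b)} |u(x) − u^R(x)| ≥ h^{p+1} [ max_{1 ≤ i ≤ N−1} √(Q(D^0_i, …, D^p_i)) − C_∞ sup_{x ∈ [a,b]} |u^{(p+1)}(x)|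 ]. -/
open MeasureTheory Polynomial

section Aux

lemma aux_int (g : ℝ → ℝ) (hg : Continuous g) (B c d : ℝ) (hcd : c ≤ d)
    (hb : ∀ ξ ∈ Set.Ioo c d, |g ξ| ≤ B) :
    ∫ ξ in c..d, (g ξ)^2 ≤ (d - c) * B^2 := by
  rw [intervalIntegral.integral_of_le hcd, integral_Ioc_eq_integral_Ioo]
  have h1 : ∫ ξ in Set.Ioo c d, (g ξ)^2 ≤ ∫ _ in Set.Ioo c d, B^2 := by
    refine setIntegral_mono_on ?_ ?_ measurableSet_Ioo ?_
    · exact ((hg.pow 2).integrableOn_Icc).mono_set Set.Ioo_subset_Icc_self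
    · exact integrableOn_const measure_Ioo_lt_top.ne
    · intro x hx
      calc (g x)^2 = |g x|^2 := (sq_abs _).symm
        _ ≤ B^2 := by have := hb x hx; nlinarith [abs_nonneg (g x)]
  calc (∫ ξ in Set.Ioo c d, (g ξ)^2) ≤ ∫ _ in Set.Ioo c d, B^2 := h1
    _ = (d - c) * B^2 := by
        rw [setIntegral_const, Real.volume_real_Ioo_of_le hcd, smul_eq_mul]

lemma aux_subset {u : ℝ → ℝ} {a b l r : ℝ} (hab : a < b) (hlr : l < r)
    (hsub : Set.Icc l r ⊆ Set.Icc a b) {n : ℕ}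
    (hu : ContDiffOn ℝ n u (Set.Icc a b)) {m : ℕ} (hm : m ≤ n) {y : ℝ}
    (hy : y ∈ Set.Icc l r) :
    iteratedDerivWithin m u (Set.Icc l r) y = iteratedDerivWithin m u (Set.Icc a b) y := by
  rw [iteratedDerivWithin_eq_iteratedFDerivWithin, iteratedDerivWithin_eq_iteratedFDerivWithin]
  congr 1
  exact (((hu.ftaylorSeriesWithin (uniqueDiffOn_Icc hab)).mono hsub).eq_iteratedFDerivWithin_of_uniqueDiffOn
    (by exact_mod_cast hm) (uniqueDiffOn_Icc hlr) hy).symm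

lemma aux_poly_taylor (p : ℕ) (δ : Polynomial ℝ) (hd : δ.natDegree ≤ p) (xi t : ℝ) :
    δ.eval t = ∑ k ∈ Finset.range (p+1),
      ((Polynomial.derivative^[k] δ).eval xi / (Nat.factorial k)) * (t - xi)^k := by
  have h1 : δ.eval t = (Polynomial.taylor xi δ).eval (t - xi) := (taylor_eval_sub xi δ t).symm
  rw [h1, Polynomial.eval_eq_sum_range' (lt_of_le_of_lt (by rw [natDegree_taylor]; exact hd)
    (Nat.lt_succ_self p))]
  refine Finset.sum_congr rfl fun k _ => ?_
  rw [Polynomial.taylor_coeff]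
  have h2 : (Polynomial.derivative^[k] δ).eval xi
      = (Nat.factorial k : ℝ) * (Polynomial.hasseDeriv k δ).eval xi := by
    have := congrFun (Polynomial.factorial_smul_hasseDeriv (R := ℝ) (k := k)) δ
    rw [← this]
    simp [nsmul_eq_mul]
  rw [h2]
  field_simp [Nat.factorial_ne_zero]

lemma aux_fd (p : ℕ) (h xi : ℝ) (hh : h ≠ 0) (ql qr : Polynomial ℝ)
    (hql : ql.natDegree ≤ p) (hqr : qr.natDegree ≤ p) (ξ : ℝ) :
    fd p (Dvec p h xi ql qr) ξ = (qr - ql).eval (xi + h*ξ) / (2 * h^(p+1)) := by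
  have hd : (qr - ql).natDegree ≤ p := le_trans (Polynomial.natDegree_sub_le _ _) (by simp [hql, hqr])
  rw [aux_poly_taylor p (qr - ql) hd xi (xi + h*ξ)]
  unfold fd Dvec
  rw [Fin.sum_univ_eq_sum_range (fun k => (((Polynomial.derivative^[k] qr).eval xi -
      (Polynomial.derivative^[k] ql).eval xi) / h^(p+1-k)) / (Nat.factorial k) * ξ ^ k)]
  rw [Finset.mul_sum, Finset.sum_div]
  refine Finset.sum_congr rfl fun k hk => ?_
  have hkp : k ≤ p := Nat.lt_succ_iff.mp (Finset.mem_range.mp hk)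
  rw [Polynomial.iterate_derivative_sub]
  have hpow : h^(p+1) = h^(p+1-k) * h^k := (pow_sub_mul_pow h (le_trans hkp (Nat.le_succ p))).symm
  rw [hpow]
  have h1 : h^(p+1-k) ≠ 0 := pow_ne_zero _ hh
  have h2 : h^k ≠ 0 := pow_ne_zero _ hh
  have h3 : (Nat.factorial k : ℝ) ≠ 0 := Nat.cast_ne_zero.mpr (Nat.factorial_ne_zero k)
  simp only [Polynomial.eval_sub, add_sub_cancel_left, mul_pow]
  field_simp

lemma aux_S_bound {a b h : ℝ} {N : ℕ} (hab : a < b) (hN : 0 < N) (hh : h = (b-a)/N)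
    (u uR : ℝ → ℝ) (hu : ContinuousOn u (Set.Icc a b)) (q : ℕ → Polynomial ℝ)
    (hcell : ∀ i < N, ∀ x ∈ Set.Ioo (a + i*h) (a + (i+1)*h), uR x = (q i).eval x) :
    ∃ K, ∀ x ∈ Set.Ioo a b, |u x - uR x| ≤ K := by
  have hNR : (0:ℝ) < N := Nat.cast_pos.mpr hN
  have hpos : 0 < h := by rw [hh]; exact div_pos (by linarith) hNR
  have hb : a + N*h = b := by rw [hh]; field_simp; ring
  obtain ⟨Mu, hMu⟩ := isCompact_Icc.exists_bound_of_continuousOn hu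
  set Bq := ∑ j ∈ Finset.range N, sSup ((fun x => |(q j).eval x|) '' Set.Icc a b) with hBqdef
  set Bn := ∑ j ∈ Finset.Ico 1 N, |uR (a + j*h)| with hBndef
  have hq1 : ∀ j : ℕ, ∀ x ∈ Set.Icc a b,
      |(q j).eval x| ≤ sSup ((fun x => |(q j).eval x|) '' Set.Icc a b) := fun j x hx =>
    ContinuousOn.le_sSup_image_Icc ((q j).continuous.abs.continuousOn) hx
  have hq0 : ∀ j : ℕ, 0 ≤ sSup ((fun x => |(q j).eval x|) '' Set.Icc a b) := fun j =>
    le_trans (abs_nonneg _) (hq1 j a ⟨le_rfl, hab.le⟩)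
  have hBq0 : 0 ≤ Bq := Finset.sum_nonneg fun j _ => hq0 j
  have hBn0 : 0 ≤ Bn := Finset.sum_nonneg fun j _ => abs_nonneg _
  have hBq : ∀ j < N, ∀ x ∈ Set.Icc a b, |(q j).eval x| ≤ Bq := fun j hj x hx =>
    le_trans (hq1 j x hx) (Finset.single_le_sum (fun k _ => hq0 k) (Finset.mem_range.mpr hj))
  have hBn : ∀ j ∈ Finset.Ico 1 N, |uR (a + j*h)| ≤ Bn := fun j hj =>
    Finset.single_le_sum (f := fun k : ℕ => |uR (a + k*h)|) (fun k _ => abs_nonneg _) hj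
  refine ⟨Mu + (Bq + Bn), fun x hx => ?_⟩
  have h1 : |u x| ≤ Mu := by
    have := hMu x (Set.Ioo_subset_Icc_self hx); rwa [Real.norm_eq_abs] at this
  have h2 : |uR x| ≤ Bq + Bn := by
    by_cases hc : ∃ j ∈ Finset.Ico 1 N, x = a + j*h
    · obtain ⟨j, hj, rfl⟩ := hc
      linarith [hBn j hj]
    · push_neg at hc
      set t := (x - a)/h with htdef
      have ht0 : 0 ≤ t := by
        have h' : a < x := hx.1
        rw [htdef]
        exact div_nonneg (by linarith) hpos.le
      set j := ⌊t⌋₊ with hjdef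
      have hjt : (j:ℝ) ≤ t := Nat.floor_le ht0
      have htj : t < j + 1 := Nat.lt_floor_add_one t
      have hjN : j < N := by
        rw [hjdef, Nat.floor_lt ht0, htdef, div_lt_iff₀ hpos]
        have : x < b := hx.2
        nlinarith
      have hle : a + j*h ≤ x := by
        rw [htdef, le_div_iff₀ hpos] at hjt; linarith
      have hlt2 : x < a + (j+1)*h := by
        rw [htdef, div_lt_iff₀ hpos] at htj; nlinarith
      have hlt1 : a + j*h < x := by
        rcases lt_or_eq_of_le hle with h' | h'
        · exact h'
        · exfalso
          have hj1 : 1 ≤ j := by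
            by_contra hj0
            push_neg at hj0
            interval_cases j
            · simp at h'; linarith [hx.1]
          exact hc j (Finset.mem_Ico.mpr ⟨hj1, hjN⟩) h'.symm
      have := hcell j hjN x ⟨hlt1, hlt2⟩
      rw [this]
      have hxab : x ∈ Set.Icc a b := Set.Ioo_subset_Icc_self hx
      linarith [hBq j hjN x hxab]
  calc |u x - uR x| ≤ |u x| + |uR x| := abs_sub _ _
    _ ≤ Mu + (Bq + Bn) := by linarith

end Aux

set_option maxHeartbeats 1000000 in
/-- Theorem 4 of the paper, L∞ lower bound:
`‖u - u^R‖_{L^∞(a,b)} ≥ h^{p+1} [ max_{1≤i≤N-1} √(Q(Dᵢ)) - C_∞ |u|_{W^{p+1}_∞} ]`,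
stated equivalently as the bound holding for every interior node `i`. -/
theorem Linfty_lower_bound (p : ℕ) :
    ∃ Cinf : ℝ, 0 < Cinf ∧
      ∀ (a b : ℝ), a < b → ∀ N : ℕ, 0 < N → ∀ h : ℝ, h = (b - a) / N →
      ∀ u : ℝ → ℝ, ContDiffOn ℝ (p+1) u (Set.Icc a b) →
      ∀ (uR : ℝ → ℝ) (q : ℕ → Polynomial ℝ),
        (∀ i < N, (q i).natDegree ≤ p) →
        (∀ i < N, ∀ x ∈ Set.Ioo (a + i*h) (a + (i+1)*h), uR x = (q i).eval x) →
        ∀ i ∈ Finset.Ico 1 N,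
          sSup ((fun x => |u x - uR x|) '' Set.Ioo a b) ≥
            h^(p+1) *
              (Real.sqrt (Qform p (Dvec p h (a + i*h) (q (i-1)) (q i)))
                - Cinf * sSup ((fun x =>
                    |iteratedDerivWithin (p+1) u (Set.Icc a b) x|) '' Set.Icc a b)) := by
  classical
  refine ⟨(p.factorial:ℝ)⁻¹, by positivity, ?_⟩
  intro a b hab N hN h hh u hu uR q hdeg hcell i hi
  obtain ⟨hi1, hiN⟩ := Finset.mem_Ico.mp hi
  have hNR : (0:ℝ) < N := Nat.cast_pos.mpr hN
  have hpos : 0 < h := by rw [hh]; exact div_pos (by linarith) hNR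
  have hhp : (0:ℝ) < h^(p+1) := pow_pos hpos _
  have hb : a + N*h = b := by rw [hh]; field_simp; ring
  set xi := a + i*h with hxidef
  set l := xi - h/2 with hldef
  set r := xi + h/2 with hrdef
  have hiR1 : (1:ℝ) ≤ i := by exact_mod_cast hi1
  have hiRN : (i:ℝ) + 1 ≤ N := by exact_mod_cast hiN
  have hal : a < l := by rw [hldef, hxidef]; nlinarith
  have hrb : r ≤ b := by rw [hrdef, hxidef, ← hb]; nlinarith
  have hlr : l < r := by rw [hldef, hrdef]; linarith
  have hsub : Set.Icc l r ⊆ Set.Icc a b := Set.Icc_subset_Icc hal.le hrb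
  -- the sup S
  obtain ⟨K, hK⟩ := aux_S_bound hab hN hh u uR hu.continuousOn q hcell
  set S := sSup ((fun x => |u x - uR x|) '' Set.Ioo a b) with hSdef
  have hSbdd : BddAbove ((fun x => |u x - uR x|) '' Set.Ioo a b) := by
    refine ⟨K, ?_⟩
    rintro _ ⟨x, hx, rfl⟩
    exact hK x hx
  have hSge : ∀ x ∈ Set.Ioo a b, |u x - uR x| ≤ S := fun x hx =>
    le_csSup hSbdd (Set.mem_image_of_mem _ hx)
  have hS0 : 0 ≤ S := le_trans (abs_nonneg _)
    (hSge ((a+b)/2) ⟨by linarith, by linarith⟩)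
  -- the sup M
  set M := sSup ((fun x => |iteratedDerivWithin (p+1) u (Set.Icc a b) x|) '' Set.Icc a b)
    with hMdef
  have hMle : ∀ y ∈ Set.Icc a b, |iteratedDerivWithin (p+1) u (Set.Icc a b) y| ≤ M :=
    fun y hy => ContinuousOn.le_sSup_image_Icc
      ((hu.continuousOn_iteratedDerivWithin (le_refl _) (uniqueDiffOn_Icc hab)).abs) hy
  have hM0 : 0 ≤ M := le_trans (abs_nonneg _) (hMle a ⟨le_rfl, hab.le⟩)
  -- Taylor polynomial
  have hulr : ContDiffOn ℝ (↑p+1) u (Set.Icc l r) := by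
    exact_mod_cast hu.mono hsub
  have hu' : ContDiffOn ℝ (↑(p+1)) u (Set.Icc a b) := by exact_mod_cast hu
  have hC : ∀ y ∈ Set.Icc l r, ‖iteratedDerivWithin (p+1) u (Set.Icc l r) y‖ ≤ M := by
    intro y hy
    rw [Real.norm_eq_abs,
      aux_subset (n := p+1) (m := p+1) hab hlr hsub hu' (le_refl _) hy]
    exact hMle y (hsub hy)
  have hTay : ∀ x ∈ Set.Icc l r,
      |u x - taylorWithinEval u p (Set.Icc l r) l x| ≤ M * h^(p+1) / p.factorial := by
    intro x hx
    have h1 := taylor_mean_remainder_bound hlr.le hulr hx hC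
    rw [Real.norm_eq_abs] at h1
    refine le_trans h1 ?_
    have hxl0 : 0 ≤ x - l := by linarith [hx.1]
    have hxlh : x - l ≤ h := by
      have := hx.2; rw [hldef, hrdef] at *; linarith
    gcongr
  set T : Polynomial ℝ := ∑ k ∈ Finset.range (p+1),
    Polynomial.C ((k.factorial:ℝ)⁻¹ * iteratedDerivWithin k u (Set.Icc l r) l) *
      (Polynomial.X - Polynomial.C l)^k with hTdef
  have hTeval : ∀ x, T.eval x = taylorWithinEval u p (Set.Icc l r) l x := by
    intro x
    rw [taylor_within_apply, hTdef, Polynomial.eval_finset_sum]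
    refine Finset.sum_congr rfl fun k _ => ?_
    simp [smul_eq_mul]
    ring
  have hTdeg : T.natDegree ≤ p := by
    refine Polynomial.natDegree_sum_le_of_forall_le _ _ fun k hk => ?_
    refine le_trans (Polynomial.natDegree_C_mul_le _ _) ?_
    rw [Polynomial.natDegree_pow, Polynomial.natDegree_X_sub_C, mul_one]
    exact Nat.lt_succ_iff.mp (Finset.mem_range.mp hk)
  -- the competitor polynomial v
  set v : Polynomial ℝ := Polynomial.C (h^(p+1))⁻¹ *
    ((T - Polynomial.C (1/2) * (q (i-1) + q i)).comp
      (Polynomial.C xi + Polynomial.C h * Polynomial.X)) with hvdef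
  have hvdeg : v.natDegree ≤ p := by
    refine le_trans (Polynomial.natDegree_C_mul_le _ _) ?_
    refine le_trans (Polynomial.natDegree_comp_le) ?_
    have hinner : (T - Polynomial.C (1/2) * (q (i-1) + q i)).natDegree ≤ p := by
      refine le_trans (Polynomial.natDegree_sub_le _ _) ?_
      refine max_le hTdeg (le_trans (Polynomial.natDegree_C_mul_le _ _) ?_)
      exact le_trans (Polynomial.natDegree_add_le _ _)
        (max_le (hdeg _ (lt_of_le_of_lt (Nat.sub_le i 1) hiN)) (hdeg i hiN))
    have hlin : (Polynomial.C xi + Polynomial.C h * Polynomial.X).natDegree ≤ 1 := by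
      refine le_trans (Polynomial.natDegree_add_le _ _) ?_
      simp [Polynomial.natDegree_C]
      exact le_trans (Polynomial.natDegree_C_mul_le _ _) (by simp)
    calc (T - Polynomial.C (1/2) * (q (i-1) + q i)).natDegree *
          (Polynomial.C xi + Polynomial.C h * Polynomial.X).natDegree
        ≤ p * 1 := Nat.mul_le_mul hinner hlin
      _ = p := mul_one p
  -- evaluation of v
  have hveval : ∀ ξ : ℝ, v.eval ξ = (h^(p+1))⁻¹ *
      (T.eval (xi + h*ξ) -
        (1/2) * ((q (i-1)).eval (xi + h*ξ) + (q i).eval (xi + h*ξ))) := by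
    intro ξ
    rw [hvdef]
    simp [Polynomial.eval_comp]
  -- fd identity
  have hi1N : i - 1 < N := lt_of_le_of_lt (Nat.sub_le i 1) hiN
  have hfdI : ∀ ξ : ℝ, fd p (Dvec p h xi (q (i-1)) (q i)) ξ =
      ((q i) - (q (i-1))).eval (xi + h*ξ) / (2 * h^(p+1)) :=
    aux_fd p h xi hpos.ne' (q (i-1)) (q i) (hdeg _ hi1N) (hdeg i hiN)
  -- bound B
  set B := (h^(p+1))⁻¹ * (S + M * h^(p+1) / p.factorial) with hBdef
  have hB0 : 0 ≤ B := by positivity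
  have hcast : ((i-1 : ℕ):ℝ) = (i:ℝ) - 1 := by
    rw [Nat.cast_sub hi1]; norm_num
  set D := Dvec p h xi (q (i-1)) (q i) with hDdef
  -- right bound
  have hright : ∀ ξ ∈ Set.Ioo (0:ℝ) (1/2), |v.eval ξ - fd p D ξ| ≤ B := by
    intro ξ hξ
    set x := xi + h*ξ with hxdef
    have hx1 : xi < x := by rw [hxdef]; nlinarith [hξ.1]
    have hx2 : x < r := by rw [hxdef, hrdef]; nlinarith [hξ.2]
    have hxab : x ∈ Set.Ioo a b := ⟨by nlinarith, lt_of_lt_of_le hx2 hrb⟩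
    have hxlr : x ∈ Set.Icc l r := ⟨by rw [hldef]; linarith, hx2.le⟩
    have hxcell : x ∈ Set.Ioo (a + i*h) (a + (i+1)*h) := by
      constructor
      · rw [← hxidef]; exact hx1
      · rw [hrdef, hxidef] at hx2; linarith
    have huR : uR x = (q i).eval x := hcell i hiN x hxcell
    have hkey : v.eval ξ - fd p D ξ = (h^(p+1))⁻¹ * (T.eval x - (q i).eval x) := by
      rw [hveval ξ, hDdef, hfdI ξ, Polynomial.eval_sub, ← hxdef]
      field_simp
      ring
    rw [hkey, abs_mul, abs_of_pos (inv_pos.mpr hhp)]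
    have hbound : |T.eval x - (q i).eval x| ≤ M * h^(p+1) / p.factorial + S := by
      have e1 : T.eval x - (q i).eval x = (T.eval x - u x) + (u x - uR x) := by
        rw [huR]; ring
      rw [e1]
      refine le_trans (abs_add_le _ _) ?_
      have t1 : |T.eval x - u x| ≤ M * h^(p+1) / p.factorial := by
        rw [abs_sub_comm, hTeval x]
        exact hTay x hxlr
      exact add_le_add t1 (hSge x hxab)
    rw [hBdef]
    calc (h^(p+1))⁻¹ * |T.eval x - (q i).eval x|
        ≤ (h^(p+1))⁻¹ * (M * h^(p+1) / p.factorial + S) := by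
          exact mul_le_mul_of_nonneg_left hbound (inv_pos.mpr hhp).le
      _ = (h^(p+1))⁻¹ * (S + M * h^(p+1) / p.factorial) := by ring
  -- left bound
  have hleft : ∀ ξ ∈ Set.Ioo (-(1:ℝ)/2) 0, |v.eval ξ + fd p D ξ| ≤ B := by
    intro ξ hξ
    set x := xi + h*ξ with hxdef
    have hx1 : x < xi := by rw [hxdef]; nlinarith [hξ.2]
    have hx2 : l < x := by rw [hxdef, hldef]; nlinarith [hξ.1]
    have hxab : x ∈ Set.Ioo a b := ⟨lt_trans hal hx2, by rw [hxidef] at hx1; nlinarith⟩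
    have hxlr : x ∈ Set.Icc l r := ⟨hx2.le, by rw [hrdef]; linarith⟩
    have hxcell : x ∈ Set.Ioo (a + ((i-1:ℕ):ℝ)*h) (a + (((i-1:ℕ):ℝ)+1)*h) := by
      rw [hcast]
      constructor
      · rw [hldef, hxidef] at hx2; nlinarith
      · rw [hxidef] at hx1; rw [show ((i:ℝ) - 1 + 1) = (i:ℝ) by ring]; exact hx1
    have huR : uR x = (q (i-1)).eval x := hcell (i-1) hi1N x hxcell
    have hkey : v.eval ξ + fd p D ξ = (h^(p+1))⁻¹ * (T.eval x - (q (i-1)).eval x) := by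
      rw [hveval ξ, hDdef, hfdI ξ, Polynomial.eval_sub, ← hxdef]
      field_simp
      ring
    rw [hkey, abs_mul, abs_of_pos (inv_pos.mpr hhp)]
    have hbound : |T.eval x - (q (i-1)).eval x| ≤ M * h^(p+1) / p.factorial + S := by
      have e1 : T.eval x - (q (i-1)).eval x = (T.eval x - u x) + (u x - uR x) := by
        rw [huR]; ring
      rw [e1]
      refine le_trans (abs_add_le _ _) ?_
      have t1 : |T.eval x - u x| ≤ M * h^(p+1) / p.factorial := by
        rw [abs_sub_comm]
        rw [hTeval x]
        exact hTay x hxlr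
      exact add_le_add t1 (hSge x hxab)
    rw [hBdef]
    calc (h^(p+1))⁻¹ * |T.eval x - (q (i-1)).eval x|
        ≤ (h^(p+1))⁻¹ * (M * h^(p+1) / p.factorial + S) := by
          exact mul_le_mul_of_nonneg_left hbound (inv_pos.mpr hhp).le
      _ = (h^(p+1))⁻¹ * (S + M * h^(p+1) / p.factorial) := by ring
  -- continuity
  have hfdc : Continuous (fd p D) := by
    unfold fd
    exact continuous_const.mul (continuous_finset_sum _ fun k _ =>
      (continuous_const.mul (continuous_pow (k:ℕ))))
  have hc1 : Continuous (fun ξ => v.eval ξ + fd p D ξ) := v.continuous.add hfdc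
  have hc2 : Continuous (fun ξ => v.eval ξ - fd p D ξ) := v.continuous.sub hfdc
  -- Qerr bound
  have hQerr : Qerr p D v ≤ B^2 := by
    unfold Qerr
    have h1 := aux_int _ hc1 B (-(1)/2) 0 (by norm_num) hleft
    have h2 := aux_int _ hc2 B 0 (1/2) (by norm_num) hright
    norm_num at h1 h2
    linarith
  have hQle : Qform p D ≤ B^2 := by
    have hmem : Qerr p D v ∈ {z : ℝ | ∃ w : Polynomial ℝ, w.natDegree ≤ p ∧ z = Qerr p D w} :=
      ⟨v, hvdeg, rfl⟩
    refine le_trans (csInf_le ?_ hmem) hQerr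
    refine ⟨0, ?_⟩
    rintro z ⟨w, _, rfl⟩
    unfold Qerr
    have g1 : (0:ℝ) ≤ ∫ ξ in (-(1:ℝ)/2)..0, (w.eval ξ + fd p D ξ)^2 :=
      intervalIntegral.integral_nonneg (by norm_num) (fun x _ => sq_nonneg _)
    have g2 : (0:ℝ) ≤ ∫ ξ in (0:ℝ)..(1/2), (w.eval ξ - fd p D ξ)^2 :=
      intervalIntegral.integral_nonneg (by norm_num) (fun x _ => sq_nonneg _)
    linarith
  have hsq : Real.sqrt (Qform p D) ≤ B := by
    calc Real.sqrt (Qform p D) ≤ Real.sqrt (B^2) := Real.sqrt_le_sqrt hQle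
      _ = B := Real.sqrt_sq hB0
  rw [ge_iff_le]
  calc h^(p+1) * (Real.sqrt (Qform p D) - (p.factorial:ℝ)⁻¹ * M)
      ≤ h^(p+1) * (B - (p.factorial:ℝ)⁻¹ * M) := by
        exact mul_le_mul_of_nonneg_left (sub_le_sub_right hsq _) hhp.le
    _ = S := by
        rw [hBdef]
        have hf : (p.factorial:ℝ) ≠ 0 := Nat.cast_ne_zero.mpr (Nat.factorial_ne_zero p)
        field_simp
        ring
end

section
/- (Necessity of numerical W^{p+1}_1-smoothness) Let p ≥ 0 be an integer. There exist constants C₁ > 0 and C₁₂ > 0 depending only on p with the following property. Let a < b, N a positive integer, h = (b−a)/N, x_i = a + i h, u : [a,b] → ℝ (p+1)-times continuously differentiable, and u^R : (a,b) → ℝ piecewise polynomial of degree at most p on the cells (x_i, x_{i+1}), with D^k_i = (u^{R(k)}(x_i⁺) − u^{R(k)}(x_i⁻)) / h^{p+1−k}. If K ≥ 0 and ∫_a^b |u − u^R| ≤ K h^{p+1}, then Σ_{i=1}^{N−1} h · √(Q(D^0_i, …, D^p_i)) ≤ (1/C₁₂) ( K + C₁ ∫_a^b |u^{(p+1)}|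 ). -/
open MeasureTheory Polynomial

section Helpers

open intervalIntegral

noncomputable def polyEv (p : ℕ) (c : Fin (p+1) → ℝ) (x : ℝ) : ℝ :=
  ∑ k : Fin (p+1), c k * x ^ (k:ℕ)

lemma polyEv_cont (p : ℕ) (c : Fin (p+1) → ℝ) : Continuous (polyEv p c) := by
  unfold polyEv; continuity

lemma polyEv_smul (p : ℕ) (t : ℝ) (c : Fin (p+1) → ℝ) (x : ℝ) :
    polyEv p (t • c) x = t * polyEv p c x := by
  unfold polyEv
  rw [Finset.mul_sum]
  refine Finset.sum_congr rfl fun k _ => ?_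
  simp [mul_assoc]

lemma polyEv_sub (p : ℕ) (c d : Fin (p+1) → ℝ) (x : ℝ) :
    polyEv p (c - d) x = polyEv p c x - polyEv p d x := by
  unfold polyEv
  rw [← Finset.sum_sub_distrib]
  refine Finset.sum_congr rfl fun k _ => ?_
  simp [sub_mul]

noncomputable def N1 (p : ℕ) (c : Fin (p+1) → ℝ) : ℝ := ∫ x in (0:ℝ)..1, |polyEv p c x|

noncomputable def N2sq (p : ℕ) (c : Fin (p+1) → ℝ) : ℝ := ∫ x in (0:ℝ)..1, (polyEv p c x)^2

lemma polyEv_bound (p : ℕ) (c : Fin (p+1) → ℝ) {x : ℝ} (hx : x ∈ Set.Icc (0:ℝ) 1) :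
    |polyEv p c x| ≤ (p+1) * ‖c‖ := by
  unfold polyEv
  calc |∑ k : Fin (p+1), c k * x ^ (k:ℕ)| ≤ ∑ k : Fin (p+1), |c k * x ^ (k:ℕ)| :=
        Finset.abs_sum_le_sum_abs _ _
    _ ≤ ∑ _k : Fin (p+1), ‖c‖ := by
        refine Finset.sum_le_sum fun k _ => ?_
        rw [abs_mul]
        have h1 : |c k| ≤ ‖c‖ := by
          simpa [Real.norm_eq_abs] using norm_le_pi_norm c k
        have h2 : |x ^ (k:ℕ)| ≤ 1 := by
          rw [abs_pow]
          exact pow_le_one₀ (abs_nonneg x) (abs_le.2 ⟨by linarith [hx.1], hx.2⟩)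
        calc |c k| * |x ^ (k:ℕ)| ≤ |c k| * 1 :=
              mul_le_mul_of_nonneg_left h2 (abs_nonneg _)
          _ = |c k| := mul_one _
          _ ≤ ‖c‖ := h1
    _ = (p+1) * ‖c‖ := by simp [Finset.sum_const, mul_comm]

lemma N1_sub_le (p : ℕ) (c d : Fin (p+1) → ℝ) :
    N1 p c - N1 p d ≤ (p+1) * ‖c - d‖ := by
  have hint : ∀ e : Fin (p+1) → ℝ,
      IntervalIntegrable (fun x => |polyEv p e x|) volume 0 1 :=
    fun e => ((polyEv_cont p e).abs).intervalIntegrable _ _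
  have h1 : N1 p c - N1 p d = ∫ x in (0:ℝ)..1, (|polyEv p c x| - |polyEv p d x|) := by
    rw [intervalIntegral.integral_sub (hint c) (hint d)]; rfl
  rw [h1]
  have h2 : (∫ x in (0:ℝ)..1, (|polyEv p c x| - |polyEv p d x|)) ≤
      ∫ x in (0:ℝ)..1, ((p+1) * ‖c - d‖ : ℝ) := by
    refine intervalIntegral.integral_mono_on (by norm_num)
      ((hint c).sub (hint d)) (intervalIntegrable_const) fun x hx => ?_
    have := polyEv_bound p (c - d) hx
    rw [polyEv_sub] at this
    have habs := abs_sub_abs_le_abs_sub (polyEv p c x) (polyEv p d x)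
    linarith
  simpa using h2

lemma N1_continuous (p : ℕ) : Continuous (N1 p) := by
  have : LipschitzWith (⟨p+1, by positivity⟩ : NNReal) (N1 p) := by
    refine LipschitzWith.of_dist_le_mul fun c d => ?_
    rw [Real.dist_eq, dist_eq_norm]
    have h1 := N1_sub_le p c d
    have h2 := N1_sub_le p d c
    rw [abs_le]
    constructor
    · have h3 : ‖d - c‖ = ‖c - d‖ := norm_sub_rev d c
      rw [h3] at h2
      push_cast
      show -(((p:ℝ)+1) * ‖c - d‖) ≤ N1 p c - N1 p d
      linarith
    · push_cast; show N1 p c - N1 p d ≤ ((p:ℝ)+1) * ‖c - d‖; linarith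
  exact this.continuous

lemma N2sq_eq (p : ℕ) (c : Fin (p+1) → ℝ) :
    N2sq p c = ∑ j : Fin (p+1), ∑ k : Fin (p+1),
      c j * c k * (1 / ((j:ℕ) + (k:ℕ) + 1)) := by
  unfold N2sq
  have h1 : ∀ x : ℝ, (polyEv p c x)^2 =
      ∑ j : Fin (p+1), ∑ k : Fin (p+1), c j * c k * x ^ ((j:ℕ) + (k:ℕ)) := by
    intro x
    unfold polyEv
    rw [sq, Finset.sum_mul_sum]
    refine Finset.sum_congr rfl fun j _ => Finset.sum_congr rfl fun k _ => ?_
    rw [pow_add]; ring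
  simp_rw [h1]
  rw [intervalIntegral.integral_finset_sum]
  · refine Finset.sum_congr rfl fun j _ => ?_
    rw [intervalIntegral.integral_finset_sum]
    · refine Finset.sum_congr rfl fun k _ => ?_
      rw [intervalIntegral.integral_const_mul, integral_pow]
      push_cast
      simp
    · intro k _
      exact (by continuity :
        Continuous fun x : ℝ => c j * c k * x ^ ((j:ℕ)+(k:ℕ))).intervalIntegrable _ _
  · intro j _
    refine (Continuous.intervalIntegrable ?_ _ _)
    continuity

lemma N2sq_continuous (p : ℕ) : Continuous (N2sq p) := by
  have h : (N2sq p) = fun c : Fin (p+1) → ℝ => ∑ j : Fin (p+1), ∑ k : Fin (p+1),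
      c j * c k * (1 / ((j:ℕ) + (k:ℕ) + 1)) := funext (N2sq_eq p)
  rw [h]
  continuity

lemma integral_abs_pos_of_ne {f : ℝ → ℝ} (hf : Continuous f) {x₀ : ℝ}
    (hx₀ : x₀ ∈ Set.Ioo (0:ℝ) 1) (hne : f x₀ ≠ 0) :
    0 < ∫ x in (0:ℝ)..1, |f x| := by
  obtain ⟨hx0, hx1⟩ := hx₀
  have hpos : 0 < |f x₀| := abs_pos.2 hne
  have hcont : Continuous fun x => |f x| := hf.abs
  obtain ⟨ε, hε, hball⟩ := Metric.continuousAt_iff.1 hcont.continuousAt (|f x₀|/2) (by linarith)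
  set η := min (ε/2) (min x₀ (1 - x₀)) / 2 with hη
  have hη0 : 0 < η := by
    apply div_pos _ (by norm_num)
    exact lt_min (by linarith) (lt_min hx0 (by linarith))
  have hηε : η < ε := by
    have h1 : η ≤ (ε/2)/2 := by
      apply div_le_div_of_nonneg_right (min_le_left _ _) (by norm_num)
    linarith
  have hηx : η ≤ x₀/2 := by
    have h1 : min (ε/2) (min x₀ (1 - x₀)) ≤ x₀ := (min_le_right _ _).trans (min_le_left _ _)
    rw [hη]; linarith
  have hηx1 : η ≤ (1 - x₀)/2 := by
    have h1 : min (ε/2) (min x₀ (1 - x₀)) ≤ 1 - x₀ := (min_le_right _ _).trans (min_le_right _ _)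
    rw [hη]; linarith
  set α := x₀ - η
  set β := x₀ + η
  have hαβ : α < β := by simp only [α, β]; linarith
  have h0α : (0:ℝ) ≤ α := by simp only [α]; linarith
  have hβ1 : β ≤ 1 := by simp only [β]; linarith
  have hmid : 0 < ∫ x in α..β, |f x| := by
    have hlow : ∀ x ∈ Set.Icc α β, |f x₀|/2 ≤ |f x| := by
      intro x hx
      have hd : dist x x₀ < ε := by
        rw [Real.dist_eq, abs_lt]
        constructor
        · have := hx.1; simp only [α] at this; linarith
        · have := hx.2; simp only [β] at this; linarith
      have h5 := hball hd
      rw [Real.dist_eq] at h5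
      have h6 := abs_lt.1 h5
      linarith [h6.1]
    have h1 : (∫ x in α..β, (|f x₀|/2 : ℝ)) ≤ ∫ x in α..β, |f x| :=
      intervalIntegral.integral_mono_on hαβ.le intervalIntegrable_const
        (hcont.intervalIntegrable _ _) hlow
    have h2 : (∫ x in α..β, (|f x₀|/2 : ℝ)) = (β - α) * (|f x₀|/2) := by
      simp [smul_eq_mul]; ring
    rw [h2] at h1
    have h3 : 0 < (β - α) * (|f x₀|/2) := by
      apply mul_pos _ (by linarith)
      simp only [α, β]; linarith
    linarith
  have hsplit : (∫ x in (0:ℝ)..1, |f x|) =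
      (∫ x in (0:ℝ)..α, |f x|) + (∫ x in α..β, |f x|) + (∫ x in β..1, |f x|) := by
    rw [intervalIntegral.integral_add_adjacent_intervals (hcont.intervalIntegrable _ _)
      (hcont.intervalIntegrable _ _),
      intervalIntegral.integral_add_adjacent_intervals (hcont.intervalIntegrable _ _)
      (hcont.intervalIntegrable _ _)]
  have hnn1 : 0 ≤ ∫ x in (0:ℝ)..α, |f x| :=
    intervalIntegral.integral_nonneg h0α fun x _ => abs_nonneg _
  have hnn2 : 0 ≤ ∫ x in β..1, |f x| :=
    intervalIntegral.integral_nonneg hβ1 fun x _ => abs_nonneg _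
  rw [hsplit]; linarith

lemma N1_pos (p : ℕ) {c : Fin (p+1) → ℝ} (hc : c ≠ 0) : 0 < N1 p c := by
  set Pc : Polynomial ℝ := ∑ k : Fin (p+1), Polynomial.monomial (k:ℕ) (c k) with hPc
  have heval : ∀ x, Pc.eval x = polyEv p c x := by
    intro x
    rw [hPc, Polynomial.eval_finset_sum]
    unfold polyEv
    exact Finset.sum_congr rfl fun k _ => by rw [Polynomial.eval_monomial]
  have hcoeff : ∀ j : Fin (p+1), Pc.coeff (j:ℕ) = c j := by
    intro j
    rw [hPc, Polynomial.finset_sum_coeff]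
    rw [Finset.sum_eq_single j]
    · simp [Polynomial.coeff_monomial]
    · intro k _ hkj
      rw [Polynomial.coeff_monomial, if_neg]
      exact fun h => hkj (Fin.ext h)
    · simp
  have hPne : Pc ≠ 0 := by
    intro h0
    apply hc
    funext j
    have := hcoeff j
    rw [h0] at this
    simpa using this.symm
  have hroots := Polynomial.finite_setOf_isRoot hPne
  have hinf : (Set.Ioo (0:ℝ) 1).Infinite := Set.Ioo_infinite (by norm_num)
  obtain ⟨x₀, hx₀⟩ := (hinf.diff hroots).nonempty
  have hne : polyEv p c x₀ ≠ 0 := by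
    rw [← heval]
    exact fun h => hx₀.2 h
  exact integral_abs_pos_of_ne (polyEv_cont p c) hx₀.1 hne

lemma inv_ineq01 (p : ℕ) : ∃ C : ℝ, 0 < C ∧ ∀ v : Polynomial ℝ, v.natDegree ≤ p →
    (∫ x in (0:ℝ)..1, (v.eval x)^2) ≤ C * (∫ x in (0:ℝ)..1, |v.eval x|)^2 := by
  have hsph : IsCompact (Metric.sphere (0 : Fin (p+1) → ℝ) 1) := isCompact_sphere _ _
  have hsne : (Metric.sphere (0 : Fin (p+1) → ℝ) 1).Nonempty :=
    NormedSpace.sphere_nonempty.2 zero_le_one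
  obtain ⟨c₁, hc₁s, hc₁min⟩ := hsph.exists_isMinOn hsne (N1_continuous p).continuousOn
  obtain ⟨c₂, hc₂s, hc₂max⟩ := hsph.exists_isMaxOn hsne (N2sq_continuous p).continuousOn
  set m := N1 p c₁ with hmdef
  set M := N2sq p c₂ with hMdef
  have hm : 0 < m := by
    apply N1_pos
    intro h0
    have h1 := mem_sphere_zero_iff_norm.1 hc₁s
    rw [h0] at h1
    simp at h1
  have hM0 : 0 ≤ M := intervalIntegral.integral_nonneg (by norm_num) fun x _ => sq_nonneg _
  refine ⟨(M+1)/m^2, by positivity, ?_⟩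
  intro v hv
  set c : Fin (p+1) → ℝ := fun k => v.coeff k with hcdef
  have heval : ∀ x, v.eval x = polyEv p c x := fun x => by
    rw [Polynomial.eval_eq_sum_range' (Nat.lt_succ_of_le hv)]
    unfold polyEv
    exact (Fin.sum_univ_eq_sum_range (fun i => v.coeff i * x ^ i) (p+1)).symm
  by_cases hc0 : c = 0
  · have hz : ∀ x : ℝ, v.eval x = 0 := fun x => by
      rw [heval, hc0]; unfold polyEv; simp
    have h1 : (∫ x in (0:ℝ)..1, (v.eval x)^2) = 0 := by simp only [hz]; simp
    rw [h1]
    positivity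
  · set t := ‖c‖ with htdef
    have ht : 0 < t := norm_pos_iff.2 hc0
    set e := t⁻¹ • c with hedef
    have he : ‖e‖ = 1 := by
      rw [hedef, norm_smul, norm_inv, norm_norm, ← htdef, inv_mul_cancel₀ ht.ne']
    have hes : e ∈ Metric.sphere (0 : Fin (p+1) → ℝ) 1 := mem_sphere_zero_iff_norm.2 he
    have hce : c = t • e := by
      rw [hedef, smul_smul, mul_inv_cancel₀ ht.ne', one_smul]
    have hL : (∫ x in (0:ℝ)..1, (v.eval x)^2) = t^2 * N2sq p e := by
      simp only [heval, hce, polyEv_smul, mul_pow]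
      rw [intervalIntegral.integral_const_mul]
      rfl
    have hR : (∫ x in (0:ℝ)..1, |v.eval x|) = t * N1 p e := by
      simp only [heval, hce, polyEv_smul, abs_mul, abs_of_pos ht]
      rw [intervalIntegral.integral_const_mul]
      rfl
    have h2 : N2sq p e ≤ M := hc₂max hes
    have h3 : m ≤ N1 p e := hc₁min hes
    have hN1e : 0 ≤ N1 p e := le_trans hm.le h3
    rw [hL, hR]
    have key : t^2 * N2sq p e ≤ t^2 * M := by nlinarith
    have key2 : (M+1)/m^2 * (t * m)^2 ≤ (M+1)/m^2 * (t * N1 p e)^2 := by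
      apply mul_le_mul_of_nonneg_left _ (by positivity)
      have h4 : t * m ≤ t * N1 p e := mul_le_mul_of_nonneg_left h3 ht.le
      have h5 : 0 ≤ t * m := by positivity
      nlinarith
    have key3 : (M+1)/m^2 * (t * m)^2 = (M+1) * t^2 := by
      field_simp
    nlinarith

lemma inv_ineq_general (p : ℕ) {C : ℝ}
    (h01 : ∀ v : Polynomial ℝ, v.natDegree ≤ p →
      (∫ x in (0:ℝ)..1, (v.eval x)^2) ≤ C * (∫ x in (0:ℝ)..1, |v.eval x|)^2)
    {α β : ℝ} (hαβ : α < β) (v : Polynomial ℝ) (hv : v.natDegree ≤ p) :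
    (∫ x in α..β, (v.eval x)^2) ≤ C / (β - α) * (∫ x in α..β, |v.eval x|)^2 := by
  set L := β - α with hL
  have hL0 : 0 < L := by rw [hL]; linarith
  set w := v.comp (Polynomial.C L * Polynomial.X + Polynomial.C α) with hw
  have hwdeg : w.natDegree ≤ p := by
    refine le_trans Polynomial.natDegree_comp_le ?_
    calc v.natDegree * (Polynomial.C L * Polynomial.X + Polynomial.C α).natDegree
        ≤ v.natDegree * 1 := Nat.mul_le_mul_left _ Polynomial.natDegree_linear_le
      _ ≤ p := by simpa using hv
  have hweval : ∀ t : ℝ, w.eval t = v.eval (L * t + α) := fun t => by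
    rw [hw, Polynomial.eval_comp]; simp
  have cov : ∀ f : ℝ → ℝ, (∫ x in (0:ℝ)..1, f (L * x + α)) = L⁻¹ * ∫ x in α..β, f x := by
    intro f
    rw [intervalIntegral.integral_comp_mul_add f hL0.ne' α]
    have e1 : L * 0 + α = α := by ring
    have e2 : L * 1 + α = β := by rw [hL]; ring
    rw [e1, e2, smul_eq_mul]
  have I1 : L * (∫ t in (0:ℝ)..1, (w.eval t)^2) = ∫ x in α..β, (v.eval x)^2 := by
    simp_rw [hweval]
    rw [cov (fun x => (v.eval x)^2)]
    field_simp
  have I2 : L * (∫ t in (0:ℝ)..1, |w.eval t|) = ∫ x in α..β, |v.eval x| := by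
    simp_rw [hweval]
    rw [cov (fun x => |v.eval x|)]
    field_simp
  calc (∫ x in α..β, (v.eval x)^2) = L * ∫ t in (0:ℝ)..1, (w.eval t)^2 := I1.symm
    _ ≤ L * (C * (∫ t in (0:ℝ)..1, |w.eval t|)^2) :=
        mul_le_mul_of_nonneg_left (h01 w hwdeg) hL0.le
    _ = C / L * (L * ∫ t in (0:ℝ)..1, |w.eval t|)^2 := by field_simp
    _ = C / L * (∫ x in α..β, |v.eval x|)^2 := by rw [I2]

lemma poly_taylor_eval (p : ℕ) (s : Polynomial ℝ) (hs : s.natDegree ≤ p) (xi y : ℝ) :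
    s.eval (xi + y) = ∑ k ∈ Finset.range (p+1),
      ((Polynomial.derivative^[k] s).eval xi / (Nat.factorial k)) * y ^ k := by
  have h1 : s.eval (xi + y) = (Polynomial.taylor xi s).eval y := by
    rw [Polynomial.taylor_apply, Polynomial.eval_comp]
    simp [add_comm]
  rw [h1, Polynomial.eval_eq_sum_range' (n := p+1)
    (by rw [Polynomial.natDegree_taylor]; omega)]
  refine Finset.sum_congr rfl fun k hk => ?_
  rw [Polynomial.taylor_coeff]
  congr 1
  have h2 : (k.factorial • Polynomial.hasseDeriv k) s = Polynomial.derivative^[k] s := by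
    rw [← Polynomial.factorial_smul_hasseDeriv]
  have h3 : (k.factorial : ℝ) * (Polynomial.hasseDeriv k s).eval xi =
      (Polynomial.derivative^[k] s).eval xi := by
    rw [← h2]
    simp [Polynomial.eval_smul, nsmul_eq_mul]
  field_simp
  linarith [h3]

lemma taylor_integral_remainder' {A B : ℝ} (hAB : A < B) (p : ℕ) {u : ℝ → ℝ}
    (hu : ContDiffOn ℝ (p+1 : ℕ) u (Set.Icc A B)) {c x : ℝ}
    (hc : c ∈ Set.Icc A B) (hx : x ∈ Set.Icc A B) :
    u x - taylorWithinEval u p (Set.Icc A B) c x =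
      ∫ t in c..x, ((x - t)^p / (Nat.factorial p)) *
        iteratedDerivWithin (p+1) u (Set.Icc A B) t := by
  set s := Set.Icc A B with hsdef
  have hs : UniqueDiffOn ℝ s := uniqueDiffOn_Icc hAB
  set D : ℝ → ℝ := iteratedDerivWithin (p+1) u s with hD
  set F : ℝ → ℝ := fun t => taylorWithinEval u p s t x with hF
  set g : ℝ → ℝ := fun t => ((x - t)^p / (Nat.factorial p)) * D t with hg
  have hDcont : ContinuousOn D s :=
    hu.continuousOn_iteratedDerivWithin (by exact_mod_cast le_rfl) hs
  have hgcont : ContinuousOn g s := by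
    apply ContinuousOn.mul _ hDcont
    exact (Continuous.continuousOn (by continuity))
  have hFcont : ContinuousOn F s :=
    continuousOn_taylorWithinEval hs (hu.of_le (by exact_mod_cast Nat.le_succ p))
  have hder : ∀ t, t ∈ s → t < B → HasDerivWithinAt F (g t) (Set.Ioi t) t := by
    intro t hts htB
    have hf' : DifferentiableWithinAt ℝ (iteratedDerivWithin p u s) s t :=
      (hu.differentiableOn_iteratedDerivWithin (by exact_mod_cast Nat.lt_succ_self p) hs) t hts
    have h1 := hasDerivWithinAt_taylorWithinEval (n := p) (x := x) hs
      self_mem_nhdsWithin hts subset_rfl (hu.of_le (by exact_mod_cast Nat.le_succ p)) hf'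
    have h2 : s ∈ nhdsWithin t (Set.Ioi t) := by
      refine Filter.mem_of_superset (Ioc_mem_nhdsGT htB) ?_
      exact fun y hy => ⟨le_trans hts.1 hy.1.le, hy.2⟩
    have h3 := h1.mono_of_mem_nhdsWithin h2
    have h4 : (((p.factorial : ℝ))⁻¹ * (x - t)^p) • D t = g t := by
      rw [hg]
      simp only [smul_eq_mul]
      ring
    rwa [h4] at h3
  have huIcc : Set.uIcc c x ⊆ s := Set.uIcc_subset_Icc hc hx
  have hgint : ∀ α β : ℝ, α ∈ s → β ∈ s → IntervalIntegrable g volume α β := by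
    intro α β hα hβ
    exact (hgcont.mono (Set.uIcc_subset_Icc hα hβ)).intervalIntegrable
  have key : ∀ c' x' : ℝ, c' ∈ s → x' ∈ s → c' ≤ x' →
      (∫ t in c'..x', g t) = F x' - F c' := by
    intro c' x' hc' hx' hle
    refine intervalIntegral.integral_eq_sub_of_hasDeriv_right_of_le hle
      (hFcont.mono (Set.Icc_subset_Icc hc'.1 hx'.2)) ?_ (hgint c' x' hc' hx')
    intro t ht
    exact hder t ⟨le_trans hc'.1 ht.1.le, le_trans ht.2.le hx'.2⟩ (lt_of_lt_of_le ht.2 hx'.2)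
  have hFx : F x = u x := taylorWithinEval_self u p s x
  rcases le_total c x with hcx | hxc
  · show u x - F c = ∫ t in c..x, g t
    rw [key c x hc hx hcx, hFx]
  · have h5 := key x c hx hc hxc
    have h6 : (∫ t in c..x, g t) = -(∫ t in x..c, g t) := by
      rw [intervalIntegral.integral_symm]
    show u x - F c = ∫ t in c..x, g t
    rw [h6, h5, hFx]
    ring

lemma taylor_pointwise_bound {A B : ℝ} (hAB : A < B) (p : ℕ) {u : ℝ → ℝ}
    (hu : ContDiffOn ℝ (p+1 : ℕ) u (Set.Icc A B)) {c x δ : ℝ} (hδ : 0 < δ)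
    (hc1 : A ≤ c - δ) (hc2 : c + δ ≤ B) (hxc : |x - c| ≤ δ) :
    |u x - taylorWithinEval u p (Set.Icc A B) c x| ≤
      δ^p / (Nat.factorial p) *
        ∫ t in (c-δ)..(c+δ), |iteratedDerivWithin (p+1) u (Set.Icc A B) t| := by
  set s := Set.Icc A B with hsdef
  have hs : UniqueDiffOn ℝ s := uniqueDiffOn_Icc hAB
  set D : ℝ → ℝ := iteratedDerivWithin (p+1) u s with hD
  have hDcont : ContinuousOn D s :=
    hu.continuousOn_iteratedDerivWithin (by exact_mod_cast le_rfl) hs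
  obtain ⟨hxc1, hxc2⟩ := abs_le.1 hxc
  have hcs : c ∈ s := ⟨by linarith, by linarith⟩
  have hxs : x ∈ s := ⟨by linarith, by linarith⟩
  have hDint : ∀ α β : ℝ, α ∈ s → β ∈ s →
      IntervalIntegrable (fun t => |D t|) volume α β := by
    intro α β hα hβ
    exact ((hDcont.mono (Set.uIcc_subset_Icc hα hβ)).abs).intervalIntegrable
  have hmem : ∀ y : ℝ, c - δ ≤ y → y ≤ c + δ → y ∈ s := fun y h1 h2 =>
    ⟨by linarith, by linarith⟩
  set g : ℝ → ℝ := fun t => ((x - t)^p / (Nat.factorial p)) * D t with hg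
  have hgcont : ContinuousOn g s := by
    apply ContinuousOn.mul _ hDcont
    exact Continuous.continuousOn (by continuity)
  rw [taylor_integral_remainder' hAB p hu hcs hxs]
  have hfac : (0:ℝ) < (Nat.factorial p : ℝ) := Nat.cast_pos.2 (Nat.factorial_pos p)
  have habs1 : abs (∫ t in c..x, g t) ≤ abs (∫ t in c..x, |g t|) := by
    have h := intervalIntegral.norm_integral_le_abs_integral_norm (μ := volume) (f := g)
      (a := c) (b := x)
    simp only [Real.norm_eq_abs] at h
    exact h
  have hptw : ∀ t ∈ Set.uIcc c x, |g t| ≤ δ^p / (Nat.factorial p) * |D t| := by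
    intro t ht
    have hxt : |x - t| ≤ δ := by
      rw [abs_le]
      rcases Set.mem_uIcc.1 ht with h | h
      · constructor <;> [linarith [h.2]; linarith [h.1]]
      · constructor <;> [linarith [h.2]; linarith [h.1]]
    have h1 : |x - t|^p ≤ δ^p := pow_le_pow_left₀ (abs_nonneg _) hxt p
    rw [hg]
    simp only [abs_mul, abs_div, abs_pow, abs_abs]
    rw [abs_of_pos hfac]
    apply mul_le_mul_of_nonneg_right _ (abs_nonneg _)
    exact div_le_div_of_nonneg_right h1 hfac.le
  have hκ : (0:ℝ) ≤ δ^p / (Nat.factorial p) := by positivity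
  have hmono : ∀ α β : ℝ, c - δ ≤ α → α ≤ β → β ≤ c + δ →
      (∫ t in α..β, |D t|) ≤ ∫ t in (c-δ)..(c+δ), |D t| := by
    intro α β h1 h2 h3
    have m1 : (c - δ) ∈ s := hmem _ le_rfl (by linarith)
    have m2 : α ∈ s := hmem _ h1 (by linarith)
    have m3 : β ∈ s := hmem _ (by linarith) h3
    have m4 : (c + δ) ∈ s := hmem _ (by linarith) le_rfl
    have i1 := hDint (c-δ) α m1 m2
    have i2 := hDint α β m2 m3
    have i3 := hDint β (c+δ) m3 m4
    have e1 := intervalIntegral.integral_add_adjacent_intervals i1 i2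
    have i12 := hDint (c-δ) β m1 m3
    have e2 := intervalIntegral.integral_add_adjacent_intervals i12 i3
    have n1 : 0 ≤ ∫ t in (c-δ)..α, |D t| :=
      intervalIntegral.integral_nonneg h1 fun t _ => abs_nonneg _
    have n3 : 0 ≤ ∫ t in β..(c+δ), |D t| :=
      intervalIntegral.integral_nonneg h3 fun t _ => abs_nonneg _
    linarith
  have final : abs (∫ t in c..x, |g t|) ≤ δ^p / (Nat.factorial p) *
      ∫ t in (c-δ)..(c+δ), |D t| := by
    have hgabsint : ∀ α β : ℝ, α ∈ s → β ∈ s →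
        IntervalIntegrable (fun t => |g t|) volume α β := fun α β hα hβ =>
      ((hgcont.mono (Set.uIcc_subset_Icc hα hβ)).abs).intervalIntegrable
    have hDκint : ∀ α β : ℝ, α ∈ s → β ∈ s →
        IntervalIntegrable (fun t => δ^p / (Nat.factorial p) * |D t|) volume α β :=
      fun α β hα hβ => (hDint α β hα hβ).const_mul _
    rcases le_total c x with hcx | hxc
    · have habs : abs (∫ t in c..x, |g t|) = ∫ t in c..x, |g t| :=
        abs_of_nonneg (intervalIntegral.integral_nonneg hcx fun t _ => abs_nonneg _)
      rw [habs]
      have h1 : (∫ t in c..x, |g t|) ≤ ∫ t in c..x, δ^p / (Nat.factorial p) * |D t| := by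
        refine intervalIntegral.integral_mono_on hcx (hgabsint c x hcs hxs)
          (hDκint c x hcs hxs) fun t ht => ?_
        exact hptw t (by rw [Set.uIcc_of_le hcx]; exact ht)
      have h2 : (∫ t in c..x, δ^p / (Nat.factorial p) * |D t|)
          = δ^p / (Nat.factorial p) * ∫ t in c..x, |D t| :=
        intervalIntegral.integral_const_mul _ _
      have h3 : (∫ t in c..x, |D t|) ≤ ∫ t in (c-δ)..(c+δ), |D t| :=
        hmono c x (by linarith) hcx (by linarith)
      calc (∫ t in c..x, |g t|) ≤ δ^p / (Nat.factorial p) * ∫ t in c..x, |D t| := by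
            rw [← h2]; exact h1
        _ ≤ δ^p / (Nat.factorial p) * ∫ t in (c-δ)..(c+δ), |D t| :=
            mul_le_mul_of_nonneg_left h3 hκ
    · have hsym : (∫ t in c..x, |g t|) = -(∫ t in x..c, |g t|) := by
        rw [intervalIntegral.integral_symm]
      have habs : abs (∫ t in c..x, |g t|) = ∫ t in x..c, |g t| := by
        rw [hsym, abs_neg]
        exact abs_of_nonneg (intervalIntegral.integral_nonneg hxc fun t _ => abs_nonneg _)
      rw [habs]
      have h1 : (∫ t in x..c, |g t|) ≤ ∫ t in x..c, δ^p / (Nat.factorial p) * |D t| := by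
        refine intervalIntegral.integral_mono_on hxc (hgabsint x c hxs hcs)
          (hDκint x c hxs hcs) fun t ht => ?_
        refine hptw t ?_
        rw [Set.uIcc_comm, Set.uIcc_of_le hxc]
        exact ht
      have h2 : (∫ t in x..c, δ^p / (Nat.factorial p) * |D t|)
          = δ^p / (Nat.factorial p) * ∫ t in x..c, |D t| :=
        intervalIntegral.integral_const_mul _ _
      have h3 : (∫ t in x..c, |D t|) ≤ ∫ t in (c-δ)..(c+δ), |D t| :=
        hmono x c (by linarith) hxc (by linarith)
      calc (∫ t in x..c, |g t|) ≤ δ^p / (Nat.factorial p) * ∫ t in x..c, |D t| := by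
            rw [← h2]; exact h1
        _ ≤ δ^p / (Nat.factorial p) * ∫ t in (c-δ)..(c+δ), |D t| :=
            mul_le_mul_of_nonneg_left h3 hκ
  exact le_trans habs1 final

noncomputable def taylorPoly (u : ℝ → ℝ) (p : ℕ) (s : Set ℝ) (c : ℝ) : Polynomial ℝ :=
  ∑ k ∈ Finset.range (p+1),
    Polynomial.C (iteratedDerivWithin k u s c / (Nat.factorial k)) *
      (Polynomial.X - Polynomial.C c)^k

lemma taylorPoly_natDegree_le (u : ℝ → ℝ) (p : ℕ) (s : Set ℝ) (c : ℝ) :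
    (taylorPoly u p s c).natDegree ≤ p := by
  refine Polynomial.natDegree_sum_le_of_forall_le _ _ fun k hk => ?_
  refine le_trans (Polynomial.natDegree_C_mul_le _ _) ?_
  refine le_trans (Polynomial.natDegree_pow_le) ?_
  have h1 : (Polynomial.X - Polynomial.C c : Polynomial ℝ).natDegree = 1 :=
    Polynomial.natDegree_X_sub_C c
  rw [h1, mul_one]
  exact Nat.lt_succ_iff.1 (Finset.mem_range.1 hk)

lemma taylorPoly_eval (u : ℝ → ℝ) (p : ℕ) (s : Set ℝ) (c x : ℝ) :
    (taylorPoly u p s c).eval x = taylorWithinEval u p s c x := by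
  rw [taylorPoly, Polynomial.eval_finset_sum, taylor_within_apply]
  refine Finset.sum_congr rfl fun k _ => ?_
  simp only [Polynomial.eval_mul, Polynomial.eval_C, Polynomial.eval_pow,
    Polynomial.eval_sub, Polynomial.eval_X, smul_eq_mul]
  ring

lemma ae_eq_on_Ioc {α β : ℝ} {f g : ℝ → ℝ} (hfg : ∀ x ∈ Set.Ioo α β, f x = g x) :
    f =ᵐ[volume.restrict (Set.Ioc α β)] g := by
  rw [Filter.EventuallyEq, MeasureTheory.ae_restrict_iff' measurableSet_Ioc]
  have h1 : ∀ᵐ x : ℝ, x ≠ β := by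
    simpa using (Set.countable_singleton β).ae_notMem volume
  filter_upwards [h1] with x hx hmem
  exact hfg x ⟨hmem.1, lt_of_le_of_ne hmem.2 hx⟩

end Helpers


section QLemmas
open intervalIntegral

lemma Qform_bddBelow (p : ℕ) (d : Fin (p+1) → ℝ) :
    BddBelow {q : ℝ | ∃ v : Polynomial ℝ, v.natDegree ≤ p ∧ q = Qerr p d v} := by
  refine ⟨0, fun x hx => ?_⟩
  obtain ⟨v, _, rfl⟩ := hx
  have h1 : 0 ≤ ∫ ξ in (-(1:ℝ)/2)..0, (v.eval ξ + fd p d ξ)^2 :=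
    intervalIntegral.integral_nonneg (by norm_num) fun x _ => sq_nonneg _
  have h2 : 0 ≤ ∫ ξ in (0:ℝ)..(1/2), (v.eval ξ - fd p d ξ)^2 :=
    intervalIntegral.integral_nonneg (by norm_num) fun x _ => sq_nonneg _
  unfold Qerr
  linarith

lemma Qform_le (p : ℕ) {h : ℝ} (hh : 0 < h) (xi : ℝ) (ql qr P : Polynomial ℝ)
    (hql : ql.natDegree ≤ p) (hqr : qr.natDegree ≤ p) (hP : P.natDegree ≤ p) :
    Qform p (Dvec p h xi ql qr) ≤
      (∫ ξ in (-(1:ℝ)/2)..0, ((ql - P).eval (xi + h*ξ) / h^(p+1))^2) +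
      (∫ ξ in (0:ℝ)..(1/2), ((qr - P).eval (xi + h*ξ) / h^(p+1))^2) := by
  have hhne : h ≠ 0 := hh.ne'
  have hhp : (h^(p+1)) ≠ 0 := pow_ne_zero _ hhne
  set A : Polynomial ℝ := Polynomial.C xi + Polynomial.C h * Polynomial.X with hA
  have hAdeg : A.natDegree ≤ 1 := by
    rw [hA, add_comm]
    exact Polynomial.natDegree_linear_le
  have hAev : ∀ ξ : ℝ, A.eval ξ = xi + h * ξ := fun ξ => by rw [hA]; simp
  set Gl : Polynomial ℝ := Polynomial.C ((h^(p+1))⁻¹) * ((ql - P).comp A) with hGl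
  set Gr : Polynomial ℝ := Polynomial.C ((h^(p+1))⁻¹) * ((qr - P).comp A) with hGr
  have compdeg : ∀ s : Polynomial ℝ, s.natDegree ≤ p →
      (Polynomial.C ((h^(p+1))⁻¹) * ((s - P).comp A)).natDegree ≤ p := by
    intro s hs
    refine le_trans (Polynomial.natDegree_C_mul_le _ _) ?_
    refine le_trans Polynomial.natDegree_comp_le ?_
    calc (s - P).natDegree * A.natDegree ≤ (s - P).natDegree * 1 :=
          Nat.mul_le_mul_left _ hAdeg
      _ ≤ p := by
          simpa using le_trans (Polynomial.natDegree_sub_le s P) (by simp [hs, hP])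
  have hGldeg : Gl.natDegree ≤ p := compdeg ql hql
  have hGrdeg : Gr.natDegree ≤ p := compdeg qr hqr
  have evGl : ∀ ξ : ℝ, Gl.eval ξ = (ql - P).eval (xi + h*ξ) / h^(p+1) := fun ξ => by
    rw [hGl]
    simp [Polynomial.eval_comp, hAev, div_eq_inv_mul]
  have evGr : ∀ ξ : ℝ, Gr.eval ξ = (qr - P).eval (xi + h*ξ) / h^(p+1) := fun ξ => by
    rw [hGr]
    simp [Polynomial.eval_comp, hAev, div_eq_inv_mul]
  set V : Polynomial ℝ := Polynomial.C (-(1/2) : ℝ) * (Gl + Gr) with hV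
  have hVdeg : V.natDegree ≤ p := by
    refine le_trans (Polynomial.natDegree_C_mul_le _ _) ?_
    exact le_trans (Polynomial.natDegree_add_le _ _) (by simp [hGldeg, hGrdeg])
  have hfd : ∀ ξ : ℝ, fd p (Dvec p h xi ql qr) ξ = (Gr.eval ξ - Gl.eval ξ)/2 := by
    intro ξ
    have hsub : Gr.eval ξ - Gl.eval ξ = (qr - ql).eval (xi + h*ξ) / h^(p+1) := by
      rw [evGr, evGl, div_sub_div_same]
      congr 1
      simp only [Polynomial.eval_sub]
      ring
    rw [hsub, poly_taylor_eval p (qr - ql)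
      (le_trans (Polynomial.natDegree_sub_le _ _) (by simp [hql, hqr])) xi (h*ξ)]
    unfold fd Dvec
    rw [Fin.sum_univ_eq_sum_range (fun j =>
      (((Polynomial.derivative^[j] qr).eval xi - (Polynomial.derivative^[j] ql).eval xi)
        / h^(p+1-j)) / (Nat.factorial j) * ξ ^ j) (p+1)]
    rw [Finset.sum_div, Finset.sum_div, Finset.mul_sum]
    refine Finset.sum_congr rfl fun j hj => ?_
    have hjp : j ≤ p := by
      have := Finset.mem_range.1 hj; omega
    have hpow : h^(p+1-j) * h^j = h^(p+1) := by
      rw [← pow_add]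
      congr 1
      omega
    have hfac : ((Nat.factorial j : ℝ)) ≠ 0 :=
      (Nat.cast_pos.2 (Nat.factorial_pos j)).ne'
    have hder : (Polynomial.derivative^[j] (qr - ql)).eval xi =
        (Polynomial.derivative^[j] qr).eval xi - (Polynomial.derivative^[j] ql).eval xi := by
      rw [Polynomial.iterate_derivative_sub, Polynomial.eval_sub]
    rw [hder, mul_pow]
    have hhpj : h^(p+1-j) ≠ 0 := pow_ne_zero _ hhne
    field_simp
    rw [← hpow]
    ring
  have hQerr : Qerr p (Dvec p h xi ql qr) V =
      (∫ ξ in (-(1:ℝ)/2)..0, ((ql - P).eval (xi + h*ξ) / h^(p+1))^2) +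
      (∫ ξ in (0:ℝ)..(1/2), ((qr - P).eval (xi + h*ξ) / h^(p+1))^2) := by
    unfold Qerr
    congr 1
    · refine intervalIntegral.integral_congr fun ξ _ => ?_
      rw [hfd, hV]
      simp only [Polynomial.eval_mul, Polynomial.eval_C, Polynomial.eval_add]
      rw [show -(1/2) * (Gl.eval ξ + Gr.eval ξ) + (Gr.eval ξ - Gl.eval ξ)/2
          = -(Gl.eval ξ) from by ring, neg_sq, evGl]
    · refine intervalIntegral.integral_congr fun ξ _ => ?_
      rw [hfd, hV]
      simp only [Polynomial.eval_mul, Polynomial.eval_C, Polynomial.eval_add]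
      rw [show -(1/2) * (Gl.eval ξ + Gr.eval ξ) - (Gr.eval ξ - Gl.eval ξ)/2
          = -(Gr.eval ξ) from by ring, neg_sq, evGr]
  rw [← hQerr]
  exact csInf_le (Qform_bddBelow p _) ⟨V, hVdeg, rfl⟩

lemma key_estimate (p : ℕ) {C : ℝ} (hC : 0 < C)
    (h01 : ∀ v : Polynomial ℝ, v.natDegree ≤ p →
      (∫ x in (0:ℝ)..1, (v.eval x)^2) ≤ C * (∫ x in (0:ℝ)..1, |v.eval x|)^2)
    {h : ℝ} (hh : 0 < h) (xi : ℝ) (ql qr P : Polynomial ℝ)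
    (hql : ql.natDegree ≤ p) (hqr : qr.natDegree ≤ p) (hP : P.natDegree ≤ p) :
    h * Real.sqrt (Qform p (Dvec p h xi ql qr)) ≤
      Real.sqrt (2*C) * (((∫ x in (xi - h/2)..xi, |ql.eval x - P.eval x|) +
        ∫ x in xi..(xi + h/2), |qr.eval x - P.eval x|) / h^(p+1)) := by
  have hhne : h ≠ 0 := hh.ne'
  have hp1 : (0:ℝ) < h^(p+1) := pow_pos hh _
  set A : Polynomial ℝ := Polynomial.C xi + Polynomial.C h * Polynomial.X with hA
  have hAdeg : A.natDegree ≤ 1 := by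
    rw [hA, add_comm]; exact Polynomial.natDegree_linear_le
  have hAev : ∀ ξ : ℝ, A.eval ξ = xi + h * ξ := fun ξ => by rw [hA]; simp
  set Gl : Polynomial ℝ := Polynomial.C ((h^(p+1))⁻¹) * ((ql - P).comp A) with hGl
  set Gr : Polynomial ℝ := Polynomial.C ((h^(p+1))⁻¹) * ((qr - P).comp A) with hGr
  have compdeg : ∀ s : Polynomial ℝ, s.natDegree ≤ p →
      (Polynomial.C ((h^(p+1))⁻¹) * ((s - P).comp A)).natDegree ≤ p := by
    intro s hs
    refine le_trans (Polynomial.natDegree_C_mul_le _ _) ?_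
    refine le_trans Polynomial.natDegree_comp_le ?_
    calc (s - P).natDegree * A.natDegree ≤ (s - P).natDegree * 1 :=
          Nat.mul_le_mul_left _ hAdeg
      _ ≤ p := by
          simpa using le_trans (Polynomial.natDegree_sub_le s P) (by simp [hs, hP])
  have hGldeg : Gl.natDegree ≤ p := compdeg ql hql
  have hGrdeg : Gr.natDegree ≤ p := compdeg qr hqr
  have evGl : ∀ ξ : ℝ, Gl.eval ξ = (ql - P).eval (xi + h*ξ) / h^(p+1) := fun ξ => by
    rw [hGl]; simp [Polynomial.eval_comp, hAev, div_eq_inv_mul]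
  have evGr : ∀ ξ : ℝ, Gr.eval ξ = (qr - P).eval (xi + h*ξ) / h^(p+1) := fun ξ => by
    rw [hGr]; simp [Polynomial.eval_comp, hAev, div_eq_inv_mul]
  have hQ1 : Qform p (Dvec p h xi ql qr) ≤
      (∫ ξ in (-(1:ℝ)/2)..0, (Gl.eval ξ)^2) + (∫ ξ in (0:ℝ)..(1/2), (Gr.eval ξ)^2) := by
    refine le_trans (Qform_le p hh xi ql qr P hql hqr hP) (le_of_eq ?_)
    congr 1
    · exact intervalIntegral.integral_congr fun ξ _ => by rw [evGl]
    · exact intervalIntegral.integral_congr fun ξ _ => by rw [evGr]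
  have hinv_l := inv_ineq_general p h01 (show (-(1:ℝ)/2) < 0 by norm_num) Gl hGldeg
  have hinv_r := inv_ineq_general p h01 (show (0:ℝ) < 1/2 by norm_num) Gr hGrdeg
  have hconst_l : C / ((0:ℝ) - (-(1:ℝ)/2)) = 2*C := by ring
  have hconst_r : C / ((1:ℝ)/2 - 0) = 2*C := by ring
  rw [hconst_l] at hinv_l
  rw [hconst_r] at hinv_r
  set al := ∫ ξ in (-(1:ℝ)/2)..0, |Gl.eval ξ| with hal_def
  set ar := ∫ ξ in (0:ℝ)..(1/2), |Gr.eval ξ| with har_def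
  have hal0 : 0 ≤ al :=
    intervalIntegral.integral_nonneg (by norm_num) fun x _ => abs_nonneg _
  have har0 : 0 ≤ ar :=
    intervalIntegral.integral_nonneg (by norm_num) fun x _ => abs_nonneg _
  have hQ2 : Qform p (Dvec p h xi ql qr) ≤ 2*C*(al+ar)^2 := by
    have := hQ1
    nlinarith [mul_nonneg hal0 har0, hC]
  have hsqrt : Real.sqrt (Qform p (Dvec p h xi ql qr)) ≤ Real.sqrt (2*C) * (al + ar) := by
    calc Real.sqrt (Qform p (Dvec p h xi ql qr)) ≤ Real.sqrt (2*C*(al+ar)^2) :=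
          Real.sqrt_le_sqrt hQ2
      _ = Real.sqrt (2*C) * (al+ar) := by
          rw [Real.sqrt_mul (by positivity), Real.sqrt_sq (by positivity)]
  have hal : al = (∫ x in (xi - h/2)..xi, |ql.eval x - P.eval x|) / (h * h^(p+1)) := by
    have h1 : al = ∫ ξ in (-(1:ℝ)/2)..0,
        (fun x => |ql.eval x - P.eval x|) (h*ξ + xi) / h^(p+1) := by
      refine intervalIntegral.integral_congr fun ξ _ => ?_
      rw [evGl]
      simp only [Polynomial.eval_sub]
      rw [abs_div, abs_of_pos hp1, add_comm xi (h*ξ)]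
    rw [h1, intervalIntegral.integral_div,
      intervalIntegral.integral_comp_mul_add (fun x => |ql.eval x - P.eval x|) hhne xi]
    have e1 : h * (-(1:ℝ)/2) + xi = xi - h/2 := by ring
    have e2 : h * (0:ℝ) + xi = xi := by ring
    rw [e1, e2, smul_eq_mul]
    field_simp
  have har : ar = (∫ x in xi..(xi + h/2), |qr.eval x - P.eval x|) / (h * h^(p+1)) := by
    have h1 : ar = ∫ ξ in (0:ℝ)..(1/2),
        (fun x => |qr.eval x - P.eval x|) (h*ξ + xi) / h^(p+1) := by
      refine intervalIntegral.integral_congr fun ξ _ => ?_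
      rw [evGr]
      simp only [Polynomial.eval_sub]
      rw [abs_div, abs_of_pos hp1, add_comm xi (h*ξ)]
    rw [h1, intervalIntegral.integral_div,
      intervalIntegral.integral_comp_mul_add (fun x => |qr.eval x - P.eval x|) hhne xi]
    have e1 : h * (0:ℝ) + xi = xi := by ring
    have e2 : h * ((1:ℝ)/2) + xi = xi + h/2 := by ring
    rw [e1, e2, smul_eq_mul]
    field_simp
  calc h * Real.sqrt (Qform p (Dvec p h xi ql qr))
      ≤ h * (Real.sqrt (2*C) * (al + ar)) := mul_le_mul_of_nonneg_left hsqrt hh.le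
    _ = Real.sqrt (2*C) * (((∫ x in (xi - h/2)..xi, |ql.eval x - P.eval x|) +
        ∫ x in xi..(xi + h/2), |qr.eval x - P.eval x|) / h^(p+1)) := by
        rw [hal, har]
        field_simp

end QLemmas

set_option maxHeartbeats 2000000 in
/-- necessity of numerical `W^{p+1}_1`-smoothness: if
`‖u - u^R‖_{L¹} ≤ K h^{p+1}` then `Σᵢ h √(Q(Dᵢ)) ≤ (1/C₁₂)(K + C₁ |u|_{W^{p+1}_1})`. -/
theorem necessity_W1_smoothness (p : ℕ) :
    ∃ C₁ C₁₂ : ℝ, 0 < C₁ ∧ 0 < C₁₂ ∧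
      ∀ (a b : ℝ), a < b → ∀ N : ℕ, 0 < N → ∀ h : ℝ, h = (b - a) / N →
      ∀ u : ℝ → ℝ, ContDiffOn ℝ (p+1) u (Set.Icc a b) →
      ∀ (uR : ℝ → ℝ) (q : ℕ → Polynomial ℝ),
        (∀ i < N, (q i).natDegree ≤ p) →
        (∀ i < N, ∀ x ∈ Set.Ioo (a + i*h) (a + (i+1)*h), uR x = (q i).eval x) →
        ∀ K : ℝ, 0 ≤ K →
          (∫ x in a..b, |u x - uR x|) ≤ K * h^(p+1) →
          (∑ i ∈ Finset.Ico 1 N,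
              h * Real.sqrt (Qform p (Dvec p h (a + i*h) (q (i-1)) (q i)))) ≤
            (1 / C₁₂) *
              (K + C₁ * ∫ x in a..b,
                  |iteratedDerivWithin (p+1) u (Set.Icc a b) x|) := by
  obtain ⟨C, hC, h01⟩ := inv_ineq01 p
  refine ⟨1, 1/(Real.sqrt (2*C) + 1), one_pos, by positivity, ?_⟩
  intro a b hab N hN h hhdef u hu uR q hqdeg hqeq K hK hKb
  have hNR : (0:ℝ) < N := Nat.cast_pos.2 hN
  have hh : 0 < h := by rw [hhdef]; exact div_pos (by linarith) hNR
  have hNh : (N:ℝ) * h = b - a := by rw [hhdef]; field_simp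
  have hs : UniqueDiffOn ℝ (Set.Icc a b) := uniqueDiffOn_Icc hab
  have hu' : ContDiffOn ℝ (p+1 : ℕ) u (Set.Icc a b) := by exact_mod_cast hu
  have hucont : ContinuousOn u (Set.Icc a b) := hu'.continuousOn
  set D1 : ℝ → ℝ := iteratedDerivWithin (p+1) u (Set.Icc a b) with hD1
  have hD1cont : ContinuousOn D1 (Set.Icc a b) :=
    hu'.continuousOn_iteratedDerivWithin (by exact_mod_cast le_rfl) hs
  set F : ℝ → ℝ := fun x => |u x - uR x| with hF
  have hcell : ∀ i, i < N → IntegrableOn F (Set.Ioc (a + i*h) (a + (i+1)*h)) := by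
    intro i hi
    have hlo : a ≤ a + i*h := le_add_of_nonneg_right (by positivity)
    have hiN : ((i:ℝ)+1) ≤ N := by exact_mod_cast Nat.succ_le_of_lt hi
    have hhi : a + ((i:ℝ)+1)*h ≤ b := by nlinarith
    have hG : IntegrableOn (fun x => |u x - (q i).eval x|)
        (Set.Ioc (a + i*h) (a + (i+1)*h)) := by
      have hcont : ContinuousOn (fun x => |u x - (q i).eval x|)
          (Set.Icc (a + i*h) (a + ((i:ℝ)+1)*h)) :=
        ((hucont.mono (Set.Icc_subset_Icc hlo hhi)).sub
          ((q i).continuous.continuousOn)).abs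
      exact (hcont.integrableOn_Icc).mono_set Set.Ioc_subset_Icc_self
    refine hG.congr (ae_eq_on_Ioc fun x hx => ?_)
    show |u x - (q i).eval x| = |u x - uR x|
    rw [hqeq i hi x hx]
  have hcover : Set.Ioc a b ⊆ ⋃ i ∈ Finset.range N, Set.Ioc (a + i*h) (a + (i+1)*h) := by
    intro x hx
    have hy0 : 0 < (x - a)/h := div_pos (by linarith [hx.1]) hh
    have hyN : (x - a)/h ≤ N := by
      rw [div_le_iff₀ hh]
      nlinarith [hx.2]
    set m := ⌈(x - a)/h⌉₊ with hm
    have hm1 : 1 ≤ m := Nat.one_le_ceil_iff.2 hy0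
    have hmN : m ≤ N := Nat.ceil_le.2 hyN
    have hcast : ((m - 1 : ℕ) : ℝ) = (m:ℝ) - 1 := by
      rw [Nat.cast_sub hm1]; norm_num
    refine Set.mem_biUnion (show (m-1 : ℕ) ∈ Finset.range N from Finset.mem_range.2 (by omega)) ?_
    constructor
    · rw [hcast]
      have h1 : (m:ℝ) - 1 < (x - a)/h := by
        have h2 : ((m:ℕ):ℝ) < (x - a)/h + 1 := by
          exact_mod_cast Nat.ceil_lt_add_one (le_of_lt hy0)
        linarith
      have h3 : ((m:ℝ) - 1)*h < x - a := (lt_div_iff₀ hh).1 h1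
      linarith
    · have h2 : (x - a)/h ≤ (m:ℝ) := Nat.le_ceil _
      have h3 : x - a ≤ (m:ℝ)*h := by
        rw [div_le_iff₀ hh] at h2; linarith
      have h4 : (((m - 1:ℕ):ℝ) + 1) = (m:ℝ) := by rw [hcast]; ring
      rw [h4]
      linarith
  have hFIoc : IntegrableOn F (Set.Ioc a b) := by
    refine IntegrableOn.mono_set ?_ hcover
    exact (integrableOn_finset_iUnion).2 fun i hi => hcell i (Finset.mem_range.1 hi)
  have hD1abs_int : IntegrableOn (fun x => |D1 x|) (Set.Ioc a b) :=
    ((hD1cont.abs).integrableOn_Icc).mono_set Set.Ioc_subset_Icc_self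
  have hbounds : ∀ i : ℕ, 1 ≤ i → i < N →
      a ≤ a + i*h - h/2 ∧ a + i*h + h/2 ≤ b := by
    intro i h1 h2
    have hi1 : (1:ℝ) ≤ i := by exact_mod_cast h1
    have hi2 : (i:ℝ) + 1 ≤ N := by exact_mod_cast Nat.succ_le_of_lt h2
    constructor
    · nlinarith
    · nlinarith
  have hkey : ∀ i ∈ Finset.Ico 1 N,
      h * Real.sqrt (Qform p (Dvec p h (a + i*h) (q (i-1)) (q i))) ≤
        Real.sqrt (2*C) * (((∫ x in Set.Ioc (a + i*h - h/2) (a + i*h + h/2), F x) +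
          h^(p+1) * (1/(Nat.factorial p : ℝ)) *
            ∫ x in (a + i*h - h/2)..(a + i*h + h/2), |D1 x|) / h^(p+1)) := by
    intro i hi
    obtain ⟨hi1, hi2⟩ := Finset.mem_Ico.1 hi
    obtain ⟨hlo, hhi⟩ := hbounds i hi1 hi2
    set xi := a + i*h with hxi
    have hδ : 0 < h/2 := by linarith
    set Pi := taylorPoly u p (Set.Icc a b) xi with hPi
    have hPideg := taylorPoly_natDegree_le u p (Set.Icc a b) xi
    have k1 := key_estimate p hC h01 hh xi (q (i-1)) (q i) Pi
      (hqdeg (i-1) (by omega)) (hqdeg i hi2) hPideg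
    have hsubL : Set.uIcc (xi - h/2) xi ⊆ Set.Icc a b := by
      rw [Set.uIcc_of_le (by linarith)]
      exact Set.Icc_subset_Icc (by linarith) (by linarith)
    have hsubR : Set.uIcc xi (xi + h/2) ⊆ Set.Icc a b := by
      rw [Set.uIcc_of_le (by linarith)]
      exact Set.Icc_subset_Icc (by linarith) (by linarith)
    have hcontU : ∀ r : Polynomial ℝ,
        ContinuousOn (fun x => |u x - r.eval x|) (Set.Icc a b) := fun r =>
      (hucont.sub r.continuous.continuousOn).abs
    have hII : ∀ (f : ℝ → ℝ), ContinuousOn f (Set.Icc a b) → ∀ α β : ℝ,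
        Set.uIcc α β ⊆ Set.Icc a b → IntervalIntegrable f volume α β :=
      fun f hf α β hsub => (hf.mono hsub).intervalIntegrable
    have hcontQL : ContinuousOn (fun x => |(q (i-1)).eval x - Pi.eval x|) (Set.Icc a b) :=
      (((q (i-1)).continuous.sub Pi.continuous).abs).continuousOn
    have hcontQR : ContinuousOn (fun x => |(q i).eval x - Pi.eval x|) (Set.Icc a b) :=
      (((q i).continuous.sub Pi.continuous).abs).continuousOn
    have htriL : (∫ x in (xi - h/2)..xi, |(q (i-1)).eval x - Pi.eval x|) ≤
        (∫ x in (xi - h/2)..xi, |u x - (q (i-1)).eval x|) +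
        ∫ x in (xi - h/2)..xi, |u x - Pi.eval x| := by
      rw [← intervalIntegral.integral_add (hII _ (hcontU (q (i-1))) _ _ hsubL)
        (hII _ (hcontU Pi) _ _ hsubL)]
      refine intervalIntegral.integral_mono_on (by linarith)
        (hII _ hcontQL _ _ hsubL)
        ((hII _ (hcontU _) _ _ hsubL).add (hII _ (hcontU Pi) _ _ hsubL)) fun x hx => ?_
      have ht := abs_sub_le ((q (i-1)).eval x) (u x) (Pi.eval x)
      rw [abs_sub_comm ((q (i-1)).eval x) (u x)] at ht
      linarith
    have htriR : (∫ x in xi..(xi + h/2), |(q i).eval x - Pi.eval x|) ≤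
        (∫ x in xi..(xi + h/2), |u x - (q i).eval x|) +
        ∫ x in xi..(xi + h/2), |u x - Pi.eval x| := by
      rw [← intervalIntegral.integral_add (hII _ (hcontU (q i)) _ _ hsubR)
        (hII _ (hcontU Pi) _ _ hsubR)]
      refine intervalIntegral.integral_mono_on (by linarith)
        (hII _ hcontQR _ _ hsubR)
        ((hII _ (hcontU _) _ _ hsubR).add (hII _ (hcontU Pi) _ _ hsubR)) fun x hx => ?_
      have ht := abs_sub_le ((q i).eval x) (u x) (Pi.eval x)
      rw [abs_sub_comm ((q i).eval x) (u x)] at ht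
      linarith
    have hEl : (∫ x in (xi - h/2)..xi, |u x - (q (i-1)).eval x|)
        = ∫ x in Set.Ioc (xi - h/2) xi, F x := by
      rw [intervalIntegral.integral_of_le (by linarith)]
      refine MeasureTheory.integral_congr_ae (ae_eq_on_Ioc fun x hx => ?_)
      have hc1 : ((i - 1 : ℕ):ℝ) = (i:ℝ) - 1 := by
        rw [Nat.cast_sub hi1]; norm_num
      have hx' : x ∈ Set.Ioo (a + ((i-1:ℕ):ℝ)*h) (a + (((i-1:ℕ):ℝ)+1)*h) := by
        refine ⟨?_, ?_⟩
        · rw [hc1]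
          have := hx.1
          rw [hxi] at this
          nlinarith
        · rw [hc1]
          have := hx.2
          rw [hxi] at this
          nlinarith
      show |u x - (q (i-1)).eval x| = |u x - uR x|
      rw [hqeq (i-1) (by omega) x hx']
    have hEr : (∫ x in xi..(xi + h/2), |u x - (q i).eval x|)
        = ∫ x in Set.Ioc xi (xi + h/2), F x := by
      rw [intervalIntegral.integral_of_le (by linarith)]
      refine MeasureTheory.integral_congr_ae (ae_eq_on_Ioc fun x hx => ?_)
      have hx' : x ∈ Set.Ioo (a + (i:ℝ)*h) (a + ((i:ℝ)+1)*h) := by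
        refine ⟨?_, ?_⟩
        · have := hx.1
          rw [hxi] at this
          nlinarith
        · have := hx.2
          rw [hxi] at this
          nlinarith
      show |u x - (q i).eval x| = |u x - uR x|
      rw [hqeq i hi2 x hx']
    have hIocL : Set.Ioc (xi - h/2) xi ⊆ Set.Ioc a b :=
      Set.Ioc_subset_Ioc (by linarith) (by linarith)
    have hIocR : Set.Ioc xi (xi + h/2) ⊆ Set.Ioc a b :=
      Set.Ioc_subset_Ioc (by linarith) (by linarith)
    have hBsplit : (∫ x in Set.Ioc (xi - h/2) (xi + h/2), F x) =
        (∫ x in Set.Ioc (xi - h/2) xi, F x) + ∫ x in Set.Ioc xi (xi + h/2), F x := by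
      rw [← Set.Ioc_union_Ioc_eq_Ioc (by linarith : xi - h/2 ≤ xi)
        (by linarith : xi ≤ xi + h/2)]
      exact MeasureTheory.setIntegral_union (Set.Ioc_disjoint_Ioc_of_le le_rfl) measurableSet_Ioc
        (hFIoc.mono_set hIocL) (hFIoc.mono_set hIocR)
    have hTnn : 0 ≤ ∫ x in (xi - h/2)..(xi + h/2), |D1 x| :=
      intervalIntegral.integral_nonneg (by linarith) fun x _ => abs_nonneg _
    have hpt : ∀ x ∈ Set.Icc (xi - h/2) (xi + h/2),
        |u x - Pi.eval x| ≤ (h/2)^p / (Nat.factorial p : ℝ) *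
          ∫ t in (xi - h/2)..(xi + h/2), |D1 t| := by
      intro x hx
      rw [hPi, taylorPoly_eval]
      exact taylor_pointwise_bound hab p hu' hδ hlo hhi
        (abs_le.2 ⟨by linarith [hx.1], by linarith [hx.2]⟩)
    have hFlbound : (∫ x in (xi - h/2)..xi, |u x - Pi.eval x|) ≤
        (h/2) * ((h/2)^p / (Nat.factorial p : ℝ) *
          ∫ t in (xi - h/2)..(xi + h/2), |D1 t|) := by
      have h1 : (∫ x in (xi - h/2)..xi, |u x - Pi.eval x|) ≤
          ∫ _x in (xi - h/2)..xi, ((h/2)^p / (Nat.factorial p : ℝ) *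
            ∫ t in (xi - h/2)..(xi + h/2), |D1 t|) :=
        intervalIntegral.integral_mono_on (by linarith) (hII _ (hcontU Pi) _ _ hsubL)
          intervalIntegrable_const fun x hx => hpt x ⟨by linarith [hx.1], by linarith [hx.2]⟩
      have h2 : (∫ _x in (xi - h/2)..xi, ((h/2)^p / (Nat.factorial p : ℝ) *
          ∫ t in (xi - h/2)..(xi + h/2), |D1 t|)) =
          (h/2) * ((h/2)^p / (Nat.factorial p : ℝ) *
            ∫ t in (xi - h/2)..(xi + h/2), |D1 t|) := by
        rw [intervalIntegral.integral_const, smul_eq_mul]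
        ring_nf
      rw [h2] at h1
      exact h1
    have hFrbound : (∫ x in xi..(xi + h/2), |u x - Pi.eval x|) ≤
        (h/2) * ((h/2)^p / (Nat.factorial p : ℝ) *
          ∫ t in (xi - h/2)..(xi + h/2), |D1 t|) := by
      have h1 : (∫ x in xi..(xi + h/2), |u x - Pi.eval x|) ≤
          ∫ _x in xi..(xi + h/2), ((h/2)^p / (Nat.factorial p : ℝ) *
            ∫ t in (xi - h/2)..(xi + h/2), |D1 t|) :=
        intervalIntegral.integral_mono_on (by linarith) (hII _ (hcontU Pi) _ _ hsubR)
          intervalIntegrable_const fun x hx => hpt x ⟨by linarith [hx.1], by linarith [hx.2]⟩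
      have h2 : (∫ _x in xi..(xi + h/2), ((h/2)^p / (Nat.factorial p : ℝ) *
          ∫ t in (xi - h/2)..(xi + h/2), |D1 t|)) =
          (h/2) * ((h/2)^p / (Nat.factorial p : ℝ) *
            ∫ t in (xi - h/2)..(xi + h/2), |D1 t|) := by
        rw [intervalIntegral.integral_const, smul_eq_mul]
        ring_nf
      rw [h2] at h1
      exact h1
    have hFsum : (∫ x in (xi - h/2)..xi, |u x - Pi.eval x|) +
        (∫ x in xi..(xi + h/2), |u x - Pi.eval x|) ≤
        h^(p+1) * (1/(Nat.factorial p : ℝ)) *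
          ∫ t in (xi - h/2)..(xi + h/2), |D1 t| := by
      have hpow : (h/2)^p ≤ h^p := pow_le_pow_left₀ (by linarith) (by linarith) p
      have hfacpos : (0:ℝ) < (Nat.factorial p : ℝ) := Nat.cast_pos.2 (Nat.factorial_pos p)
      have hc2' : h * ((h/2)^p / (Nat.factorial p : ℝ) *
          ∫ t in (xi - h/2)..(xi + h/2), |D1 t|) ≤
          h^(p+1) * (1/(Nat.factorial p : ℝ)) *
            ∫ t in (xi - h/2)..(xi + h/2), |D1 t| := by
        calc h * ((h/2)^p / (Nat.factorial p : ℝ) *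
              ∫ t in (xi - h/2)..(xi + h/2), |D1 t|)
            = (h * (h/2)^p / (Nat.factorial p : ℝ)) *
              ∫ t in (xi - h/2)..(xi + h/2), |D1 t| := by ring
          _ ≤ (h * h^p / (Nat.factorial p : ℝ)) *
              ∫ t in (xi - h/2)..(xi + h/2), |D1 t| := by
              apply mul_le_mul_of_nonneg_right _ hTnn
              apply div_le_div_of_nonneg_right _ hfacpos.le
              exact mul_le_mul_of_nonneg_left hpow hh.le
          _ = h^(p+1) * (1/(Nat.factorial p : ℝ)) *
              ∫ t in (xi - h/2)..(xi + h/2), |D1 t| := by rw [pow_succ]; ring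
      linarith
    refine le_trans k1 ?_
    apply mul_le_mul_of_nonneg_left _ (Real.sqrt_nonneg _)
    apply div_le_div_of_nonneg_right _ (pow_pos hh (p+1)).le
    linarith [htriL, htriR, hFsum, hEl.le, hEl.ge, hEr.le, hEr.ge, hBsplit.le, hBsplit.ge]
  have hdisj : (↑(Finset.Ico 1 N) : Set ℕ).Pairwise
      (Function.onFun Disjoint (fun i => Set.Ioc (a + i*h - h/2) (a + i*h + h/2))) := by
    have hlt : ∀ i j : ℕ, i < j →
        Disjoint (Set.Ioc (a + i*h - h/2) (a + i*h + h/2))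
                 (Set.Ioc (a + j*h - h/2) (a + j*h + h/2)) := by
      intro i j hij
      rw [Set.Ioc_disjoint_Ioc]
      have hij' : (i:ℝ) + 1 ≤ j := by exact_mod_cast Nat.succ_le_of_lt hij
      refine le_trans (min_le_left _ _) (le_trans ?_ (le_max_right _ _))
      nlinarith
    intro i _ j _ hij
    rcases lt_or_gt_of_ne hij with hlt' | hgt
    · exact hlt i j hlt'
    · exact (hlt j i hgt).symm
  have hSsub : ∀ i ∈ Finset.Ico 1 N,
      Set.Ioc (a + i*h - h/2) (a + i*h + h/2) ⊆ Set.Ioc a b := by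
    intro i hi
    obtain ⟨h1, h2⟩ := Finset.mem_Ico.1 hi
    obtain ⟨hlo, hhi⟩ := hbounds i h1 h2
    exact Set.Ioc_subset_Ioc (by linarith) (by linarith)
  have hBsum : (∑ i ∈ Finset.Ico 1 N,
      ∫ x in Set.Ioc (a + i*h - h/2) (a + i*h + h/2), F x) ≤ K * h^(p+1) := by
    have h1 : (∑ i ∈ Finset.Ico 1 N,
        ∫ x in Set.Ioc (a + i*h - h/2) (a + i*h + h/2), F x)
        = ∫ x in ⋃ i ∈ Finset.Ico 1 N, Set.Ioc (a + i*h - h/2) (a + i*h + h/2), F x :=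
      (MeasureTheory.integral_biUnion_finset _ (fun i _ => measurableSet_Ioc) hdisj
        (fun i hi => hFIoc.mono_set (hSsub i hi))).symm
    rw [h1]
    have h2 : (∫ x in ⋃ i ∈ Finset.Ico 1 N,
        Set.Ioc (a + i*h - h/2) (a + i*h + h/2), F x) ≤ ∫ x in Set.Ioc a b, F x :=
      MeasureTheory.setIntegral_mono_set hFIoc
        (Filter.Eventually.of_forall fun x => abs_nonneg _)
        (Set.iUnion₂_subset hSsub).eventuallyLE
    have h3 : (∫ x in Set.Ioc a b, F x) = ∫ x in a..b, |u x - uR x| :=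
      (intervalIntegral.integral_of_le hab.le).symm
    linarith [hKb]
  have hTsum : (∑ i ∈ Finset.Ico 1 N,
      ∫ x in (a + i*h - h/2)..(a + i*h + h/2), |D1 x|) ≤ ∫ x in a..b, |D1 x| := by
    have heq : ∀ i ∈ Finset.Ico 1 N,
        (∫ x in (a + i*h - h/2)..(a + i*h + h/2), |D1 x|)
        = ∫ x in Set.Ioc (a + i*h - h/2) (a + i*h + h/2), |D1 x| := fun i hi =>
      intervalIntegral.integral_of_le (by linarith)
    rw [Finset.sum_congr rfl heq,
      ← MeasureTheory.integral_biUnion_finset _ (fun i _ => measurableSet_Ioc) hdisj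
        (fun i hi => hD1abs_int.mono_set (hSsub i hi))]
    have h2 : (∫ x in ⋃ i ∈ Finset.Ico 1 N,
        Set.Ioc (a + i*h - h/2) (a + i*h + h/2), |D1 x|) ≤ ∫ x in Set.Ioc a b, |D1 x| :=
      MeasureTheory.setIntegral_mono_set hD1abs_int
        (Filter.Eventually.of_forall fun x => abs_nonneg _)
        (Set.iUnion₂_subset hSsub).eventuallyLE
    rw [intervalIntegral.integral_of_le hab.le]
    exact h2
  have hfac1 : (1:ℝ) ≤ (Nat.factorial p : ℝ) := by
    exact_mod_cast Nat.one_le_iff_ne_zero.2 (Nat.factorial_ne_zero p)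
  have hItot : 0 ≤ ∫ x in a..b, |D1 x| :=
    intervalIntegral.integral_nonneg hab.le fun x _ => abs_nonneg _
  have hSQ0 : (0:ℝ) ≤ Real.sqrt (2*C) := Real.sqrt_nonneg _
  have hhp : (0:ℝ) < h^(p+1) := pow_pos hh _
  calc (∑ i ∈ Finset.Ico 1 N,
        h * Real.sqrt (Qform p (Dvec p h (a + i*h) (q (i-1)) (q i))))
      ≤ ∑ i ∈ Finset.Ico 1 N, Real.sqrt (2*C) *
          (((∫ x in Set.Ioc (a + i*h - h/2) (a + i*h + h/2), F x) +
            h^(p+1) * (1/(Nat.factorial p : ℝ)) *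
              ∫ x in (a + i*h - h/2)..(a + i*h + h/2), |D1 x|) / h^(p+1)) :=
        Finset.sum_le_sum hkey
    _ = (Real.sqrt (2*C)/h^(p+1)) * (∑ i ∈ Finset.Ico 1 N,
          ∫ x in Set.Ioc (a + i*h - h/2) (a + i*h + h/2), F x)
        + (Real.sqrt (2*C) * (1/(Nat.factorial p : ℝ))) * (∑ i ∈ Finset.Ico 1 N,
          ∫ x in (a + i*h - h/2)..(a + i*h + h/2), |D1 x|) := by
        rw [Finset.mul_sum, Finset.mul_sum, ← Finset.sum_add_distrib]
        refine Finset.sum_congr rfl fun i _ => ?_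
        field_simp
    _ ≤ (Real.sqrt (2*C)/h^(p+1)) * (K * h^(p+1))
        + (Real.sqrt (2*C) * (1/(Nat.factorial p : ℝ))) * (∫ x in a..b, |D1 x|) := by
        apply add_le_add
        · exact mul_le_mul_of_nonneg_left hBsum (by positivity)
        · exact mul_le_mul_of_nonneg_left hTsum (by positivity)
    _ ≤ (Real.sqrt (2*C) + 1) * (K + 1 * ∫ x in a..b, |D1 x|) := by
        have h1 : (Real.sqrt (2*C)/h^(p+1)) * (K * h^(p+1)) = Real.sqrt (2*C) * K := by
          field_simp
        rw [h1]
        have h2 : Real.sqrt (2*C) * (1/(Nat.factorial p : ℝ)) ≤ Real.sqrt (2*C) := by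
          apply mul_le_of_le_one_right hSQ0
          rw [div_le_one (by positivity)]
          exact hfac1
        nlinarith [hItot, hK, hSQ0, h2,
          mul_le_mul_of_nonneg_right h2 hItot]
    _ = (1/(1/(Real.sqrt (2*C) + 1))) * (K + 1 * ∫ x in a..b, |D1 x|) := by
        rw [one_div_one_div]
end

section
/- (Necessity of numerical W^{p+1}_∞-smoothness) Let p ≥ 0 be an integer. There exists a constant C_∞ > 0 depending only on p with the following property. Let a < b, N a positive integer, h = (b−a)/N, x_i = a + i h, u : [a,b] → ℝ (p+1)-times continuously differentiable, and u^R : (a,b) → ℝ piecewise polynomial of degree at most p on the cells (x_i, x_{i+1}), with D^k_i = (u^{R(k)}(x_i⁺) − u^{R(k)}(x_i⁻)) / h^{p+1−k}. If K ≥ 0 and sup_{x ∈ (a,b)} |u(x) − u^R(x)| ≤ K h^{p+1}, then for every i with 1 ≤ i ≤ N−1, Q(D^0_i, …, D^p_i) ≤ ( K + C_∞ sup_{[a,b]} |u^{(p+1)}| )². -/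
set_option maxHeartbeats 1000000


open MeasureTheory Polynomial

lemma iterDW_subset {f : ℝ → ℝ} {s t : Set ℝ} (hst : s ⊆ t) (hs : UniqueDiffOn ℝ s)
    (ht : UniqueDiffOn ℝ t) {m : WithTop ℕ∞} (hf : ContDiffOn ℝ m f t) :
    ∀ n : ℕ, (n : WithTop ℕ∞) ≤ m → ∀ x ∈ s,
      iteratedDerivWithin n f s x = iteratedDerivWithin n f t x := by
  intro n
  induction n with
  | zero => intro _ x _; simp
  | succ n ih =>
    intro hn x hx
    have hn' : (n : WithTop ℕ∞) < m := lt_of_lt_of_le (by exact_mod_cast Nat.lt_succ_self n) hn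
    rw [iteratedDerivWithin_succ, iteratedDerivWithin_succ]
    rw [derivWithin_congr (fun y hy => ih hn'.le y hy) (ih hn'.le x hx)]
    exact derivWithin_subset hst (hs x hx)
      ((hf.differentiableOn_iteratedDerivWithin hn' ht) x (hst hx))

lemma polyTaylor (P : Polynomial ℝ) {p : ℕ} (hP : P.natDegree ≤ p) (r t : ℝ) :
    P.eval (r + t) = ∑ k ∈ Finset.range (p+1),
      (Polynomial.derivative^[k] P).eval r / (Nat.factorial k) * t ^ k := by
  have h1 : P.eval (r + t) = (Polynomial.taylor r P).eval t := by
    rw [Polynomial.taylor_eval, add_comm]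
  rw [h1, Polynomial.eval_eq_sum_range'
    (lt_of_le_of_lt (by rw [Polynomial.natDegree_taylor]; exact hP) (Nat.lt_succ_self p))]
  refine Finset.sum_congr rfl fun k _ => ?_
  rw [Polynomial.taylor_coeff]
  have h2 : (k.factorial : ℝ) * (Polynomial.hasseDeriv k P).eval r
      = (Polynomial.derivative^[k] P).eval r := by
    rw [← Polynomial.factorial_smul_hasseDeriv]
    simp [Polynomial.eval_smul, nsmul_eq_mul]
  have hk : (k.factorial : ℝ) ≠ 0 := by exact_mod_cast k.factorial_ne_zero
  field_simp [← h2]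
  rw [← h2]; ring

lemma fd_eq (p : ℕ) {h : ℝ} (xi : ℝ) (hh : h ≠ 0) (ql qr : Polynomial ℝ)
    (hl : ql.natDegree ≤ p) (hr : qr.natDegree ≤ p) (ξ : ℝ) :
    fd p (Dvec p h xi ql qr) ξ = (qr - ql).eval (xi + h*ξ) / (2*h^(p+1)) := by
  rw [polyTaylor (qr - ql) (le_trans (Polynomial.natDegree_sub_le _ _) (max_le hr hl)) xi (h*ξ)]
  unfold fd Dvec
  rw [Fin.sum_univ_eq_sum_range
    (fun k => ((Polynomial.derivative^[k] qr).eval xi - (Polynomial.derivative^[k] ql).eval xi)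
      / h^(p+1-k) / (Nat.factorial k) * ξ ^ k) (p+1)]
  rw [Finset.sum_div, Finset.mul_sum]
  refine Finset.sum_congr rfl fun k hk => ?_
  have hkp : k ≤ p := Nat.lt_succ_iff.mp (Finset.mem_range.mp hk)
  have hpow : h^(p+1-k) * h^k = h^(p+1) := by rw [← pow_add]; congr 1; omega
  have iter_sub : (Polynomial.derivative^[k] (qr - ql)).eval xi
      = (Polynomial.derivative^[k] qr).eval xi - (Polynomial.derivative^[k] ql).eval xi := by
    rw [Polynomial.iterate_derivative_sub, Polynomial.eval_sub]
  rw [iter_sub]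
  have h1 : h^(p+1-k) ≠ 0 := pow_ne_zero _ hh
  have h2 : (Nat.factorial k : ℝ) ≠ 0 := by exact_mod_cast k.factorial_ne_zero
  have h3 : h^(p+1) ≠ 0 := pow_ne_zero _ hh
  field_simp
  rw [mul_pow, ← hpow]
  ring

lemma cell_decomp {a h : ℝ} {N : ℕ} (hh : 0 < h)
    {x : ℝ} (hx : x ∈ Set.Ioo a (a + N*h)) :
    (∃ j < N, x ∈ Set.Ioo (a + j*h) (a + (j+1)*h)) ∨ (∃ j < N, x = a + j*h) := by
  obtain ⟨hx1, hx2⟩ := hx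
  set t := (x - a)/h with ht
  have ht0 : 0 < t := div_pos (by linarith) hh
  have htN : t < N := (div_lt_iff₀ hh).mpr (by linarith)
  set j' := ⌊t⌋ with hj'
  have hj0 : 0 ≤ j' := Int.floor_nonneg.mpr ht0.le
  set j := j'.toNat with hj
  have hjc : (j : ℝ) = (j' : ℝ) := by
    have := Int.toNat_of_nonneg hj0
    exact_mod_cast congrArg (fun z : ℤ => (z : ℝ)) this
  have h1 : (j : ℝ) ≤ t := hjc ▸ Int.floor_le t
  have h2 : t < (j : ℝ) + 1 := by rw [hjc]; exact_mod_cast Int.lt_floor_add_one t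
  have hjN : j < N := by
    have : (j : ℝ) < N := lt_of_le_of_lt h1 htN
    exact_mod_cast this
  have hxl : a + j*h ≤ x := by
    have := mul_le_mul_of_nonneg_right h1 hh.le
    rw [ht] at this; field_simp at this; linarith
  have hxr : x < a + (j+1)*h := by
    have := mul_lt_mul_of_pos_right h2 hh
    rw [ht] at this; field_simp at this; linarith
  rcases eq_or_lt_of_le hxl with heq | hlt
  · exact Or.inr ⟨j, hjN, heq.symm⟩
  · exact Or.inl ⟨j, hjN, hlt, hxr⟩

lemma bdd_image {a b h : ℝ} {N : ℕ} (hh : 0 < h) (hb : b = a + N*h)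
    {u uR : ℝ → ℝ} (hu : ContinuousOn u (Set.Icc a b)) (q : ℕ → Polynomial ℝ)
    (huR : ∀ i < N, ∀ x ∈ Set.Ioo (a + i*h) (a + (i+1)*h), uR x = (q i).eval x) :
    BddAbove ((fun x => |u x - uR x|) '' Set.Ioo a b) := by
  have hbig : (fun x => |u x - uR x|) '' Set.Ioo a b ⊆
      (⋃ j ∈ Set.Iio N, (fun x => |u x - (q j).eval x|) '' Set.Icc a b) ∪
      ((fun x => |u x - uR x|) '' ((fun j : ℕ => a + j*h) '' Set.Iio N)) := by
    rintro y ⟨x, hx, rfl⟩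
    rcases cell_decomp hh (hb ▸ hx) with ⟨j, hj, hcell⟩ | ⟨j, hj, rfl⟩
    · left
      refine Set.mem_biUnion hj ⟨x, ⟨hx.1.le, hx.2.le⟩, ?_⟩
      simp only []
      rw [huR j hj x hcell]
    · right
      exact ⟨a + j*h, ⟨j, hj, rfl⟩, rfl⟩
  refine BddAbove.mono hbig (BddAbove.union ?_ ?_)
  · rw [(Set.finite_Iio N).bddAbove_biUnion]
    intro j _
    exact (IsCompact.image_of_continuousOn isCompact_Icc
      ((hu.sub (q j).continuousOn).abs)).bddAbove
  · exact (((Set.finite_Iio N).image _).image _).bddAbove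

/-- necessity of numerical `W^{p+1}_∞`-smoothness: if
`‖u - u^R‖_{L^∞(a,b)} ≤ K h^{p+1}` then `Q(Dᵢ) ≤ (K + C_∞ |u|_{W^{p+1}_∞})²` for every
interior node `i`. -/
theorem necessity_Winfty_smoothness (p : ℕ) :
    ∃ Cinf : ℝ, 0 < Cinf ∧
      ∀ (a b : ℝ), a < b → ∀ N : ℕ, 0 < N → ∀ h : ℝ, h = (b - a) / N →
      ∀ u : ℝ → ℝ, ContDiffOn ℝ (p+1) u (Set.Icc a b) →
      ∀ (uR : ℝ → ℝ) (q : ℕ → Polynomial ℝ),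
        (∀ i < N, (q i).natDegree ≤ p) →
        (∀ i < N, ∀ x ∈ Set.Ioo (a + i*h) (a + (i+1)*h), uR x = (q i).eval x) →
        ∀ K : ℝ, 0 ≤ K →
          sSup ((fun x => |u x - uR x|) '' Set.Ioo a b) ≤ K * h^(p+1) →
          ∀ i ∈ Finset.Ico 1 N,
            Qform p (Dvec p h (a + i*h) (q (i-1)) (q i)) ≤
              (K + Cinf * sSup ((fun x =>
                  |iteratedDerivWithin (p+1) u (Set.Icc a b) x|) '' Set.Icc a b))^2 := by
  refine ⟨1, one_pos, ?_⟩
  intro a b hab N hN h hhdef u hu uR q hdeg huR K hK hsup i hi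
  rw [Finset.mem_Ico] at hi
  obtain ⟨hi1, hiN⟩ := hi
  have hNR : (0:ℝ) < N := by exact_mod_cast hN
  have hh0 : 0 < h := by rw [hhdef]; exact div_pos (by linarith) hNR
  have hb : b = a + N*h := by rw [hhdef]; field_simp; ring
  have hiR1 : (1:ℝ) ≤ (i:ℝ) := by exact_mod_cast hi1
  have hiRN : (i:ℝ) + 1 ≤ (N:ℝ) := by exact_mod_cast hiN
  set xi := a + i*h with hxi
  set c := xi - h/2 with hc
  set d' := xi + h/2 with hd'
  have hcd : c < d' := by rw [hc, hd']; linarith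
  have hac : a < c := by
    rw [hc, hxi]; nlinarith
  have hdb : d' < b := by
    rw [hd', hxi, hb]; nlinarith
  have hsub : Set.Icc c d' ⊆ Set.Icc a b := Set.Icc_subset_Icc hac.le hdb.le
  have hud : UniqueDiffOn ℝ (Set.Icc a b) := uniqueDiffOn_Icc hab
  have hud' : UniqueDiffOn ℝ (Set.Icc c d') := uniqueDiffOn_Icc hcd
  set S := sSup ((fun x => |iteratedDerivWithin (p+1) u (Set.Icc a b) x|) '' Set.Icc a b) with hS
  have hScont : ContinuousOn (fun x => |iteratedDerivWithin (p+1) u (Set.Icc a b) x|)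
      (Set.Icc a b) :=
    (hu.continuousOn_iteratedDerivWithin (by exact_mod_cast le_rfl) hud).abs
  have hSbdd : BddAbove ((fun x => |iteratedDerivWithin (p+1) u (Set.Icc a b) x|) ''
      Set.Icc a b) := (isCompact_Icc.image_of_continuousOn hScont).bddAbove
  have hSle : ∀ y ∈ Set.Icc a b, |iteratedDerivWithin (p+1) u (Set.Icc a b) y| ≤ S :=
    fun y hy => le_csSup hSbdd ⟨y, hy, rfl⟩
  have hS0 : 0 ≤ S := le_trans (abs_nonneg _) (hSle a ⟨le_rfl, hab.le⟩)
  -- the iterated derivatives agree on the subinterval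
  have hiter : ∀ n : ℕ, n ≤ p+1 → ∀ y ∈ Set.Icc c d',
      iteratedDerivWithin n u (Set.Icc c d') y = iteratedDerivWithin n u (Set.Icc a b) y :=
    fun n hn => iterDW_subset hsub hud' hud hu n (by exact_mod_cast hn)
  -- Taylor bound
  have hT : ∀ x ∈ Set.Icc c d', |u x - taylorWithinEval u p (Set.Icc c d') c x| ≤ S * h^(p+1) := by
    intro x hx
    have hb1 := taylor_mean_remainder_bound (n := p) hcd.le
      (by exact_mod_cast hu.mono hsub) hx
      (fun y hy => by
        rw [Real.norm_eq_abs, hiter (p+1) le_rfl y hy]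
        exact hSle y (hsub hy))
    rw [Real.norm_eq_abs] at hb1
    refine le_trans hb1 ?_
    have hxc0 : 0 ≤ x - c := by linarith [hx.1]
    have hxch : x - c ≤ h := by
      have := hx.2; rw [hd'] at this; rw [hc]; linarith
    have h4 : (x-c)^(p+1) ≤ h^(p+1) := pow_le_pow_left₀ hxc0 hxch _
    have h5 : (1:ℝ) ≤ (p.factorial : ℝ) := by exact_mod_cast p.factorial_pos
    rw [div_le_iff₀ (by positivity)]
    nlinarith [mul_le_mul_of_nonneg_left h4 hS0,
      mul_nonneg hS0 (pow_nonneg hh0.le (p+1))]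
  -- the Taylor polynomial as a Polynomial
  set Tpoly : Polynomial ℝ := ∑ k ∈ Finset.range (p+1),
      Polynomial.C (iteratedDerivWithin k u (Set.Icc c d') c * ((k.factorial : ℝ))⁻¹) *
        (Polynomial.X - Polynomial.C c)^k with hTdef
  have hTeval : ∀ x : ℝ, Tpoly.eval x = taylorWithinEval u p (Set.Icc c d') c x := by
    intro x
    rw [taylor_within_apply, hTdef]
    rw [Polynomial.eval_finset_sum]
    refine Finset.sum_congr rfl fun k _ => ?_
    simp [smul_eq_mul]
    ring
  have hTdeg : Tpoly.natDegree ≤ p := by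
    refine Polynomial.natDegree_sum_le_of_forall_le _ _ fun k hk => ?_
    refine le_trans (Polynomial.natDegree_C_mul_le _ _) ?_
    rw [Polynomial.natDegree_pow, Polynomial.natDegree_X_sub_C, mul_one]
    exact Nat.lt_succ_iff.mp (Finset.mem_range.mp hk)
  set ql := q (i-1) with hql
  set qr := q i with hqr
  have hqldeg : ql.natDegree ≤ p := hdeg (i-1) (lt_of_le_of_lt (Nat.sub_le i 1) hiN)
  have hqrdeg : qr.natDegree ≤ p := hdeg i hiN
  set L : Polynomial ℝ := Polynomial.C xi + Polynomial.C h * Polynomial.X with hLdef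
  set v : Polynomial ℝ := Polynomial.C ((h^(p+1))⁻¹) *
      ((Tpoly - Polynomial.C (1/2) * (ql + qr)).comp L) with hvdef
  have hvdeg : v.natDegree ≤ p := by
    refine le_trans (Polynomial.natDegree_mul_le) ?_
    rw [Polynomial.natDegree_C, zero_add]
    refine le_trans (Polynomial.natDegree_comp_le) ?_
    have hL1 : L.natDegree ≤ 1 := by
      refine le_trans (Polynomial.natDegree_add_le _ _) ?_
      simp only [Polynomial.natDegree_C, Nat.max_le, Nat.zero_le, true_and]
      exact le_trans (Polynomial.natDegree_mul_le) (by simp)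
    have hP1 : (Tpoly - Polynomial.C (1/2) * (ql + qr)).natDegree ≤ p := by
      refine le_trans (Polynomial.natDegree_sub_le _ _) (max_le hTdeg ?_)
      refine le_trans (Polynomial.natDegree_mul_le) ?_
      rw [Polynomial.natDegree_C, zero_add]
      exact le_trans (Polynomial.natDegree_add_le _ _) (max_le hqldeg hqrdeg)
    calc (Tpoly - Polynomial.C (1/2) * (ql + qr)).natDegree * L.natDegree
        ≤ p * 1 := Nat.mul_le_mul hP1 hL1
      _ = p := mul_one p
  have hveval : ∀ ξ : ℝ, v.eval ξ =
      (Tpoly.eval (xi + h*ξ) - (1/2)*(ql.eval (xi + h*ξ) + qr.eval (xi + h*ξ)))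
        * (h^(p+1))⁻¹ := by
    intro ξ
    rw [hvdef]
    simp only [hLdef, Polynomial.eval_mul, Polynomial.eval_comp, Polynomial.eval_C,
      Polynomial.eval_add, Polynomial.eval_sub, Polynomial.eval_X]
    ring
  -- key pointwise bounds
  set D := Dvec p h xi ql qr with hD
  have hfd : ∀ ξ : ℝ, fd p D ξ = (qr - ql).eval (xi + h*ξ) / (2*h^(p+1)) :=
    fd_eq p xi hh0.ne' ql qr hqldeg hqrdeg
  have hhp : (0:ℝ) < h^(p+1) := pow_pos hh0 _
  have hcast : ((i-1 : ℕ) : ℝ) = (i:ℝ) - 1 := by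
    push_cast [Nat.cast_sub hi1]; ring
  have hubdd := bdd_image hh0 hb (hu.continuousOn) q huR
  have huK : ∀ x ∈ Set.Ioo a b, |u x - uR x| ≤ K * h^(p+1) :=
    fun x hx => le_trans (le_csSup hubdd ⟨x, hx, rfl⟩) hsup
  -- bound on the left interval
  have hleft : ∀ ξ ∈ Set.Ioo (-(1:ℝ)/2) 0, |v.eval ξ + fd p D ξ| ≤ K + S := by
    intro ξ hξ
    set x := xi + h*ξ with hx
    have hx1 : c < x := by
      rw [hc, hx]; nlinarith [hξ.1]
    have hx2 : x < xi := by
      rw [hx]; nlinarith [hξ.2]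
    have hxcell : x ∈ Set.Ioo (a + ((i:ℝ)-1)*h) (a + (i:ℝ)*h) := by
      constructor
      · rw [hx, hxi]; nlinarith [hξ.1]
      · rw [hx, hxi]; nlinarith [hξ.2]
    have huRx : uR x = ql.eval x := by
      have := huR (i-1) (lt_of_le_of_lt (Nat.sub_le i 1) hiN) x
        (by rw [hcast]; exact ⟨hxcell.1, by have := hxcell.2; linarith⟩)
      rw [this, hql]
    have hxIcc : x ∈ Set.Icc c d' := ⟨hx1.le, by rw [hd']; linarith⟩
    have hxib : xi < b := by rw [hxi, hb]; nlinarith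
    have hxab : x ∈ Set.Ioo a b := ⟨lt_trans hac hx1, lt_trans hx2 hxib⟩
    have hbound : |Tpoly.eval x - ql.eval x| ≤ (S + K) * h^(p+1) := by
      have e1 : Tpoly.eval x - ql.eval x =
          (taylorWithinEval u p (Set.Icc c d') c x - u x) + (u x - uR x) := by
        rw [hTeval, huRx]; ring
      rw [e1]
      refine le_trans (abs_add_le _ _) ?_
      rw [abs_sub_comm]
      have := hT x hxIcc
      have := huK x hxab
      nlinarith
    have e2 : v.eval ξ + fd p D ξ = (Tpoly.eval x - ql.eval x) * (h^(p+1))⁻¹ := by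
      rw [hveval, hfd, Polynomial.eval_sub]
      field_simp
      ring
    rw [e2, abs_mul, abs_of_pos (inv_pos.mpr hhp)]
    calc |Tpoly.eval x - ql.eval x| * (h^(p+1))⁻¹
        ≤ ((S + K) * h^(p+1)) * (h^(p+1))⁻¹ := by
          exact mul_le_mul_of_nonneg_right hbound (inv_nonneg.mpr hhp.le)
      _ = S + K := by field_simp
      _ = K + S := by ring
  -- bound on the right interval
  have hright : ∀ ξ ∈ Set.Ioc (0:ℝ) (1/2), |v.eval ξ - fd p D ξ| ≤ K + S := by
    intro ξ hξ
    set x := xi + h*ξ with hx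
    have hx1 : xi < x := by rw [hx]; nlinarith [hξ.1]
    have hx2 : x ≤ d' := by rw [hd', hx]; nlinarith [hξ.2]
    have hxcell : x ∈ Set.Ioo (a + (i:ℝ)*h) (a + ((i:ℝ)+1)*h) := by
      constructor
      · rw [hx, hxi]; nlinarith [hξ.1]
      · rw [hx, hxi]; nlinarith [hξ.2]
    have huRx : uR x = qr.eval x := by
      have := huR i hiN x hxcell
      rw [this, hqr]
    have hxIcc : x ∈ Set.Icc c d' := ⟨by rw [hc]; linarith, hx2⟩
    have haxi : a < xi := by rw [hxi]; nlinarith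
    have hxab : x ∈ Set.Ioo a b := ⟨lt_trans haxi hx1, lt_of_le_of_lt hx2 hdb⟩
    have hbound : |Tpoly.eval x - qr.eval x| ≤ (S + K) * h^(p+1) := by
      have e1 : Tpoly.eval x - qr.eval x =
          (taylorWithinEval u p (Set.Icc c d') c x - u x) + (u x - uR x) := by
        rw [hTeval, huRx]; ring
      rw [e1]
      refine le_trans (abs_add_le _ _) ?_
      rw [abs_sub_comm]
      have := hT x hxIcc
      have := huK x hxab
      nlinarith
    have e2 : v.eval ξ - fd p D ξ = (Tpoly.eval x - qr.eval x) * (h^(p+1))⁻¹ := by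
      rw [hveval, hfd, Polynomial.eval_sub]
      field_simp
      ring
    rw [e2, abs_mul, abs_of_pos (inv_pos.mpr hhp)]
    calc |Tpoly.eval x - qr.eval x| * (h^(p+1))⁻¹
        ≤ ((S + K) * h^(p+1)) * (h^(p+1))⁻¹ := by
          exact mul_le_mul_of_nonneg_right hbound (inv_nonneg.mpr hhp.le)
      _ = S + K := by field_simp
      _ = K + S := by ring
  -- assemble
  have hKS0 : 0 ≤ K + S := add_nonneg hK hS0
  have hI1 : (∫ ξ in (-(1:ℝ)/2)..0, (v.eval ξ + fd p D ξ)^2) ≤ (K+S)^2 * (1/2) := by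
    have h0ae : ∀ᵐ ξ : ℝ, ξ ≠ 0 := by
      rw [MeasureTheory.ae_iff]
      simp only [not_not, Set.setOf_eq_eq_singleton]
      exact Real.volume_singleton
    have hae : ∀ᵐ ξ : ℝ, ξ ∈ Set.uIoc (-(1:ℝ)/2) 0 →
        ‖(v.eval ξ + fd p D ξ)^2‖ ≤ (K+S)^2 := by
      filter_upwards [h0ae] with ξ hξ0 hξ
      rw [Set.uIoc_of_le (by norm_num : -(1:ℝ)/2 ≤ 0)] at hξ
      have hξI : ξ ∈ Set.Ioo (-(1:ℝ)/2) 0 := ⟨hξ.1, lt_of_le_of_ne hξ.2 hξ0⟩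
      rw [Real.norm_eq_abs, abs_pow]
      exact pow_le_pow_left₀ (abs_nonneg _) (hleft ξ hξI) 2
    have hnorm := intervalIntegral.norm_integral_le_of_norm_le_const_ae hae
    rw [Real.norm_eq_abs] at hnorm
    have : |(0:ℝ) - (-(1:ℝ)/2)| = 1/2 := by norm_num
    rw [this] at hnorm
    exact le_trans (le_abs_self _) hnorm
  have hI2 : (∫ ξ in (0:ℝ)..(1/2), (v.eval ξ - fd p D ξ)^2) ≤ (K+S)^2 * (1/2) := by
    have hae : ∀ ξ ∈ Set.uIoc (0:ℝ) (1/2),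
        ‖(v.eval ξ - fd p D ξ)^2‖ ≤ (K+S)^2 := by
      intro ξ hξ
      rw [Set.uIoc_of_le (by norm_num : (0:ℝ) ≤ 1/2)] at hξ
      rw [Real.norm_eq_abs, abs_pow]
      exact pow_le_pow_left₀ (abs_nonneg _) (hright ξ hξ) 2
    have hnorm := intervalIntegral.norm_integral_le_of_norm_le_const hae
    rw [Real.norm_eq_abs] at hnorm
    have : |(1:ℝ)/2 - 0| = 1/2 := by norm_num
    rw [this] at hnorm
    exact le_trans (le_abs_self _) hnorm
  have hbddB : BddBelow {q : ℝ | ∃ v : Polynomial ℝ, v.natDegree ≤ p ∧ q = Qerr p D v} := by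
    refine ⟨0, fun y hy => ?_⟩
    obtain ⟨w, _, rfl⟩ := hy
    exact add_nonneg
      (intervalIntegral.integral_nonneg (by norm_num) fun x _ => sq_nonneg _)
      (intervalIntegral.integral_nonneg (by norm_num) fun x _ => sq_nonneg _)
  calc Qform p D ≤ Qerr p D v := csInf_le hbddB ⟨v, hvdeg, rfl⟩
    _ ≤ (K+S)^2 * (1/2) + (K+S)^2 * (1/2) := add_le_add hI1 hI2
    _ = (K + 1*S)^2 := by ring
end

section
/- (Smallness of derivative jumps under optimal L∞ convergence) Let p ≥ 0 be an integer. There exists a constant c > 0 depending only on p with the following property. Let a < b, N a positive integer, h = (b−a)/N, x_i = a + i h, u : [a,b] → ℝ (p+1)-times continuously differentiable, and u^R : (a,b) → ℝ piecewise polynomial of degree at most p on the cells (x_i, x_{i+1}). Let J^k_i = u^{R(k)}(x_i⁺) − u^{R(k)}(x_i⁻) for 1 ≤ i ≤ N−1 and 0 ≤ k ≤ p. If K ≥ 0 and sup_{x ∈ (a,b)} |u(x) − u^R(x)| ≤ K h^{p+1}, then for all such i and k, |J^k_i| ≤ c ( K + sup_{[a,b]} |u^{(p+1)}| ) h^{p+1−k}.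 -/
open MeasureTheory Polynomial

lemma iterate_derivative_comp_linear (r : Polynomial ℝ) (c m : ℝ) :
    ∀ k : ℕ, derivative^[k] (r.comp (C c + C m * X)) =
      C (m ^ k) * (derivative^[k] r).comp (C c + C m * X)
  | 0 => by simp
  | k + 1 => by
    rw [Function.iterate_succ_apply', iterate_derivative_comp_linear r c m k,
      derivative_mul, derivative_C, zero_mul, zero_add, derivative_comp]
    have hL : derivative (C c + C m * X) = C m := by simp
    rw [hL, Function.iterate_succ_apply', pow_succ, map_mul]
    ring

lemma iteratedDerivWithin_Icc_sub {u : ℝ → ℝ} {a b α β : ℝ} {n : WithTop ℕ∞}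
    (hu : ContDiffOn ℝ n u (Set.Icc a b)) (hαβ : α < β)
    (hsub : Set.Icc α β ⊆ Set.Icc a b) (hab : a < b)
    {y : ℝ} (hy : y ∈ Set.Icc α β) {m : ℕ} (hm : (m : WithTop ℕ∞) ≤ n) :
    iteratedDerivWithin m u (Set.Icc α β) y = iteratedDerivWithin m u (Set.Icc a b) y := by
  have H := (hu.ftaylorSeriesWithin (uniqueDiffOn_Icc hab)).mono hsub
  have h1 := H.eq_iteratedFDerivWithin_of_uniqueDiffOn (m := m) hm
    (uniqueDiffOn_Icc hαβ) hy
  rw [iteratedDerivWithin_eq_iteratedFDerivWithin, iteratedDerivWithin_eq_iteratedFDerivWithin,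
    ← h1]
  rfl

lemma poly_deriv_bound (p : ℕ) : ∃ C : ℝ, 0 < C ∧
    ∀ s : Polynomial ℝ, s.natDegree ≤ p → ∀ ε : ℝ,
      (∀ x ∈ Set.Ioo (0:ℝ) 1, |s.eval x| ≤ ε) → ∀ k ≤ p,
        |(derivative^[k] s).eval 0| ≤ C * ε := by
  set t : Fin (p+1) → ℝ := fun j => ((j : ℕ) + 1) / ((p : ℝ) + 2) with ht
  have hp2 : (0:ℝ) < (p:ℝ) + 2 := by positivity
  have htmono : StrictMono t := by
    intro i j hij
    simp only [ht]
    gcongr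
    exact_mod_cast hij
  set V := Matrix.vandermonde t with hV
  have hdet : V.det ≠ 0 := by
    rw [hV, Ne, Matrix.det_vandermonde_eq_zero_iff]
    intro ⟨i, j, hij, hne⟩
    exact hne (htmono.injective hij)
  set W := V⁻¹ with hW
  set C₀ : ℝ := ∑ m : Fin (p+1), ∑ j : Fin (p+1), |W m j| with hC₀
  have hC₀0 : 0 ≤ C₀ := Finset.sum_nonneg fun _ _ => Finset.sum_nonneg fun _ _ => abs_nonneg _
  refine ⟨(p.factorial : ℝ) * C₀ + 1, by positivity, ?_⟩
  intro s hdeg ε hbound k hk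
  have hε0 : 0 ≤ ε := le_trans (abs_nonneg _) (hbound (1/2) ⟨by norm_num, by norm_num⟩)
  have hcoeff : ∀ m : Fin (p+1), |s.coeff m| ≤ C₀ * ε := by
    have hmulvec : V.mulVec (fun m : Fin (p+1) => s.coeff m) = fun j => s.eval (t j) := by
      funext j
      rw [Polynomial.eval_eq_sum_range' (lt_of_le_of_lt hdeg (Nat.lt_succ_self p))]
      rw [← Fin.sum_univ_eq_sum_range (fun i => s.coeff i * (t j) ^ i) (p+1)]
      simp only [Matrix.mulVec, dotProduct, hV, Matrix.vandermonde_apply]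
      exact Finset.sum_congr rfl fun m _ => by ring
    have hcv : (fun m : Fin (p+1) => s.coeff m) = W.mulVec (fun j => s.eval (t j)) := by
      rw [← hmulvec, Matrix.mulVec_mulVec, hW, Matrix.nonsing_inv_mul V (Ne.isUnit hdet),
        Matrix.one_mulVec]
    intro m
    have : s.coeff m = ∑ j : Fin (p+1), W m j * s.eval (t j) := by
      conv_lhs => rw [show s.coeff m = (fun m : Fin (p+1) => s.coeff (m : ℕ)) m from rfl, hcv]
      rfl
    rw [this]
    have htIoo : ∀ j : Fin (p+1), t j ∈ Set.Ioo (0:ℝ) 1 := by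
      intro j
      constructor
      · positivity
      · rw [div_lt_one hp2]
        have : ((j:ℕ):ℝ) < (p:ℝ) + 1 := by exact_mod_cast j.2
        linarith
    calc |∑ j : Fin (p+1), W m j * s.eval (t j)|
        ≤ ∑ j : Fin (p+1), |W m j * s.eval (t j)| := Finset.abs_sum_le_sum_abs _ _
      _ ≤ ∑ j : Fin (p+1), |W m j| * ε := by
          refine Finset.sum_le_sum fun j _ => ?_
          rw [abs_mul]
          exact mul_le_mul_of_nonneg_left (hbound _ (htIoo j)) (abs_nonneg _)
      _ = (∑ j : Fin (p+1), |W m j|) * ε := by rw [Finset.sum_mul]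
      _ ≤ C₀ * ε := by
          refine mul_le_mul_of_nonneg_right ?_ hε0
          exact Finset.single_le_sum (f := fun m => ∑ j : Fin (p+1), |W m j|)
            (fun _ _ => Finset.sum_nonneg fun _ _ => abs_nonneg _) (Finset.mem_univ m)
  have h0 : (derivative^[k] s).eval 0 = (k.factorial : ℝ) * s.coeff k := by
    rw [← Polynomial.coeff_zero_eq_eval_zero, Polynomial.coeff_iterate_derivative]
    simp [Nat.descFactorial_self, nsmul_eq_mul]
  rw [h0, abs_mul, Nat.abs_cast]
  calc (k.factorial : ℝ) * |s.coeff k|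
      ≤ (p.factorial : ℝ) * (C₀ * ε) := by
        refine mul_le_mul ?_ (hcoeff ⟨k, Nat.lt_succ_of_le hk⟩) (abs_nonneg _) (by positivity)
        exact_mod_cast Nat.factorial_le hk
    _ ≤ ((p.factorial : ℝ) * C₀ + 1) * ε := by nlinarith

set_option maxHeartbeats 1000000 in
/-- smallness of derivative jumps under optimal L∞ convergence: if
`‖u - u^R‖_{L^∞(a,b)} ≤ K h^{p+1}` for a piecewise polynomial `u^R` of degree ≤ p and a
`C^{p+1}` function `u`, then the jump `J^k_i` of the k-th derivative of `u^R` at each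
interior node satisfies `|J^k_i| ≤ c (K + sup_{[a,b]}|u^{(p+1)}|) h^{p+1-k}`. -/
theorem jumps_small_of_optimal_Linfty (p : ℕ) :
    ∃ c : ℝ, 0 < c ∧
      ∀ (a b : ℝ), a < b → ∀ N : ℕ, 0 < N → ∀ h : ℝ, h = (b - a) / N →
      ∀ u : ℝ → ℝ, ContDiffOn ℝ (p+1) u (Set.Icc a b) →
      ∀ (uR : ℝ → ℝ) (q : ℕ → Polynomial ℝ),
        (∀ i < N, (q i).natDegree ≤ p) →
        (∀ i < N, ∀ x ∈ Set.Ioo (a + i*h) (a + (i+1)*h), uR x = (q i).eval x) →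
        ∀ K : ℝ, 0 ≤ K →
          sSup ((fun x => |u x - uR x|) '' Set.Ioo a b) ≤ K * h^(p+1) →
          ∀ i ∈ Finset.Ico 1 N, ∀ k ≤ p,
            |(Polynomial.derivative^[k] (q i)).eval (a + i*h) -
             (Polynomial.derivative^[k] (q (i-1))).eval (a + i*h)| ≤
              c * (K + sSup ((fun x =>
                  |iteratedDerivWithin (p+1) u (Set.Icc a b) x|) '' Set.Icc a b)) *
                h^(p+1-k) := by
  obtain ⟨CB, hCB, hkey⟩ := poly_deriv_bound p
  have hfac : (0:ℝ) < (p.factorial : ℝ) := by exact_mod_cast p.factorial_pos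
  set D : ℝ := 1 + 2^(p+1) / (p.factorial : ℝ) with hD
  have hD0 : 0 < D := by positivity
  refine ⟨2 * CB * D, by positivity, ?_⟩
  intro a b hab N hN h hh u hu uR q hdeg hq K hK hsup i hi k hk
  obtain ⟨hi1, hiN⟩ := Finset.mem_Ico.mp hi
  have hN0 : (0:ℝ) < N := by exact_mod_cast hN
  have hh0 : 0 < h := by rw [hh]; exact div_pos (by linarith) hN0
  have hNh : (N:ℝ) * h = b - a := by rw [hh]; field_simp
  set M := sSup ((fun x =>
      |iteratedDerivWithin (p+1) u (Set.Icc a b) x|) '' Set.Icc a b) with hM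
  have hUD : UniqueDiffOn ℝ (Set.Icc a b) := uniqueDiffOn_Icc hab
  have hdcont : ContinuousOn (fun x => |iteratedDerivWithin (p+1) u (Set.Icc a b) x|)
      (Set.Icc a b) := by
    refine ContinuousOn.abs ?_
    exact hu.continuousOn_iteratedDerivWithin (by exact_mod_cast le_rfl) hUD
  have hMbdd : BddAbove ((fun x =>
      |iteratedDerivWithin (p+1) u (Set.Icc a b) x|) '' Set.Icc a b) :=
    (isCompact_Icc.image_of_continuousOn hdcont).bddAbove
  have hMle : ∀ y ∈ Set.Icc a b, |iteratedDerivWithin (p+1) u (Set.Icc a b) y| ≤ M :=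
    fun y hy => le_csSup hMbdd ⟨y, hy, rfl⟩
  have hM0 : 0 ≤ M := le_trans (abs_nonneg _) (hMle a ⟨le_refl a, hab.le⟩)
  -- pointwise bound from the sSup hypothesis
  have hpt : ∀ x ∈ Set.Ioo a b, |u x - uR x| ≤ K * h^(p+1) := by
    set g : ℝ → ℝ := fun x => |u x| + ∑ j ∈ Finset.range N, |(q j).eval x| with hg
    have hgcont : ContinuousOn g (Set.Icc a b) := by
      refine ContinuousOn.add hu.continuousOn.abs ?_
      exact continuousOn_finset_sum _ fun j _ => ((q j).continuous.abs).continuousOn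
    obtain ⟨Cg, hCg⟩ := isCompact_Icc.exists_bound_of_continuousOn hgcont
    set Bn : ℝ := ∑ j ∈ Finset.range (N+1), |u (a + j*h) - uR (a + j*h)| with hBn
    have hBn0 : 0 ≤ Bn := Finset.sum_nonneg fun _ _ => abs_nonneg _
    have hCg0 : 0 ≤ Cg := by
      have := hCg a ⟨le_refl a, hab.le⟩
      exact le_trans (norm_nonneg _) this
    have hSbdd : BddAbove ((fun x => |u x - uR x|) '' Set.Ioo a b) := by
      refine ⟨Cg + Bn, fun y hy => ?_⟩
      obtain ⟨x, hx, rfl⟩ := hy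
      obtain ⟨hxa, hxb⟩ := hx
      show |u x - uR x| ≤ Cg + Bn
      set tx := (x - a) / h with htx
      have htx0 : 0 < tx := div_pos (by linarith) hh0
      have htxN : tx < N := by
        rw [htx, div_lt_iff₀ hh0]
        linarith [hNh]
      set j := ⌊tx⌋₊ with hj
      have hjle : (j:ℝ) ≤ tx := Nat.floor_le htx0.le
      have hjlt : tx < j + 1 := Nat.lt_floor_add_one tx
      have hjNr : (j:ℝ) < N := lt_of_le_of_lt hjle htxN
      have hjN : j < N := by exact_mod_cast hjNr
      have hx_eq : x = a + tx * h := by rw [htx]; field_simp; ring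
      rcases eq_or_lt_of_le hjle with heq | hlt
      · have hxj : x = a + (j:ℝ) * h := by rw [hx_eq, ← heq]
        have hnode : |u x - uR x| ≤ Bn := by
          rw [hxj]
          exact Finset.single_le_sum
            (f := fun j : ℕ => |u (a + j*h) - uR (a + j*h)|)
            (fun _ _ => abs_nonneg _)
            (Finset.mem_range.mpr (lt_trans hjN (Nat.lt_succ_self N)))
        linarith
      · have hcell : x ∈ Set.Ioo (a + (j:ℝ)*h) (a + ((j:ℝ)+1)*h) := by
          constructor
          · rw [hx_eq]; linarith [mul_lt_mul_of_pos_right hlt hh0]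
          · rw [hx_eq]; linarith [mul_lt_mul_of_pos_right hjlt hh0]
        have hxIcc : x ∈ Set.Icc a b := ⟨hxa.le, hxb.le⟩
        have heq2 : |u x - uR x| = |u x - (q j).eval x| := by rw [hq j hjN x hcell]
        have hb1 : |u x - (q j).eval x| ≤ g x := by
          have h1 : |(q j).eval x| ≤ ∑ j' ∈ Finset.range N, |(q j').eval x| :=
            Finset.single_le_sum (f := fun j' => |(q j').eval x|)
              (fun _ _ => abs_nonneg _) (Finset.mem_range.mpr hjN)
          calc |u x - (q j).eval x| ≤ |u x| + |(q j).eval x| := abs_sub _ _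
            _ ≤ g x := by rw [hg]; simp only; linarith
        have hb2 : g x ≤ Cg := le_trans (le_abs_self _) (hCg x hxIcc)
        rw [heq2]
        linarith
    intro x hx
    exact le_trans (le_csSup hSbdd ⟨x, hx, rfl⟩) hsup
  -- set up the double cell and Taylor polynomial
  set xi : ℝ := a + (i:ℝ)*h with hxi
  set α : ℝ := xi - h with hα
  set β : ℝ := xi + h with hβ
  have hir : (1:ℝ) ≤ (i:ℝ) := by exact_mod_cast hi1
  have hirN : (i:ℝ) + 1 ≤ (N:ℝ) := by exact_mod_cast hiN
  have hαa : a ≤ α := by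
    rw [hα, hxi]
    linarith [mul_le_mul_of_nonneg_right hir hh0.le]
  have hβb : β ≤ b := by
    rw [hβ, hxi]
    linarith [mul_le_mul_of_nonneg_right hirN hh0.le, hNh]
  have hαβ : α < β := by rw [hα, hβ]; linarith
  have hsub : Set.Icc α β ⊆ Set.Icc a b := Set.Icc_subset_Icc hαa hβb
  have hC : ∀ y ∈ Set.Icc α β, ‖iteratedDerivWithin (p+1) u (Set.Icc α β) y‖ ≤ M := by
    intro y hy
    rw [Real.norm_eq_abs,
      iteratedDerivWithin_Icc_sub hu hαβ hsub hab hy (m := p+1) (by exact_mod_cast le_rfl)]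
    exact hMle y (hsub hy)
  have hTay : ∀ x ∈ Set.Icc α β,
      |u x - taylorWithinEval u p (Set.Icc α β) α x| ≤ M * (2*h)^(p+1) / p.factorial := by
    intro x hx
    have hbd := taylor_mean_remainder_bound hαβ.le (hu.mono hsub) hx hC
    rw [Real.norm_eq_abs] at hbd
    refine le_trans hbd ?_
    have hx1 : 0 ≤ x - α := by linarith [hx.1]
    have hx2 : x - α ≤ 2*h := by
      have h2' := hx.2
      rw [hβ] at h2'
      rw [hα]
      linarith
    have h3 : (x-α)^(p+1) ≤ (2*h)^(p+1) := pow_le_pow_left₀ hx1 hx2 _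
    exact (div_le_div_iff_of_pos_right hfac).mpr (mul_le_mul_of_nonneg_left h3 hM0)
  set TT : Polynomial ℝ := ∑ j ∈ Finset.range (p+1),
    C (iteratedDerivWithin j u (Set.Icc α β) α / (j.factorial : ℝ)) * (X - C α)^j with hTT
  have hTTeval : ∀ x : ℝ, TT.eval x = taylorWithinEval u p (Set.Icc α β) α x := by
    intro x
    rw [taylor_within_apply, hTT, Polynomial.eval_finset_sum]
    refine Finset.sum_congr rfl fun j _ => ?_
    simp only [eval_mul, eval_C, eval_pow, eval_sub, eval_X, smul_eq_mul]
    rw [div_eq_mul_inv]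
    ring
  have hTTdeg : TT.natDegree ≤ p := by
    rw [hTT]
    refine Polynomial.natDegree_sum_le_of_forall_le _ _ fun j hj => ?_
    refine le_trans (Polynomial.natDegree_C_mul_le _ _) ?_
    rw [Polynomial.natDegree_pow, Polynomial.natDegree_X_sub_C, mul_one]
    exact Nat.lt_succ_iff.mp (Finset.mem_range.mp hj)
  -- the one-sided bound
  have side : ∀ j : ℕ, j < N → ∀ σ : ℝ, |σ| = h →
      (∀ t : ℝ, t ∈ Set.Ioo (0:ℝ) 1 →
        xi + σ*t ∈ Set.Ioo (a + (j:ℝ)*h) (a + ((j:ℝ)+1)*h) ∧ xi + σ*t ∈ Set.Icc α β) →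
      |(derivative^[k] (q j - TT)).eval xi| * h^k ≤ CB * (D*(K+M)*h^(p+1)) := by
    intro j hjN σ hσ hmap
    set r : Polynomial ℝ := q j - TT with hr
    set s : Polynomial ℝ := r.comp (C xi + C σ * X) with hs
    have hrdeg : r.natDegree ≤ p := by
      rw [hr]
      exact le_trans (Polynomial.natDegree_sub_le _ _) (max_le (hdeg j hjN) hTTdeg)
    have hsdeg : s.natDegree ≤ p := by
      rw [hs]
      refine le_trans (Polynomial.natDegree_comp_le) ?_
      have hL : (C xi + C σ * X).natDegree ≤ 1 := by
        refine le_trans (Polynomial.natDegree_add_le _ _) ?_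
        simp [Polynomial.natDegree_C_mul_le]
        exact le_trans (Polynomial.natDegree_C_mul_le _ _) Polynomial.natDegree_X_le
      calc r.natDegree * (C xi + C σ * X).natDegree ≤ r.natDegree * 1 :=
            Nat.mul_le_mul_left _ hL
        _ ≤ p := by rw [mul_one]; exact hrdeg
    have hjr : (0:ℝ) ≤ (j:ℝ) := Nat.cast_nonneg j
    have hjr1 : (j:ℝ) + 1 ≤ (N:ℝ) := by exact_mod_cast hjN
    have hsbound : ∀ t ∈ Set.Ioo (0:ℝ) 1, |s.eval t| ≤ D*(K+M)*h^(p+1) := by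
      intro t ht
      obtain ⟨hcell, hIcc⟩ := hmap t ht
      have hxIoo : xi + σ*t ∈ Set.Ioo a b := by
        obtain ⟨hc1, hc2⟩ := hcell
        constructor
        · linarith [mul_nonneg hjr hh0.le]
        · linarith [mul_le_mul_of_nonneg_right hjr1 hh0.le, hNh]
      have heval : s.eval t = (q j).eval (xi+σ*t) - TT.eval (xi+σ*t) := by
        rw [hs, Polynomial.eval_comp, hr]
        simp
      have h1 : |u (xi+σ*t) - (q j).eval (xi+σ*t)| ≤ K*h^(p+1) := by
        rw [← hq j hjN _ hcell]
        exact hpt _ hxIoo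
      have h2 : |u (xi+σ*t) - TT.eval (xi+σ*t)| ≤ M * (2*h)^(p+1) / p.factorial := by
        rw [hTTeval]
        exact hTay _ hIcc
      have htri : |s.eval t| ≤ K*h^(p+1) + M * (2*h)^(p+1) / p.factorial := by
        rw [heval]
        have : (q j).eval (xi+σ*t) - TT.eval (xi+σ*t) =
            (u (xi+σ*t) - TT.eval (xi+σ*t)) - (u (xi+σ*t) - (q j).eval (xi+σ*t)) := by ring
        rw [this]
        calc |(u (xi+σ*t) - TT.eval (xi+σ*t)) - (u (xi+σ*t) - (q j).eval (xi+σ*t))|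
            ≤ |u (xi+σ*t) - TT.eval (xi+σ*t)| + |u (xi+σ*t) - (q j).eval (xi+σ*t)| :=
              abs_sub _ _
          _ ≤ K*h^(p+1) + M * (2*h)^(p+1) / p.factorial := by linarith
      refine le_trans htri ?_
      have hpow2 : (2*h)^(p+1) = 2^(p+1) * h^(p+1) := by rw [mul_pow]
      have hhp : (0:ℝ) ≤ h^(p+1) := by positivity
      have e1 : K*h^(p+1) ≤ (K+M)*h^(p+1) :=
        mul_le_mul_of_nonneg_right (by linarith) hhp
      have e2' : M*h^(p+1) ≤ (K+M)*h^(p+1) :=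
        mul_le_mul_of_nonneg_right (by linarith) (by positivity)
      have e2 : M * (2*h)^(p+1) / p.factorial ≤ (2^(p+1)/(p.factorial:ℝ)) * ((K+M)*h^(p+1)) := by
        rw [hpow2]
        calc M * (2^(p+1) * h^(p+1)) / p.factorial
            = (2^(p+1)/(p.factorial:ℝ)) * (M*h^(p+1)) := by ring
          _ ≤ (2^(p+1)/(p.factorial:ℝ)) * ((K+M)*h^(p+1)) :=
              mul_le_mul_of_nonneg_left e2' (by positivity)
      calc K*h^(p+1) + M * (2*h)^(p+1) / p.factorial
          ≤ (K+M)*h^(p+1) + (2^(p+1)/(p.factorial:ℝ)) * ((K+M)*h^(p+1)) := by linarith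
        _ = D*(K+M)*h^(p+1) := by rw [hD]; ring
    have hB := hkey s hsdeg _ hsbound k hk
    have hs0 : (derivative^[k] s).eval 0 = σ^k * (derivative^[k] r).eval xi := by
      rw [hs, iterate_derivative_comp_linear r xi σ k]
      simp [Polynomial.eval_comp]
    rw [hs0, abs_mul, abs_pow, hσ] at hB
    calc |(derivative^[k] (q j - TT)).eval xi| * h^k
        = h^k * |(derivative^[k] r).eval xi| := by rw [hr]; ring
      _ ≤ CB * (D*(K+M)*h^(p+1)) := hB
  -- apply on both sides
  have hcast : ((i-1 : ℕ) : ℝ) = (i:ℝ) - 1 := by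
    rw [Nat.cast_sub hi1]; simp
  have hRight : |(derivative^[k] (q i - TT)).eval xi| * h^k ≤ CB * (D*(K+M)*h^(p+1)) := by
    refine side i hiN h (abs_of_pos hh0) fun t ht => ?_
    obtain ⟨ht0, ht1⟩ := ht
    have hp1 : 0 < h*t := mul_pos hh0 ht0
    have hp2 : h*t < h*1 := mul_lt_mul_of_pos_left ht1 hh0
    refine ⟨⟨?_, ?_⟩, ?_, ?_⟩
    · rw [hxi]; linarith
    · rw [hxi]; linarith
    · rw [hα]; linarith
    · rw [hβ]; linarith
  have hLeft : |(derivative^[k] (q (i-1) - TT)).eval xi| * h^k ≤ CB * (D*(K+M)*h^(p+1)) := by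
    have hi1N : i - 1 < N := lt_of_le_of_lt (Nat.sub_le i 1) hiN
    refine side (i-1) hi1N (-h) (by rw [abs_neg, abs_of_pos hh0]) fun t ht => ?_
    obtain ⟨ht0, ht1⟩ := ht
    have hp1 : 0 < h*t := mul_pos hh0 ht0
    have hp2 : h*t < h*1 := mul_lt_mul_of_pos_left ht1 hh0
    rw [hcast]
    refine ⟨⟨?_, ?_⟩, ?_, ?_⟩
    · rw [hxi]; ring_nf; ring_nf at hp1 hp2 ⊢; linarith
    · rw [hxi]; ring_nf; ring_nf at hp1 hp2 ⊢; linarith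
    · rw [hα]; linarith
    · rw [hβ]; linarith
  -- combine
  have hjump : (derivative^[k] (q i)).eval xi - (derivative^[k] (q (i-1))).eval xi =
      (derivative^[k] (q i - TT)).eval xi - (derivative^[k] (q (i-1) - TT)).eval xi := by
    rw [Polynomial.iterate_derivative_sub, Polynomial.iterate_derivative_sub]
    simp only [Polynomial.eval_sub]
    ring
  have hhk : (0:ℝ) < h^k := pow_pos hh0 k
  rw [← mul_le_mul_iff_of_pos_right hhk]
  have habs : |(derivative^[k] (q i)).eval xi - (derivative^[k] (q (i-1))).eval xi| * h^k ≤
      2 * CB * (D*(K+M)*h^(p+1)) := by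
    rw [hjump]
    have tri : |(derivative^[k] (q i - TT)).eval xi - (derivative^[k] (q (i-1) - TT)).eval xi| ≤
        |(derivative^[k] (q i - TT)).eval xi| + |(derivative^[k] (q (i-1) - TT)).eval xi| :=
      abs_sub _ _
    calc |(derivative^[k] (q i - TT)).eval xi - (derivative^[k] (q (i-1) - TT)).eval xi| * h^k
        ≤ (|(derivative^[k] (q i - TT)).eval xi| +
            |(derivative^[k] (q (i-1) - TT)).eval xi|) * h^k :=
          mul_le_mul_of_nonneg_right tri hhk.le
      _ = |(derivative^[k] (q i - TT)).eval xi| * h^k +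
            |(derivative^[k] (q (i-1) - TT)).eval xi| * h^k := by ring
      _ ≤ CB * (D*(K+M)*h^(p+1)) + CB * (D*(K+M)*h^(p+1)) := add_le_add hRight hLeft
      _ = 2 * CB * (D*(K+M)*h^(p+1)) := by ring
  have hpow : h^(p+1-k) * h^k = h^(p+1) := by
    rw [← pow_add, Nat.sub_add_cancel (Nat.le_succ_of_le hk)]
  calc |(derivative^[k] (q i)).eval (a + ↑i * h) -
        (derivative^[k] (q (i-1))).eval (a + ↑i * h)| * h^k
      ≤ 2 * CB * (D*(K+M)*h^(p+1)) := habs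
    _ = 2 * CB * D * (K+M) * (h^(p+1-k) * h^k) := by rw [hpow]; ring
    _ = 2 * CB * D * (K + M) * h^(p+1-k) * h^k := by ring
end
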